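/- arXiv:1810.02735 — 6 statements merged into one kernel-verified Lean document; each statement's English description precedes it below -/
import Mathlib

section
/- Let w = (w_i)_{i≥1} be positive reals with partial sums s_i = w_1+⋯+w_i. Construct (T̃_n, ũ_n) recursively: T̃_1 = {ν_1}, ũ_1 = ν_1; given (T̃_{n-1}, ũ_{n-1}), let B_n be Bernoulli(w_n/s_n) and U_{n-1} be an independent index with P(U_{n-1}=i)=w_i/s_{n-1}; if B_n=1 attach ν_n as a child of ũ_{n-1} and set ũ_n = ν_n, and if B_n=0 attach ν_n as a child of ν_{U_{n-1}} and set ũ_n = ũ_{n-1}. Then for every increasing tree t on n vertices and every j ≤ n, P(T̃_n = t, ũ_n = ν_j) = (∏_{i=2}^n w_{π_t(i)}/s_{i-1}) · (w_j/s_n). In particular T̃_n is distributed as the n-node w-WRRT and, given T̃_n, ũ_n is a weight-proportional random node of T̃_n. -/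
open MeasureTheory ProbabilityTheory Finset

private def ub (b : ℕ → ℕ) : ℕ → ℕ
  | 0 => 1
  | m + 1 => if 2 ≤ m + 1 ∧ b (m + 1) = 1 then m + 1 else ub b m

private lemma ub_congr (b b' : ℕ → ℕ) : ∀ m, (∀ k, 2 ≤ k → k ≤ m → b k = b' k) →
    ub b m = ub b' m
  | 0, _ => rfl
  | m + 1, h => by
    have hr := ub_congr b b' m (fun k hk hk' => h k hk (Nat.le_succ_of_le hk'))
    rw [ub, ub, hr]
    by_cases h2 : 2 ≤ m + 1
    · rw [h (m + 1) h2 le_rfl]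
    · simp [h2]

private def Sn (N : ℕ) : Finset (ℕ ⊕ ℕ) :=
  ((Finset.Icc 2 N).image Sum.inl) ∪ ((Finset.Icc 1 (N - 1)).image Sum.inr)

private def Tn (N : ℕ) : Finset (ℕ ⊕ ℕ) := {Sum.inl (N + 1), Sum.inr N}

/-- **Coupled construction of the WRRT together with a weight-proportional node.**
`par m` is the index of the parent of node `ν_m` (for `m ≥ 2`) and `u m` is the index of the
distinguished node `ũ_m`.  The construction uses independent Bernoulli variables
`B m` (parameter `w m / s m`) and independent indices `U m` with `P(U m = i) = w i / s m`:
if `B m = 1` then `ν_m` attaches to `ũ_{m-1}` and `ũ_m = ν_m`; if `B m = 0` then `ν_m`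
attaches to `ν_{U_{m-1}}` and `ũ_m = ũ_{m-1}`.  Then for every increasing tree `t` on `n`
vertices with parent map `π` and every `1 ≤ j ≤ n`,
`P(T̃_n = t, ũ_n = ν_j) = (∏_{m=2}^n w (π m)/s (m-1)) * (w j / s n)`. -/
theorem wrrt_one_node_coupling
    {Ω : Type*} [MeasurableSpace Ω] (μ : Measure Ω) [IsProbabilityMeasure μ]
    (w : ℕ → ℝ) (hw : ∀ i, 1 ≤ i → 0 < w i)
    (s : ℕ → ℝ) (hs : ∀ i, s i = ∑ j ∈ Finset.Icc 1 i, w j)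
    (B : ℕ → Ω → Bool) (U : ℕ → Ω → ℕ)
    (f : ℕ ⊕ ℕ → Ω → ℕ)
    (hfB : ∀ i, f (Sum.inl i) = fun ω => if B i ω then 1 else 0)
    (hfU : ∀ i, f (Sum.inr i) = U i)
    (hmeas : ∀ j, Measurable (f j))
    (hindep : iIndepFun f μ)
    (hBlaw : ∀ i, 1 ≤ i → μ {ω | B i ω = true} = ENNReal.ofReal (w i / s i))
    (hUlaw : ∀ m, 1 ≤ m → ∀ i, 1 ≤ i → i ≤ m →
      μ {ω | U m ω = i} = ENNReal.ofReal (w i / s m))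
    (hUrange : ∀ m, 1 ≤ m → ∀ ω, 1 ≤ U m ω ∧ U m ω ≤ m)
    (par u : ℕ → Ω → ℕ)
    (hu1 : ∀ ω, u 1 ω = 1)
    (hrec : ∀ ω, ∀ m, 2 ≤ m →
      (B m ω = true → par m ω = u (m - 1) ω ∧ u m ω = m) ∧
      (B m ω = false → par m ω = U (m - 1) ω ∧ u m ω = u (m - 1) ω))
    (n j : ℕ) (hn : 1 ≤ n) (hj : 1 ≤ j) (hjn : j ≤ n)
    (π : ℕ → ℕ) (hπ : ∀ m, 2 ≤ m → m ≤ n → 1 ≤ π m ∧ π m < m) :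
    μ {ω | (∀ m ∈ Finset.Icc 2 n, par m ω = π m) ∧ u n ω = j}
      = (∏ m ∈ Finset.Icc 2 n, ENNReal.ofReal (w (π m) / s (m - 1)))
        * ENNReal.ofReal (w j / s n) := by
  -- positivity of partial sums
  have hspos : ∀ m, 1 ≤ m → 0 < s m := by
    intro m hm
    rw [hs]
    exact Finset.sum_pos (fun i hi => hw i (Finset.mem_Icc.1 hi).1)
      ⟨1, Finset.mem_Icc.2 ⟨le_rfl, hm⟩⟩
  -- range of u
  have hule : ∀ m, 1 ≤ m → ∀ ω, u m ω ≤ m := by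
    intro m hm
    induction m, hm using Nat.le_induction with
    | base => intro ω; simp [hu1]
    | succ m hm ih =>
      intro ω
      rcases Bool.eq_false_or_eq_true (B (m + 1) ω) with hB | hB
      · have h2 := ((hrec ω (m + 1) (by omega)).1 hB).2
        omega
      · have h2 := ((hrec ω (m + 1) (by omega)).2 hB).2
        simp only [Nat.add_sub_cancel] at h2
        have := ih ω
        omega
  -- u as a function of the Bernoulli values
  have hueq : ∀ m, 1 ≤ m → ∀ ω, u m ω = ub (fun k => if B k ω then 1 else 0) m := by
    intro m hm
    induction m, hm using Nat.le_induction with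
    | base => intro ω; simp [ub, hu1]
    | succ m hm ih =>
      intro ω
      rcases Bool.eq_false_or_eq_true (B (m + 1) ω) with hB | hB
      · have h2 := ((hrec ω (m + 1) (by omega)).1 hB).2
        rw [h2, ub, if_pos ⟨by omega, by simp [hB]⟩]
      · have h2 := ((hrec ω (m + 1) (by omega)).2 hB).2
        simp only [Nat.add_sub_cancel] at h2
        rw [h2, ih ω, ub, if_neg]
        rintro ⟨-, hc⟩
        rw [hB] at hc
        simp at hc
  -- membership helpers
  have hinl : ∀ N, ∀ k, 2 ≤ k → k ≤ N → Sum.inl k ∈ Sn N := by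
    intro N k h1 h2
    exact Finset.mem_union.2 (Or.inl (Finset.mem_image.2 ⟨k, Finset.mem_Icc.2 ⟨h1, h2⟩, rfl⟩))
  have hinr : ∀ N, ∀ k, 1 ≤ k → k ≤ N - 1 → Sum.inr k ∈ Sn N := by
    intro N k h1 h2
    exact Finset.mem_union.2 (Or.inr (Finset.mem_image.2 ⟨k, Finset.mem_Icc.2 ⟨h1, h2⟩, rfl⟩))
  -- the splitting lemma
  have hsplit : ∀ N, 1 ≤ N → ∀ (jj : ℕ) (C : Set ((i : ↥(Tn N)) → ℕ)),
      μ ({ω | (∀ m ∈ Finset.Icc 2 N, par m ω = π m) ∧ u N ω = jj} ∩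
          (fun ω (i : ↥(Tn N)) => f i ω) ⁻¹' C)
        = μ {ω | (∀ m ∈ Finset.Icc 2 N, par m ω = π m) ∧ u N ω = jj} *
          μ ((fun ω (i : ↥(Tn N)) => f i ω) ⁻¹' C) := by
    intro N hN jj C
    have hST : Disjoint (Sn N) (Tn N) := by
      simp only [Finset.disjoint_left, Sn, Tn, Finset.mem_union, Finset.mem_image,
        Finset.mem_insert, Finset.mem_singleton, Finset.mem_Icc]
      rintro x (⟨k, ⟨hk1, hk2⟩, rfl⟩ | ⟨k, ⟨hk1, hk2⟩, rfl⟩) <;> rintro (h | h) <;>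
        simp_all <;> omega
    have hIndep := hindep.indepFun_finset (Sn N) (Tn N) hST hmeas
    have hEA : {ω | (∀ m ∈ Finset.Icc 2 N, par m ω = π m) ∧ u N ω = jj}
        = (fun ω (i : ↥(Sn N)) => f i ω) ⁻¹'
          {x | (∀ m ∈ Finset.Icc 2 N,
              (if (if h : Sum.inl m ∈ Sn N then x ⟨Sum.inl m, h⟩ else 0) = 1
               then ub (fun k => if h : Sum.inl k ∈ Sn N then x ⟨Sum.inl k, h⟩ else 0) (m - 1)
               else (if h : Sum.inr (m - 1) ∈ Sn N then x ⟨Sum.inr (m - 1), h⟩ else 0)) = π m) ∧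
            ub (fun k => if h : Sum.inl k ∈ Sn N then x ⟨Sum.inl k, h⟩ else 0) N = jj} := by
      ext ω
      simp only [Set.mem_preimage, Set.mem_setOf_eq]
      have hub : ∀ m, m ≤ N →
          ub (fun k => if h : Sum.inl k ∈ Sn N then f (Sum.inl k) ω else 0) m
            = ub (fun k => if B k ω then 1 else 0) m := by
        intro m hm
        refine ub_congr _ _ m (fun k hk1 hk2 => ?_)
        rw [dif_pos (hinl N k hk1 (hk2.trans hm))]
        simp [hfB]
      have hpar : ∀ m, 2 ≤ m → m ≤ N →
          (if (if h : Sum.inl m ∈ Sn N then f (Sum.inl m) ω else 0) = 1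
           then ub (fun k => if h : Sum.inl k ∈ Sn N then f (Sum.inl k) ω else 0) (m - 1)
           else (if h : Sum.inr (m - 1) ∈ Sn N then f (Sum.inr (m - 1)) ω else 0)) = par m ω := by
        intro m h2 hmN
        rw [dif_pos (hinl N m h2 hmN)]
        by_cases hB : B m ω = true
        · have hc : f (Sum.inl m) ω = 1 := by simp [hfB, hB]
          rw [if_pos hc, hub (m - 1) (by omega), ← hueq (m - 1) (by omega) ω]
          exact ((hrec ω m h2).1 hB).1.symm
        · have hB' : B m ω = false := by simpa using hB
          have hc : ¬ f (Sum.inl m) ω = 1 := by simp [hfB, hB']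
          rw [if_neg hc, dif_pos (hinr N (m - 1) (by omega) (by omega)), hfU]
          exact ((hrec ω m h2).2 hB').1.symm
      constructor
      · rintro ⟨h1, h2⟩
        refine ⟨fun m hm => ?_, ?_⟩
        · rw [hpar m (Finset.mem_Icc.1 hm).1 (Finset.mem_Icc.1 hm).2]
          exact h1 m hm
        · rw [hub N le_rfl, ← hueq N hN ω]
          exact h2
      · rintro ⟨h1, h2⟩
        refine ⟨fun m hm => ?_, ?_⟩
        · rw [← hpar m (Finset.mem_Icc.1 hm).1 (Finset.mem_Icc.1 hm).2]
          exact h1 m hm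
        · rw [← h2, hub N le_rfl, ← hueq N hN ω]
    rw [hEA]
    exact hIndep.measure_inter_preimage_eq_mul _ _
      (Set.to_countable _).measurableSet (Set.to_countable _).measurableSet
  -- main induction
  induction n, hn using Nat.le_induction generalizing j with
  | base =>
    have hj1 : j = 1 := le_antisymm hjn hj
    subst hj1
    have hIcc : Finset.Icc 2 1 = (∅ : Finset ℕ) := Finset.Icc_eq_empty (by omega)
    have hE : {ω | (∀ m ∈ Finset.Icc 2 1, par m ω = π m) ∧ u 1 ω = 1} = Set.univ := by
      ext ω; simp [hIcc, hu1]
    have hs1 : s 1 = w 1 := by rw [hs]; simp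
    rw [hE, measure_univ, hIcc, Finset.prod_empty, hs1, one_mul,
      div_self (hw 1 le_rfl).ne', ENNReal.ofReal_one]
  | succ n hn1 IH =>
    have hπn : 1 ≤ π (n + 1) ∧ π (n + 1) < n + 1 := hπ (n + 1) (by omega) le_rfl
    have hπ' : ∀ m, 2 ≤ m → m ≤ n → 1 ≤ π m ∧ π m < m := fun m h1 h2 => hπ m h1 (by omega)
    have hm1 : Sum.inl (n + 1) ∈ Tn n := by simp [Tn]
    have hm2 : Sum.inr n ∈ Tn n := by simp [Tn]
    have hsn := hspos n hn1
    have hsn1 := hspos (n + 1) (by omega)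
    have hs1 : s (n + 1) = s n + w (n + 1) := by
      rw [hs, hs, Finset.sum_Icc_succ_top (by omega : 1 ≤ n + 1)]
    by_cases hcase : j = n + 1
    · -- j = n + 1 : B_{n+1} = true
      subst hcase
      have hE : {ω | (∀ m ∈ Finset.Icc 2 (n + 1), par m ω = π m) ∧ u (n + 1) ω = n + 1}
          = {ω | (∀ m ∈ Finset.Icc 2 n, par m ω = π m) ∧ u n ω = π (n + 1)} ∩
            ((fun ω (i : ↥(Tn n)) => f i ω) ⁻¹' {x | x ⟨Sum.inl (n + 1), hm1⟩ = 1}) := by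
        ext ω
        simp only [Set.mem_inter_iff, Set.mem_preimage, Set.mem_setOf_eq]
        constructor
        · rintro ⟨h1, h2⟩
          have hB : B (n + 1) ω = true := by
            rcases Bool.eq_false_or_eq_true (B (n + 1) ω) with hB | hB
            · exact hB
            · exfalso
              have h3 := ((hrec ω (n + 1) (by omega)).2 hB).2
              simp only [Nat.add_sub_cancel] at h3
              have := hule n hn1 ω
              omega
          have h4 := (hrec ω (n + 1) (by omega)).1 hB
          simp only [Nat.add_sub_cancel] at h4
          refine ⟨⟨fun m hm => h1 m ?_, ?_⟩, ?_⟩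
          · rcases Finset.mem_Icc.1 hm with ⟨ha, hb⟩
            exact Finset.mem_Icc.2 ⟨ha, by omega⟩
          · rw [← h4.1]
            exact h1 (n + 1) (Finset.mem_Icc.2 ⟨by omega, le_rfl⟩)
          · simp [hfB, hB]
        · rintro ⟨⟨h1, h2⟩, h3⟩
          have hB : B (n + 1) ω = true := by
            rcases Bool.eq_false_or_eq_true (B (n + 1) ω) with hB | hB
            · exact hB
            · exfalso
              simp only [hfB, hB] at h3
              simp at h3
          have h4 := (hrec ω (n + 1) (by omega)).1 hB
          simp only [Nat.add_sub_cancel] at h4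
          refine ⟨fun m hm => ?_, h4.2⟩
          rcases Finset.mem_Icc.1 hm with ⟨ha, hb⟩
          by_cases hmn : m ≤ n
          · exact h1 m (Finset.mem_Icc.2 ⟨ha, hmn⟩)
          · have hmeq : m = n + 1 := by omega
            subst hmeq
            rw [h4.1, h2]
      have hpre : ((fun ω (i : ↥(Tn n)) => f i ω) ⁻¹' {x | x ⟨Sum.inl (n + 1), hm1⟩ = 1})
          = {ω | B (n + 1) ω = true} := by
        ext ω
        simp only [Set.mem_preimage, Set.mem_setOf_eq, hfB]
        rcases Bool.eq_false_or_eq_true (B (n + 1) ω) with hB | hB <;> simp [hB]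
      rw [hE, hsplit n hn1 (π (n + 1)) _, hpre, hBlaw (n + 1) (by omega),
        IH (π (n + 1)) hπn.1 (by omega) hπ',
        Finset.prod_Icc_succ_top (by omega : 2 ≤ n + 1)]
      simp only [Nat.add_sub_cancel]
    · -- j ≤ n : B_{n+1} = false, U n = π (n+1)
      have hjn' : j ≤ n := by omega
      have hE : {ω | (∀ m ∈ Finset.Icc 2 (n + 1), par m ω = π m) ∧ u (n + 1) ω = j}
          = {ω | (∀ m ∈ Finset.Icc 2 n, par m ω = π m) ∧ u n ω = j} ∩
            ((fun ω (i : ↥(Tn n)) => f i ω) ⁻¹'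
              {x | x ⟨Sum.inl (n + 1), hm1⟩ = 0 ∧ x ⟨Sum.inr n, hm2⟩ = π (n + 1)}) := by
        ext ω
        simp only [Set.mem_inter_iff, Set.mem_preimage, Set.mem_setOf_eq]
        constructor
        · rintro ⟨h1, h2⟩
          have hB : B (n + 1) ω = false := by
            rcases Bool.eq_false_or_eq_true (B (n + 1) ω) with hB | hB
            · exfalso
              have h3 := ((hrec ω (n + 1) (by omega)).1 hB).2
              omega
            · exact hB
          have h4 := (hrec ω (n + 1) (by omega)).2 hB
          simp only [Nat.add_sub_cancel] at h4
          refine ⟨⟨fun m hm => h1 m ?_, by rw [← h4.2]; exact h2⟩, ?_, ?_⟩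
          · rcases Finset.mem_Icc.1 hm with ⟨ha, hb⟩
            exact Finset.mem_Icc.2 ⟨ha, by omega⟩
          · simp [hfB, hB]
          · rw [hfU, ← h4.1]
            exact h1 (n + 1) (Finset.mem_Icc.2 ⟨by omega, le_rfl⟩)
        · rintro ⟨⟨h1, h2⟩, h3, h4⟩
          have hB : B (n + 1) ω = false := by
            rcases Bool.eq_false_or_eq_true (B (n + 1) ω) with hB | hB
            · exfalso
              simp only [hfB, hB] at h3
              simp at h3
            · exact hB
          have h5 := (hrec ω (n + 1) (by omega)).2 hB
          simp only [Nat.add_sub_cancel] at h5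
          refine ⟨fun m hm => ?_, by rw [h5.2]; exact h2⟩
          rcases Finset.mem_Icc.1 hm with ⟨ha, hb⟩
          by_cases hmn : m ≤ n
          · exact h1 m (Finset.mem_Icc.2 ⟨ha, hmn⟩)
          · have hmeq : m = n + 1 := by omega
            subst hmeq
            rw [h5.1, ← hfU n]
            exact h4
      have hpre : ((fun ω (i : ↥(Tn n)) => f i ω) ⁻¹'
            {x | x ⟨Sum.inl (n + 1), hm1⟩ = 0 ∧ x ⟨Sum.inr n, hm2⟩ = π (n + 1)})
          = (f (Sum.inl (n + 1)) ⁻¹' {0}) ∩ (f (Sum.inr n) ⁻¹' {π (n + 1)}) := by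
        ext ω
        simp [Set.mem_preimage]
      have hmeasB : MeasurableSet {ω | B (n + 1) ω = true} := by
        have hq : {ω | B (n + 1) ω = true} = f (Sum.inl (n + 1)) ⁻¹' {1} := by
          ext ω
          simp only [Set.mem_preimage, Set.mem_singleton_iff, Set.mem_setOf_eq, hfB]
          rcases Bool.eq_false_or_eq_true (B (n + 1) ω) with hB | hB <;> simp [hB]
        rw [hq]
        exact hmeas _ (measurableSet_singleton _)
      have hBfalse : μ (f (Sum.inl (n + 1)) ⁻¹' {0}) = ENNReal.ofReal (s n / s (n + 1)) := by
        have hq : f (Sum.inl (n + 1)) ⁻¹' {0} = {ω | B (n + 1) ω = true}ᶜ := by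
          ext ω
          simp only [Set.mem_preimage, Set.mem_singleton_iff, Set.mem_compl_iff,
            Set.mem_setOf_eq, hfB]
          rcases Bool.eq_false_or_eq_true (B (n + 1) ω) with hB | hB <;> simp [hB]
        have harith : s n / s (n + 1) = 1 - w (n + 1) / s (n + 1) := by
          rw [eq_sub_iff_add_eq, ← add_div, ← hs1]
          exact div_self hsn1.ne'
        rw [hq, prob_compl_eq_one_sub hmeasB, hBlaw (n + 1) (by omega), harith,
          ENNReal.ofReal_sub _ (div_nonneg (hw (n + 1) (by omega)).le hsn1.le),
          ENNReal.ofReal_one]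
      have hUval : μ (f (Sum.inr n) ⁻¹' {π (n + 1)}) = ENNReal.ofReal (w (π (n + 1)) / s n) := by
        have hq : f (Sum.inr n) ⁻¹' {π (n + 1)} = {ω | U n ω = π (n + 1)} := by
          ext ω
          simp [hfU]
        rw [hq]
        exact hUlaw n hn1 (π (n + 1)) hπn.1 (by omega)
      have hind2 := (hindep.indepFun
          (show (Sum.inl (n + 1) : ℕ ⊕ ℕ) ≠ Sum.inr n by simp)).measure_inter_preimage_eq_mul
          {0} {π (n + 1)} (measurableSet_singleton _) (measurableSet_singleton _)
      have hcomb : ENNReal.ofReal (w j / s n) * ENNReal.ofReal (s n / s (n + 1))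
          = ENNReal.ofReal (w j / s (n + 1)) := by
        rw [← ENNReal.ofReal_mul (div_nonneg (hw j hj).le hsn.le)]
        congr 1
        field_simp
      rw [hE, hsplit n hn1 j _, hpre, hind2, hBfalse, hUval, IH j hj hjn' hπ',
        Finset.prod_Icc_succ_top (by omega : 2 ≤ n + 1)]
      simp only [Nat.add_sub_cancel]
      calc (∏ m ∈ Finset.Icc 2 n, ENNReal.ofReal (w (π m) / s (m - 1)))
            * ENNReal.ofReal (w j / s n)
            * (ENNReal.ofReal (s n / s (n + 1)) * ENNReal.ofReal (w (π (n + 1)) / s n))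
          = (∏ m ∈ Finset.Icc 2 n, ENNReal.ofReal (w (π m) / s (m - 1)))
            * ENNReal.ofReal (w (π (n + 1)) / s n)
            * (ENNReal.ofReal (w j / s n) * ENNReal.ofReal (s n / s (n + 1))) := by ring
        _ = _ := by rw [hcomb]
end

section
/- Let w = (w_i)_{i≥1} be positive reals with partial sums s_i = w_1+⋯+w_i. For n ≥ 1 let T_n be the n-node w-WRRT and, given T_n, let u_n be a node chosen at random with probability proportional to the weights (P(u_n = ν_i) = w_i/s_n). Then the random variables (1_{ν_i ⪯ u_n})_{1≤i≤n}, where ν_i ⪯ u_n means ν_i is an ancestor of u_n or equals u_n, are independent Bernoulli random variables with respective parameters w_i/s_i. -/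
open MeasureTheory ProbabilityTheory Finset
open scoped Classical

/-- `i` is a (non-strict) ancestor of `j` in the tree with parent map `p`:
some iterate of the parent map sends `j` to `i`. -/
def isAnc (p : ℕ → ℕ) (i j : ℕ) : Prop := ∃ k : ℕ, p^[k] j = i

namespace WrrtAux

open scoped ENNReal

lemma sup_id_mem {C : Finset ℕ} (h : C.Nonempty) : C.sup id ∈ C := by
  rw [← Finset.sup'_eq_sup h id, ← Finset.max'_eq_sup']
  exact C.max'_mem h

/-- predecessor of `c` within `C` -/
def predC (C : Finset ℕ) (c : ℕ) : ℕ := (C.filter (· < c)).sup id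

lemma predC_mem {C : Finset ℕ} {c x : ℕ} (hx : x ∈ C) (hxc : x < c) :
    predC C c ∈ C ∧ predC C c < c := by
  have hne : (C.filter (· < c)).Nonempty := ⟨x, by simp [hx, hxc]⟩
  have h := sup_id_mem hne
  simp only [Finset.mem_filter] at h
  exact ⟨h.1, h.2⟩

lemma le_predC {C : Finset ℕ} {c x : ℕ} (hx : x ∈ C) (hxc : x < c) : x ≤ predC C c :=
  Finset.le_sup (f := id) (by simp [hx, hxc])

lemma predC_le {C : Finset ℕ} {c d : ℕ} (h : ∀ x ∈ C, x < c → x ≤ d) : predC C c ≤ d :=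
  Finset.sup_le fun x hx => h x (Finset.mem_filter.1 hx).1 (Finset.mem_filter.1 hx).2

/-- "successor inverse" of predC -/
lemma exists_predC_inv {C : Finset ℕ} (h1C : 1 ∈ C) {d : ℕ} (hd : d ∈ C) (hd1 : 1 ≤ d)
    (hdM : d < C.sup id) : ∃ c ∈ C, 2 ≤ c ∧ d < c ∧ predC C c = d := by
  have hTne : (C.filter (fun x => d < x)).Nonempty :=
    ⟨C.sup id, Finset.mem_filter.2 ⟨sup_id_mem ⟨1, h1C⟩, hdM⟩⟩
  set c := (C.filter (fun x => d < x)).min' hTne with hc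
  have hcmem := Finset.min'_mem _ hTne
  rw [Finset.mem_filter] at hcmem
  refine ⟨c, hcmem.1, by omega, hcmem.2, ?_⟩
  refine le_antisymm (predC_le fun x hx hxc => ?_) (le_predC hd hcmem.2)
  by_contra hdx
  have : c ≤ x := Finset.min'_le _ x (Finset.mem_filter.2 ⟨hx, by omega⟩)
  omega

section chain

variable {n : ℕ} {p : ℕ → ℕ}

lemma pstep (hp1 : p 1 = 1) (hp : ∀ m, 2 ≤ m → m ≤ n → 1 ≤ p m ∧ p m < m)
    {x : ℕ} (hx1 : 1 ≤ x) (hxn : x ≤ n) : 1 ≤ p x ∧ p x ≤ x := by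
  rcases eq_or_lt_of_le hx1 with h | h
  · simp [← h, hp1]
  · exact ⟨(hp x h hxn).1, le_of_lt (hp x h hxn).2⟩

lemma iter_range (hp1 : p 1 = 1) (hp : ∀ m, 2 ≤ m → m ≤ n → 1 ≤ p m ∧ p m < m)
    {j : ℕ} (hj1 : 1 ≤ j) (hjn : j ≤ n) (k : ℕ) : 1 ≤ p^[k] j ∧ p^[k] j ≤ j := by
  induction k with
  | zero => exact ⟨hj1, le_rfl⟩
  | succ k ih =>
    rw [Function.iterate_succ_apply']
    have h2 := pstep hp1 hp ih.1 (ih.2.trans hjn)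
    exact ⟨h2.1, h2.2.trans ih.2⟩

lemma iter_le (hp1 : p 1 = 1) (hp : ∀ m, 2 ≤ m → m ≤ n → 1 ≤ p m ∧ p m < m)
    {j : ℕ} (hj1 : 1 ≤ j) (hjn : j ≤ n) {k l : ℕ} (hkl : k ≤ l) : p^[l] j ≤ p^[k] j := by
  obtain ⟨d, rfl⟩ := Nat.exists_eq_add_of_le hkl
  rw [add_comm, Function.iterate_add_apply]
  have hk := iter_range hp1 hp hj1 hjn k
  exact (iter_range hp1 hp hk.1 (hk.2.trans hjn) d).2

lemma reach_one (hp1 : p 1 = 1) (hp : ∀ m, 2 ≤ m → m ≤ n → 1 ≤ p m ∧ p m < m) :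
    ∀ j, 1 ≤ j → j ≤ n → ∃ k, p^[k] j = 1 := by
  intro j
  induction j using Nat.strong_induction_on with
  | _ j ih =>
    intro hj1 hjn
    rcases eq_or_lt_of_le hj1 with h | h
    · exact ⟨0, h.symm⟩
    · have hpj := hp j h hjn
      obtain ⟨k, hk⟩ := ih (p j) hpj.2 hpj.1 (le_trans (le_of_lt hpj.2) hjn)
      exact ⟨k + 1, by rw [Function.iterate_succ_apply, hk]⟩

lemma iter_congr {q : ℕ → ℕ} (hp1 : p 1 = 1) (hp : ∀ m, 2 ≤ m → m ≤ n → 1 ≤ p m ∧ p m < m)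
    (hq : ∀ x, 1 ≤ x → x ≤ n → q x = p x)
    {j : ℕ} (hj1 : 1 ≤ j) (hjn : j ≤ n) (k : ℕ) : q^[k] j = p^[k] j := by
  induction k with
  | zero => rfl
  | succ k ih =>
    rw [Function.iterate_succ_apply', Function.iterate_succ_apply', ih]
    have h := iter_range hp1 hp hj1 hjn k
    exact hq _ h.1 (h.2.trans hjn)

/-- the set of (non-strict) ancestors of `j` among `1,…,n`. -/
noncomputable def chainSet (p : ℕ → ℕ) (n j : ℕ) : Finset ℕ :=
  (Finset.Icc 1 n).filter (fun i => isAnc p i j)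

lemma one_mem_chainSet (hp1 : p 1 = 1) (hp : ∀ m, 2 ≤ m → m ≤ n → 1 ≤ p m ∧ p m < m)
    (hn : 1 ≤ n) {j : ℕ} (hj1 : 1 ≤ j) (hjn : j ≤ n) : 1 ∈ chainSet p n j :=
  Finset.mem_filter.2 ⟨Finset.mem_Icc.2 ⟨le_rfl, hn⟩, reach_one hp1 hp j hj1 hjn⟩

lemma chain_eq_iff (hp1 : p 1 = 1) (hp : ∀ m, 2 ≤ m → m ≤ n → 1 ≤ p m ∧ p m < m)
    {j : ℕ} (hj1 : 1 ≤ j) (hjn : j ≤ n) {C : Finset ℕ} (hC : C ⊆ Finset.Icc 1 n) (h1C : 1 ∈ C) :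
    chainSet p n j = C ↔ (j = C.sup id ∧ ∀ c ∈ C, 2 ≤ c → p c = predC C c) := by
  constructor
  · intro h
    have hjC : j ∈ C := by
      rw [← h]
      exact Finset.mem_filter.2 ⟨Finset.mem_Icc.2 ⟨hj1, hjn⟩, ⟨0, rfl⟩⟩
    have hmax : ∀ x ∈ C, x ≤ j := by
      intro x hx
      rw [← h, chainSet, Finset.mem_filter] at hx
      obtain ⟨k, hk⟩ := hx.2
      rw [← hk]
      exact (iter_range hp1 hp hj1 hjn k).2
    refine ⟨le_antisymm (Finset.le_sup (f := id) hjC) (Finset.sup_le hmax), ?_⟩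
    intro c hcC hc2
    have hcIcc := Finset.mem_Icc.1 (hC hcC)
    obtain ⟨k, hk⟩ : isAnc p c j :=
      (Finset.mem_filter.1 (show c ∈ chainSet p n j by rw [h]; exact hcC)).2
    have hpclt : p c < c := (hp c hc2 hcIcc.2).2
    have hpcj : p^[k + 1] j = p c := by rw [Function.iterate_succ_apply', hk]
    have hpc : p c ∈ C := by
      rw [← h]
      refine Finset.mem_filter.2 ⟨?_, ⟨k + 1, hpcj⟩⟩
      rw [← hpcj]
      exact Finset.mem_Icc.2 ⟨(iter_range hp1 hp hj1 hjn (k + 1)).1,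
        ((iter_range hp1 hp hj1 hjn (k + 1)).2).trans hjn⟩
    refine le_antisymm (le_predC hpc hpclt) ?_
    have hd := predC_mem hpc hpclt
    obtain ⟨k', hk'⟩ : isAnc p (predC C c) j :=
      (Finset.mem_filter.1 (show predC C c ∈ chainSet p n j by rw [h]; exact hd.1)).2
    have hk'k : k < k' := by
      by_contra hle
      have := iter_le hp1 hp hj1 hjn (le_of_not_gt hle)
      rw [hk, hk'] at this
      omega
    have := iter_le hp1 hp hj1 hjn (show k + 1 ≤ k' by omega)
    rw [hk', Function.iterate_succ_apply', hk] at this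
    exact this
  · rintro ⟨hjmax, hpred⟩
    have hCne : C.Nonempty := ⟨1, h1C⟩
    apply Finset.Subset.antisymm
    · intro x hx
      rw [chainSet, Finset.mem_filter] at hx
      obtain ⟨hxIcc, k, hk⟩ := hx
      rw [← hk]; clear hk hxIcc
      induction k with
      | zero =>
        simpa [hjmax] using sup_id_mem hCne
      | succ k ih =>
        rw [Function.iterate_succ_apply']
        set y := p^[k] j with hy
        have hyIcc := Finset.mem_Icc.1 (hC ih)
        rcases eq_or_lt_of_le hyIcc.1 with h1 | h2
        · rw [← h1, hp1]; exact h1C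
        · rw [hpred y ih h2]
          exact (predC_mem h1C (show (1:ℕ) < y from h2)).1
    · intro c hcC
      have key : ∀ d, ∀ c ∈ C, C.sup id - c ≤ d → c ∈ chainSet p n j := by
        intro d
        induction d with
        | zero =>
          intro c hcC hd
          have hcs : c = C.sup id :=
            le_antisymm (Finset.le_sup (f := id) hcC) (by omega)
          exact Finset.mem_filter.2 ⟨hC hcC, ⟨0, by simp only [Function.iterate_zero_apply]; rw [hjmax, hcs]⟩⟩
        | succ d ih =>
          intro c hcC hd
          by_cases hcs : c = C.sup id
          · exact Finset.mem_filter.2 ⟨hC hcC, ⟨0, by simp only [Function.iterate_zero_apply]; rw [hjmax, hcs]⟩⟩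
          · have hclt : c < C.sup id := lt_of_le_of_ne (Finset.le_sup (f := id) hcC) hcs
            have hc1 : 1 ≤ c := (Finset.mem_Icc.1 (hC hcC)).1
            obtain ⟨c', hc'C, hc'2, hcc', hpredc'⟩ := exists_predC_inv h1C hcC hc1 hclt
            have hsub : C.sup id - c' ≤ d := by
              have : c' ≤ C.sup id := Finset.le_sup (f := id) hc'C
              omega
            obtain ⟨k, hk⟩ := (Finset.mem_filter.1 (ih c' hc'C hsub)).2
            exact Finset.mem_filter.2 ⟨hC hcC,
              ⟨k + 1, by rw [Function.iterate_succ_apply', hk, hpred c' hc'C hc'2, hpredc']⟩⟩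
      exact key _ c hcC le_rfl

end chain

def extP (n : ℕ) (g : ∀ m ∈ Finset.Icc 2 n, ℕ) : ℕ → ℕ :=
  fun m => if h : m ∈ Finset.Icc 2 n then g m h else 1

def PP (n : ℕ) : Finset (∀ m ∈ Finset.Icc 2 n, ℕ) :=
  (Finset.Icc 2 n).pi (fun m => Finset.Icc 1 (m - 1))

lemma extP_pos {n : ℕ} {g : ∀ m ∈ Finset.Icc 2 n, ℕ} {m : ℕ} (hm : m ∈ Finset.Icc 2 n) :
    extP n g m = g m hm := dif_pos hm

lemma extP_neg {n : ℕ} {g : ∀ m ∈ Finset.Icc 2 n, ℕ} {m : ℕ} (hm : m ∉ Finset.Icc 2 n) :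
    extP n g m = 1 := dif_neg hm

lemma extP_prop {n : ℕ} {g : ∀ m ∈ Finset.Icc 2 n, ℕ} (hg : g ∈ PP n) :
    ∀ m, 2 ≤ m → m ≤ n → 1 ≤ extP n g m ∧ extP n g m < m := by
  intro m h2 hn
  have hm : m ∈ Finset.Icc 2 n := Finset.mem_Icc.2 ⟨h2, hn⟩
  have h := Finset.mem_pi.1 hg m hm
  rw [Finset.mem_Icc] at h
  rw [extP_pos hm]
  omega

lemma extP_inj {n : ℕ} {g g' : ∀ m ∈ Finset.Icc 2 n, ℕ} (h : extP n g = extP n g') :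
    g = g' := by
  funext m hm
  have h2 := congrFun h m
  rwa [extP_pos hm, extP_pos hm] at h2

variable {Ω : Type*}

def npF (n : ℕ) (par : ℕ → Ω → ℕ) (ω : Ω) : ℕ → ℕ :=
  fun m => if m ∈ Finset.Icc 2 n then par m ω else 1

def atomF [MeasurableSpace Ω] (n : ℕ) (par : ℕ → Ω → ℕ) (u : Ω → ℕ)
    (x : ℕ × (∀ m ∈ Finset.Icc 2 n, ℕ)) : Set Ω :=
  {ω | (∀ m ∈ Finset.Icc 2 n, par m ω = extP n x.2 m) ∧ u ω = x.1}

lemma decomp [MeasurableSpace Ω] (μ : Measure Ω)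
    (n : ℕ) (par : ℕ → Ω → ℕ) (u : Ω → ℕ)
    (hmeas : ∀ m, Measurable (par m)) (humeas : Measurable u)
    (hparlt : ∀ m, 2 ≤ m → m ≤ n → ∀ ω, 1 ≤ par m ω ∧ par m ω < m)
    (hurange : ∀ ω, 1 ≤ u ω ∧ u ω ≤ n)
    (Q : (ℕ → ℕ) → ℕ → Prop)
    (mass : (∀ m ∈ Finset.Icc 2 n, ℕ) → ℕ → ℝ≥0∞)
    (hmass : ∀ g ∈ PP n, ∀ j, 1 ≤ j → j ≤ n →
      μ {ω | (∀ m ∈ Finset.Icc 2 n, par m ω = extP n g m) ∧ u ω = j} = mass g j) :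
    μ {ω | Q (npF n par ω) (u ω)}
      = ∑ j ∈ Finset.Icc 1 n, ∑ g ∈ PP n, (if Q (extP n g) j then mass g j else 0) := by
  classical
  have hnp_ext : ∀ (ω : Ω) g, (∀ m ∈ Finset.Icc 2 n, par m ω = extP n g m) ↔
      npF n par ω = extP n g := by
    intro ω g
    constructor
    · intro h; funext m
      by_cases hm : m ∈ Finset.Icc 2 n
      · simp only [npF, if_pos hm]; exact h m hm
      · simp only [npF, if_neg hm, extP_neg hm]
    · intro h m hm
      have h2 := congrFun h m
      simp only [npF, if_pos hm] at h2
      exact h2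
  set T := (Finset.Icc 1 n ×ˢ PP n).filter (fun x => Q (extP n x.2) x.1) with hT
  have hg0 : ∀ ω : Ω, (fun m _ => par m ω : ∀ m ∈ Finset.Icc 2 n, ℕ) ∈ PP n := by
    intro ω
    rw [PP, Finset.mem_pi]
    intro m hm
    rw [Finset.mem_Icc] at hm ⊢
    have := hparlt m hm.1 hm.2 ω
    omega
  have hnp_g0 : ∀ ω : Ω, npF n par ω = extP n (fun m _ => par m ω) :=
    fun ω => (hnp_ext ω _).1 (fun m hm => (extP_pos (g := fun m _ => par m ω) hm).symm)
  have hsets : {ω | Q (npF n par ω) (u ω)} = ⋃ x ∈ T, atomF n par u x := by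
    ext ω
    simp only [Set.mem_setOf_eq, Set.mem_iUnion, exists_prop]
    constructor
    · intro h
      refine ⟨(u ω, fun m _ => par m ω), ?_, ?_⟩
      · rw [hT, Finset.mem_filter, Finset.mem_product]
        refine ⟨⟨Finset.mem_Icc.2 ⟨(hurange ω).1, (hurange ω).2⟩, hg0 ω⟩, ?_⟩
        show Q (extP n (fun m _ => par m ω)) (u ω)
        rw [← hnp_g0 ω]
        exact h
      · exact ⟨fun m hm => (extP_pos (g := fun m _ => par m ω) hm).symm, rfl⟩
    · rintro ⟨x, hxT, hx⟩
      rw [hT, Finset.mem_filter] at hxT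
      have h1 : npF n par ω = extP n x.2 := (hnp_ext ω x.2).1 hx.1
      rw [h1, hx.2]
      exact hxT.2
  have hdisj : (↑T : Set (ℕ × (∀ m ∈ Finset.Icc 2 n, ℕ))).PairwiseDisjoint (atomF n par u) := by
    intro x _ y _ hxy
    refine Set.disjoint_left.2 fun ω hωx hωy => hxy ?_
    have hωx' : (∀ m ∈ Finset.Icc 2 n, par m ω = extP n x.2 m) ∧ u ω = x.1 := hωx
    have hωy' : (∀ m ∈ Finset.Icc 2 n, par m ω = extP n y.2 m) ∧ u ω = y.1 := hωy
    have h1 : x.1 = y.1 := by rw [← hωx'.2, ← hωy'.2]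
    have h2 : x.2 = y.2 := by
      apply extP_inj (n := n)
      rw [← (hnp_ext ω x.2).1 hωx'.1, ← (hnp_ext ω y.2).1 hωy'.1]
    exact Prod.ext h1 h2
  have hmeasA : ∀ x ∈ T, MeasurableSet (atomF n par u x) := by
    intro x _
    have h : atomF n par u x =
        (⋂ m, ⋂ (_ : m ∈ Finset.Icc 2 n), (par m) ⁻¹' {extP n x.2 m}) ∩ u ⁻¹' {x.1} := by
      ext ω
      simp [atomF, Set.mem_iInter]
    rw [h]
    exact (MeasurableSet.iInter fun m => MeasurableSet.iInter fun _ =>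
      hmeas m (measurableSet_singleton _)).inter (humeas (measurableSet_singleton _))
  rw [hsets, measure_biUnion_finset hdisj hmeasA]
  have hval : ∀ x ∈ T, μ (atomF n par u x) = mass x.2 x.1 := by
    intro x hxT
    rw [hT, Finset.mem_filter, Finset.mem_product] at hxT
    have hj := Finset.mem_Icc.1 hxT.1.1
    exact hmass x.2 hxT.1.2 x.1 hj.1 hj.2
  rw [Finset.sum_congr rfl hval, hT, Finset.sum_filter, Finset.sum_product]

lemma measurable_comp_nat [MeasurableSpace Ω] (par : ℕ → Ω → ℕ)
    (hmeas : ∀ m, Measurable (par m)) {f : Ω → ℕ} (hf : Measurable f) :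
    Measurable (fun ω => par (f ω) ω) := by
  apply measurable_to_countable'
  intro y
  have h : (fun ω => par (f ω) ω) ⁻¹' {y} = ⋃ b : ℕ, (f ⁻¹' {b} ∩ par b ⁻¹' {y}) := by
    ext ω
    simp only [Set.mem_preimage, Set.mem_singleton_iff, Set.mem_iUnion, Set.mem_inter_iff]
    constructor
    · intro hω; exact ⟨f ω, rfl, hω⟩
    · rintro ⟨b, hb, hω⟩; rw [show f ω = b from hb] at *; exact hω
  rw [h]
  exact MeasurableSet.iUnion fun b =>
    (hf (measurableSet_singleton b)).inter (hmeas b (measurableSet_singleton y))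

lemma measurable_anc [MeasurableSpace Ω] (par : ℕ → Ω → ℕ) (u : Ω → ℕ)
    (hmeas : ∀ m, Measurable (par m)) (humeas : Measurable u) (i : ℕ) :
    MeasurableSet {ω | isAnc (fun m => par m ω) i (u ω)} := by
  have hiter : ∀ k, Measurable (fun ω => (fun m => par m ω)^[k] (u ω)) := by
    intro k
    induction k with
    | zero => simpa using humeas
    | succ k ih =>
      have h : (fun ω => (fun m => par m ω)^[k+1] (u ω))
          = fun ω => par ((fun m => par m ω)^[k] (u ω)) ω := by
        funext ω
        rw [Function.iterate_succ_apply']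
      rw [h]
      exact measurable_comp_nat par hmeas ih
  have h : {ω | isAnc (fun m => par m ω) i (u ω)}
      = ⋃ k : ℕ, {ω | (fun m => par m ω)^[k] (u ω) = i} := by
    ext ω
    simp [isAnc, Set.mem_iUnion]
  rw [h]
  exact MeasurableSet.iUnion fun k => hiter k (measurableSet_singleton i)


section prodid

lemma s_pos (w s : ℕ → ℝ) (hw : ∀ i, 1 ≤ i → 0 < w i)
    (hs : ∀ i, s i = ∑ j ∈ Finset.Icc 1 i, w j) : ∀ i, 1 ≤ i → 0 < s i := by
  intro i hi
  rw [hs]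
  exact Finset.sum_pos (fun j hj => hw j (Finset.mem_Icc.1 hj).1)
    ⟨i, Finset.mem_Icc.2 ⟨hi, le_rfl⟩⟩

lemma s_zero (w s : ℕ → ℝ) (hs : ∀ i, s i = ∑ j ∈ Finset.Icc 1 i, w j) : s 0 = 0 := by
  rw [hs]; simp

lemma s_nonneg (w s : ℕ → ℝ) (hw : ∀ i, 1 ≤ i → 0 < w i)
    (hs : ∀ i, s i = ∑ j ∈ Finset.Icc 1 i, w j) : ∀ i, 0 ≤ s i := by
  intro i
  rcases Nat.eq_zero_or_pos i with h | h
  · rw [h, s_zero w s hs]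
  · exact (s_pos w s hw hs i h).le

lemma s_succ (w s : ℕ → ℝ) (hs : ∀ i, s i = ∑ j ∈ Finset.Icc 1 i, w j) :
    ∀ i, 1 ≤ i → s i = s (i - 1) + w i := by
  intro i hi
  obtain ⟨i', rfl⟩ : ∃ i', i = i' + 1 := ⟨i - 1, by omega⟩
  rw [hs, hs, Finset.sum_Icc_succ_top (by omega : 1 ≤ i' + 1)]
  simp

lemma prod_sub_one_mul (s : ℕ → ℝ) (n : ℕ) (hn : 1 ≤ n) :
    (∏ m ∈ Finset.Icc 2 n, s (m - 1)) * s n = ∏ i ∈ Finset.Icc 1 n, s i := by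
  obtain ⟨n', rfl⟩ : ∃ n', n = n' + 1 := ⟨n - 1, by omega⟩
  have himg : Finset.Icc 2 (n' + 1) = (Finset.Icc 1 n').image (· + 1) := by
    ext x
    simp only [Finset.mem_Icc, Finset.mem_image]
    constructor
    · intro h; exact ⟨x - 1, by omega, by omega⟩
    · rintro ⟨y, hy, rfl⟩; omega
  rw [himg, Finset.prod_image (fun x _ y _ h => by omega),
    Finset.prod_Icc_succ_top (by omega : 1 ≤ n' + 1)]
  simp

lemma prod_predC (w : ℕ → ℝ) {C : Finset ℕ} (h1C : 1 ∈ C) (hpos : ∀ x ∈ C, 1 ≤ x) :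
    ∏ c ∈ C.erase 1, w (predC C c) = ∏ i ∈ C.erase (C.sup id), w i := by
  apply Finset.prod_nbij (i := predC C)
  · intro a ha
    rw [Finset.mem_erase] at ha ⊢
    have ha1 : 1 < a := lt_of_le_of_ne (hpos a ha.2) (Ne.symm ha.1)
    have h := predC_mem h1C ha1
    have haM : a ≤ C.sup id := Finset.le_sup (f := id) ha.2
    exact ⟨by omega, h.1⟩
  · intro a ha b hb hab
    have ha' := Finset.mem_erase.1 (Finset.mem_coe.1 ha)
    have hb' := Finset.mem_erase.1 (Finset.mem_coe.1 hb)
    have key : ∀ {x y : ℕ}, x ∈ C → x ≠ 1 → y ∈ C → x < y → predC C x ≠ predC C y := by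
      intro x y hx hx1 hy hxy
      have h1 := le_predC hx hxy
      have h2 := (predC_mem h1C (lt_of_le_of_ne (hpos x hx) (Ne.symm hx1))).2
      omega
    rcases lt_trichotomy a b with h | h | h
    · exact absurd hab (key ha'.2 ha'.1 hb'.2 h)
    · exact h
    · exact absurd hab.symm (key hb'.2 hb'.1 ha'.2 h)
  · intro d hd
    have hd' := Finset.mem_erase.1 (Finset.mem_coe.1 hd)
    have hdM : d < C.sup id := lt_of_le_of_ne (Finset.le_sup (f := id) hd'.2) hd'.1
    obtain ⟨c, hcC, hc2, hdc, hpc⟩ := exists_predC_inv h1C hd'.2 (hpos d hd'.2) hdM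
    exact ⟨c, Finset.mem_coe.2 (Finset.mem_erase.2 ⟨by omega, hcC⟩), hpc⟩
  · intro a _; rfl

lemma real_id (w s : ℕ → ℝ) (hspos : ∀ i, 1 ≤ i → 0 < s i)
    (n : ℕ) (hn : 1 ≤ n) (C : Finset ℕ) (hC : C ⊆ Finset.Icc 1 n) (h1C : 1 ∈ C) :
    (∏ m ∈ Finset.Icc 2 n, (if m ∈ C then w (predC C m) / s (m - 1) else 1))
        * (w (C.sup id) / s n)
      = ∏ i ∈ Finset.Icc 1 n, (if i ∈ C then w i / s i else s (i - 1) / s i) := by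
  have hMC : C.sup id ∈ C := sup_id_mem ⟨1, h1C⟩
  have hpos1 : ∀ x ∈ C, 1 ≤ x := fun x hx => (Finset.mem_Icc.1 (hC hx)).1
  have L1 : ∀ m ∈ Finset.Icc 2 n, (if m ∈ C then w (predC C m) / s (m - 1) else 1)
      = (if m ∈ C then w (predC C m) else s (m - 1)) / s (m - 1) := by
    intro m hm
    have hm' := Finset.mem_Icc.1 hm
    split_ifs with h
    · rfl
    · exact (div_self (hspos (m - 1) (by omega)).ne').symm
  have R1 : ∀ i ∈ Finset.Icc 1 n, (if i ∈ C then w i / s i else s (i - 1) / s i)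
      = (if i ∈ C then w i else s (i - 1)) / s i := by
    intro i _
    split_ifs <;> rfl
  rw [Finset.prod_congr rfl L1, Finset.prod_congr rfl R1,
    Finset.prod_div_distrib, Finset.prod_div_distrib, div_mul_div_comm]
  congr 1
  · rw [Finset.prod_ite, Finset.prod_ite]
    have e1 : (Finset.Icc 2 n).filter (fun m => m ∈ C) = C.erase 1 := by
      ext x
      simp only [Finset.mem_filter, Finset.mem_Icc, Finset.mem_erase]
      constructor
      · rintro ⟨⟨h2, _⟩, hc⟩; exact ⟨by omega, hc⟩
      · rintro ⟨h1, hc⟩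
        have h3 := Finset.mem_Icc.1 (hC hc)
        exact ⟨⟨by omega, h3.2⟩, hc⟩
    have e2 : (Finset.Icc 2 n).filter (fun m => ¬ m ∈ C)
        = (Finset.Icc 1 n).filter (fun m => ¬ m ∈ C) := by
      ext x
      simp only [Finset.mem_filter, Finset.mem_Icc]
      constructor
      · rintro ⟨⟨h2, hn'⟩, hc⟩; exact ⟨⟨by omega, hn'⟩, hc⟩
      · rintro ⟨⟨h1, hn'⟩, hc⟩
        refine ⟨⟨?_, hn'⟩, hc⟩
        rcases Nat.eq_or_lt_of_le h1 with h | h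
        · exact absurd h1C (h ▸ hc)
        · omega
    have e3 : (Finset.Icc 1 n).filter (fun m => m ∈ C) = C := by
      ext x
      simp only [Finset.mem_filter]
      exact ⟨fun h => h.2, fun h => ⟨hC h, h⟩⟩
    rw [e1, e2, e3, prod_predC w h1C hpos1, ← Finset.mul_prod_erase C w hMC]
    ring
  · exact prod_sub_one_mul s n hn

end prodid

section chainval

/-- the constrained summand for one coordinate -/
noncomputable def bAux (w s : ℕ → ℝ) (C : Finset ℕ) (m k : ℕ) : ℝ≥0∞ :=
  if (m ∈ C → k = predC C m) then ENNReal.ofReal (w k / s (m - 1)) else 0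

lemma inner_sum (w s : ℕ → ℝ) (hw : ∀ i, 1 ≤ i → 0 < w i)
    (hs : ∀ i, s i = ∑ j ∈ Finset.Icc 1 i, w j)
    (n : ℕ) (C : Finset ℕ) (hC : C ⊆ Finset.Icc 1 n) (h1C : 1 ∈ C) :
    (∑ g ∈ PP n, (if (∀ c ∈ C, 2 ≤ c → extP n g c = predC C c) then
        ∏ m ∈ Finset.Icc 2 n, ENNReal.ofReal (w (extP n g m) / s (m - 1)) else 0))
    = ∏ m ∈ Finset.Icc 2 n,
        (if m ∈ C then ENNReal.ofReal (w (predC C m) / s (m - 1)) else 1) := by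
  have hspos := s_pos w s hw hs
  have stepA : ∀ g ∈ PP n, (if (∀ c ∈ C, 2 ≤ c → extP n g c = predC C c) then
        ∏ m ∈ Finset.Icc 2 n, ENNReal.ofReal (w (extP n g m) / s (m - 1)) else 0)
      = ∏ m ∈ Finset.Icc 2 n, bAux w s C m (extP n g m) := by
    intro g hg
    by_cases hcond : ∀ c ∈ C, 2 ≤ c → extP n g c = predC C c
    · rw [if_pos hcond]
      refine Finset.prod_congr rfl fun m hm => ?_
      rw [bAux, if_pos]
      intro hmC
      exact hcond m hmC (Finset.mem_Icc.1 hm).1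
    · rw [if_neg hcond]
      push_neg at hcond
      obtain ⟨c, hcC, hc2, hne⟩ := hcond
      have hcIcc : c ∈ Finset.Icc 2 n := Finset.mem_Icc.2 ⟨hc2, (Finset.mem_Icc.1 (hC hcC)).2⟩
      refine (Finset.prod_eq_zero hcIcc ?_).symm
      rw [bAux, if_neg]
      intro himp
      exact hne (himp hcC)
  rw [Finset.sum_congr rfl stepA]
  have stepB : ∀ g ∈ PP n, ∏ m ∈ Finset.Icc 2 n, bAux w s C m (extP n g m)
      = ∏ x ∈ (Finset.Icc 2 n).attach, bAux w s C x.1 (g x.1 x.2) := by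
    intro g _
    rw [← Finset.prod_attach (s := Finset.Icc 2 n) (f := fun m => bAux w s C m (extP n g m))]
    exact Finset.prod_congr rfl fun x _ => by rw [extP_pos x.2]
  rw [Finset.sum_congr rfl stepB, PP, ← Finset.prod_sum]
  refine Finset.prod_congr rfl fun m hm => ?_
  have hm' := Finset.mem_Icc.1 hm
  by_cases hmC : m ∈ C
  · rw [if_pos hmC]
    have hpred := predC_mem h1C (show (1:ℕ) < m by omega)
    have hpred1 : 1 ≤ predC C m := (Finset.mem_Icc.1 (hC hpred.1)).1
    have hpredIcc : predC C m ∈ Finset.Icc 1 (m - 1) := Finset.mem_Icc.2 ⟨hpred1, by omega⟩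
    have h1 : ∀ k ∈ Finset.Icc 1 (m - 1), bAux w s C m k
        = (if k = predC C m then ENNReal.ofReal (w k / s (m - 1)) else 0) := by
      intro k _
      rw [bAux]
      simp [hmC]
    rw [Finset.sum_congr rfl h1,
      Finset.sum_ite_eq' (Finset.Icc 1 (m - 1)) (predC C m)
        (fun k => ENNReal.ofReal (w k / s (m - 1))), if_pos hpredIcc]
  · rw [if_neg hmC]
    have h1 : ∀ k ∈ Finset.Icc 1 (m - 1), bAux w s C m k
        = ENNReal.ofReal (w k / s (m - 1)) := by
      intro k _
      rw [bAux, if_pos (fun h => absurd h hmC)]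
    have hnn : ∀ k ∈ Finset.Icc 1 (m - 1), 0 ≤ w k / s (m - 1) := fun k hk =>
      div_nonneg (hw k (Finset.mem_Icc.1 hk).1).le (hspos (m - 1) (by omega)).le
    rw [Finset.sum_congr rfl h1, ← ENNReal.ofReal_sum_of_nonneg hnn, ← Finset.sum_div,
      ← hs (m - 1), div_self (hspos (m - 1) (by omega)).ne', ENNReal.ofReal_one]

lemma chainval (w s : ℕ → ℝ) (hw : ∀ i, 1 ≤ i → 0 < w i)
    (hs : ∀ i, s i = ∑ j ∈ Finset.Icc 1 i, w j)
    (n : ℕ) (hn : 1 ≤ n) (C : Finset ℕ) (hC : C ⊆ Finset.Icc 1 n) :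
    (∑ j ∈ Finset.Icc 1 n, ∑ g ∈ PP n,
      (if chainSet (extP n g) n j = C then
        (∏ m ∈ Finset.Icc 2 n, ENNReal.ofReal (w (extP n g m) / s (m - 1)))
          * ENNReal.ofReal (w j / s n) else 0))
    = ∏ i ∈ Finset.Icc 1 n,
        (if i ∈ C then ENNReal.ofReal (w i / s i) else ENNReal.ofReal (s (i - 1) / s i)) := by
  have hspos := s_pos w s hw hs
  have hsnn := s_nonneg w s hw hs
  by_cases h1C : 1 ∈ C
  swap
  · -- 1 ∉ C : both sides are zero
    rw [Finset.sum_eq_zero, (Finset.prod_eq_zero (Finset.mem_Icc.2 ⟨le_rfl, hn⟩ :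
        (1:ℕ) ∈ Finset.Icc 1 n) (by rw [if_neg h1C]; simp [s_zero w s hs]))]
    intro j hj
    refine Finset.sum_eq_zero fun g hg => ?_
    rw [if_neg]
    intro hEq
    have hj' := Finset.mem_Icc.1 hj
    have h1 : (1:ℕ) ∈ chainSet (extP n g) n j :=
      one_mem_chainSet (extP_neg (by simp)) (extP_prop hg) hn hj'.1 hj'.2
    rw [hEq] at h1
    exact h1C h1
  · have hCne : C.Nonempty := ⟨1, h1C⟩
    have hMC : C.sup id ∈ C := sup_id_mem hCne
    have hMIcc := Finset.mem_Icc.1 (hC hMC)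
    -- rewrite the chain condition
    have step1 : ∀ j ∈ Finset.Icc 1 n, ∀ g ∈ PP n,
        (if chainSet (extP n g) n j = C then
          (∏ m ∈ Finset.Icc 2 n, ENNReal.ofReal (w (extP n g m) / s (m - 1)))
            * ENNReal.ofReal (w j / s n) else 0)
        = (if j = C.sup id then
            (if (∀ c ∈ C, 2 ≤ c → extP n g c = predC C c) then
              (∏ m ∈ Finset.Icc 2 n, ENNReal.ofReal (w (extP n g m) / s (m - 1))) else 0)
              * ENNReal.ofReal (w j / s n) else 0) := by
      intro j hj g hg
      have hj' := Finset.mem_Icc.1 hj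
      have hiff := chain_eq_iff (extP_neg (by simp)) (extP_prop hg) hj'.1 hj'.2 hC h1C
      rw [if_congr hiff rfl rfl]
      by_cases h1 : j = C.sup id <;> by_cases h2 : ∀ c ∈ C, 2 ≤ c → extP n g c = predC C c <;>
        simp [h1, h2]
    rw [Finset.sum_congr rfl (fun j hj => Finset.sum_congr rfl (step1 j hj))]
    have step2 : ∀ j ∈ Finset.Icc 1 n,
        (∑ g ∈ PP n, (if j = C.sup id then
            (if (∀ c ∈ C, 2 ≤ c → extP n g c = predC C c) then
              (∏ m ∈ Finset.Icc 2 n, ENNReal.ofReal (w (extP n g m) / s (m - 1))) else 0)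
              * ENNReal.ofReal (w j / s n) else 0))
        = (if j = C.sup id then
            (∑ g ∈ PP n, (if (∀ c ∈ C, 2 ≤ c → extP n g c = predC C c) then
              (∏ m ∈ Finset.Icc 2 n, ENNReal.ofReal (w (extP n g m) / s (m - 1))) else 0))
              * ENNReal.ofReal (w j / s n) else 0) := by
      intro j _
      by_cases h1 : j = C.sup id
      · simp only [if_pos h1, Finset.sum_mul]
      · simp only [if_neg h1, Finset.sum_const_zero]
    rw [Finset.sum_congr rfl step2,
      Finset.sum_ite_eq' (Finset.Icc 1 n) (C.sup id),
      if_pos (Finset.mem_Icc.2 ⟨hMIcc.1, hMIcc.2⟩ : C.sup id ∈ Finset.Icc 1 n),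
      inner_sum w s hw hs n C hC h1C]
    -- now convert to reals
    have hnnL : ∀ m ∈ Finset.Icc 2 n, (0:ℝ) ≤ (if m ∈ C then w (predC C m) / s (m - 1) else 1) := by
      intro m hm
      split_ifs with h
      · have hm' := Finset.mem_Icc.1 hm
        have h2 := predC_mem h1C (show (1:ℕ) < m by omega)
        exact div_nonneg (hw _ ((Finset.mem_Icc.1 (hC h2.1)).1)).le (hsnn _)
      · exact zero_le_one
    have hnnR : ∀ i ∈ Finset.Icc 1 n,
        (0:ℝ) ≤ (if i ∈ C then w i / s i else s (i - 1) / s i) := by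
      intro i hi
      have hi' := Finset.mem_Icc.1 hi
      split_ifs with h
      · exact div_nonneg (hw i hi'.1).le (hsnn i)
      · exact div_nonneg (hsnn (i - 1)) (hsnn i)
    have convL : (∏ m ∈ Finset.Icc 2 n,
          (if m ∈ C then ENNReal.ofReal (w (predC C m) / s (m - 1)) else 1))
        = ENNReal.ofReal (∏ m ∈ Finset.Icc 2 n,
            (if m ∈ C then w (predC C m) / s (m - 1) else 1)) := by
      rw [ENNReal.ofReal_prod_of_nonneg hnnL]
      refine Finset.prod_congr rfl fun m hm => ?_
      split_ifs with h
      · rfl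
      · exact ENNReal.ofReal_one.symm
    have convR : (∏ i ∈ Finset.Icc 1 n,
          (if i ∈ C then ENNReal.ofReal (w i / s i) else ENNReal.ofReal (s (i - 1) / s i)))
        = ENNReal.ofReal (∏ i ∈ Finset.Icc 1 n,
            (if i ∈ C then w i / s i else s (i - 1) / s i)) := by
      rw [ENNReal.ofReal_prod_of_nonneg hnnR]
      refine Finset.prod_congr rfl fun i hi => ?_
      split_ifs with h <;> rfl
    rw [convL, convR, ← ENNReal.ofReal_mul (Finset.prod_nonneg hnnL),
      real_id w s hspos n hn C hC h1C]

end chainval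

lemma key {Ω : Type*} [MeasurableSpace Ω] (μ : Measure Ω)
    (w : ℕ → ℝ) (hw : ∀ i, 1 ≤ i → 0 < w i)
    (s : ℕ → ℝ) (hs : ∀ i, s i = ∑ j ∈ Finset.Icc 1 i, w j)
    (n : ℕ) (hn : 1 ≤ n)
    (par : ℕ → Ω → ℕ) (u : Ω → ℕ)
    (hmeas : ∀ m, Measurable (par m)) (humeas : Measurable u)
    (hpar1 : ∀ ω, par 1 ω = 1)
    (hparlt : ∀ m, 2 ≤ m → m ≤ n → ∀ ω, 1 ≤ par m ω ∧ par m ω < m)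
    (hurange : ∀ ω, 1 ≤ u ω ∧ u ω ≤ n)
    (hlaw : ∀ π : ℕ → ℕ, (∀ m, 2 ≤ m → m ≤ n → 1 ≤ π m ∧ π m < m) →
      ∀ j, 1 ≤ j → j ≤ n →
        μ {ω | (∀ m ∈ Finset.Icc 2 n, par m ω = π m) ∧ u ω = j}
          = (∏ m ∈ Finset.Icc 2 n, ENNReal.ofReal (w (π m) / s (m - 1)))
            * ENNReal.ofReal (w j / s n))
    (S : Finset ℕ) (hS : S ⊆ Finset.Icc 1 n) :
    μ {ω | ∀ i ∈ S, isAnc (fun m => par m ω) i (u ω)}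
      = ∏ i ∈ S, ENNReal.ofReal (w i / s i) := by
  have hspos := s_pos w s hw hs
  have hsnn := s_nonneg w s hw hs
  -- replace the raw parent map by the normalized one
  have hraw : ∀ (ω : Ω) i, isAnc (fun m => par m ω) i (u ω) ↔ isAnc (npF n par ω) i (u ω) := by
    intro ω i
    have h1 : npF n par ω 1 = 1 := by simp [npF]
    have h2 : ∀ m, 2 ≤ m → m ≤ n → 1 ≤ npF n par ω m ∧ npF n par ω m < m := by
      intro m hm2 hmn
      have hm : m ∈ Finset.Icc 2 n := Finset.mem_Icc.2 ⟨hm2, hmn⟩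
      simp only [npF, if_pos hm]
      exact hparlt m hm2 hmn ω
    have hagree : ∀ x, 1 ≤ x → x ≤ n → (fun m => par m ω) x = npF n par ω x := by
      intro x hx1 hxn
      by_cases hx : x ∈ Finset.Icc 2 n
      · simp only [npF, if_pos hx]
      · have hx1' : x = 1 := by rw [Finset.mem_Icc] at hx; omega
        rw [hx1']
        simp only [npF]
        rw [if_neg (by simp), hpar1 ω]
    have hit := iter_congr h1 h2 hagree (hurange ω).1 (hurange ω).2
    exact exists_congr fun k => by rw [hit k]
  have hset : {ω | ∀ i ∈ S, isAnc (fun m => par m ω) i (u ω)}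
      = {ω | (fun p j => ∀ i ∈ S, isAnc p i j) (npF n par ω) (u ω)} := by
    ext ω
    simp only [Set.mem_setOf_eq]
    exact forall₂_congr fun i _ => hraw ω i
  have hd := decomp μ n par u hmeas humeas hparlt hurange
    (fun p j => ∀ i ∈ S, isAnc p i j)
    (fun g j => (∏ m ∈ Finset.Icc 2 n, ENNReal.ofReal (w (extP n g m) / s (m - 1)))
      * ENNReal.ofReal (w j / s n))
    (fun g hg j hj1 hjn => hlaw (extP n g) (extP_prop hg) j hj1 hjn)
  rw [hset, hd]
  beta_reduce
  -- now a pure finite-sum computation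
  have hscond : ∀ j ∈ Finset.Icc 1 n, ∀ g ∈ PP n,
      ((∀ i ∈ S, isAnc (extP n g) i j) ↔ S ⊆ chainSet (extP n g) n j) := by
    intro j hj g hg
    constructor
    · intro h i hi
      exact Finset.mem_filter.2 ⟨hS hi, h i hi⟩
    · intro h i hi
      exact (Finset.mem_filter.1 (h hi)).2
  have hins : ∀ j ∈ Finset.Icc 1 n, ∀ g ∈ PP n,
      (@ite _ (∀ i ∈ S, isAnc (extP n g) i j) (Classical.propDecidable _)
        ((∏ m ∈ Finset.Icc 2 n, ENNReal.ofReal (w (extP n g m) / s (m - 1)))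
          * ENNReal.ofReal (w j / s n)) 0)
      = ∑ C ∈ (Finset.Icc 1 n).powerset,
          (if chainSet (extP n g) n j = C then (if S ⊆ C then
            (∏ m ∈ Finset.Icc 2 n, ENNReal.ofReal (w (extP n g m) / s (m - 1)))
              * ENNReal.ofReal (w j / s n) else 0) else 0) := by
    intro j hj g hg
    have hpow : chainSet (extP n g) n j ∈ (Finset.Icc 1 n).powerset :=
      Finset.mem_powerset.2 (Finset.filter_subset _ _)
    rw [Finset.sum_ite_eq, if_pos hpow]
    by_cases hc : ∀ i ∈ S, isAnc (extP n g) i j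
    · rw [if_pos hc, if_pos ((hscond j hj g hg).1 hc)]
    · rw [if_neg hc, if_neg (fun hsub => hc ((hscond j hj g hg).2 hsub))]
  refine Eq.trans (Finset.sum_congr rfl fun j hj => Finset.sum_congr rfl (hins j hj)) ?_
  refine Eq.trans (Finset.sum_congr rfl fun j (hj : j ∈ Finset.Icc 1 n) =>
    Finset.sum_comm (s := PP n) (t := (Finset.Icc 1 n).powerset)) ?_
  refine Eq.trans Finset.sum_comm ?_
  have hpull : ∀ C ∈ (Finset.Icc 1 n).powerset,
      (∑ j ∈ Finset.Icc 1 n, ∑ g ∈ PP n,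
        (if chainSet (extP n g) n j = C then (if S ⊆ C then
          (∏ m ∈ Finset.Icc 2 n, ENNReal.ofReal (w (extP n g m) / s (m - 1)))
            * ENNReal.ofReal (w j / s n) else 0) else 0))
      = (if S ⊆ C then
          (∑ j ∈ Finset.Icc 1 n, ∑ g ∈ PP n,
            (if chainSet (extP n g) n j = C then
              (∏ m ∈ Finset.Icc 2 n, ENNReal.ofReal (w (extP n g m) / s (m - 1)))
                * ENNReal.ofReal (w j / s n) else 0)) else 0) := by
    intro C _
    by_cases hSC : S ⊆ C
    · simp only [if_pos hSC]
    · simp [hSC]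
  rw [Finset.sum_congr rfl hpull]
  have hcv : ∀ C ∈ (Finset.Icc 1 n).powerset,
      (if S ⊆ C then
          (∑ j ∈ Finset.Icc 1 n, ∑ g ∈ PP n,
            (if chainSet (extP n g) n j = C then
              (∏ m ∈ Finset.Icc 2 n, ENNReal.ofReal (w (extP n g m) / s (m - 1)))
                * ENNReal.ofReal (w j / s n) else 0)) else 0)
      = (if S ⊆ C then
          (∏ i ∈ Finset.Icc 1 n, (if i ∈ C then ENNReal.ofReal (w i / s i)
            else ENNReal.ofReal (s (i - 1) / s i))) else 0) := by
    intro C hCpow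
    by_cases hSC : S ⊆ C
    · rw [if_pos hSC, if_pos hSC, chainval w s hw hs n hn C (Finset.mem_powerset.1 hCpow)]
    · rw [if_neg hSC, if_neg hSC]
  rw [Finset.sum_congr rfl hcv, ← Finset.sum_filter]
  -- reindex by the free part t = C \ S
  have hbij : ∑ C ∈ ((Finset.Icc 1 n).powerset.filter (fun C => S ⊆ C)),
        (∏ i ∈ Finset.Icc 1 n, (if i ∈ C then ENNReal.ofReal (w i / s i)
          else ENNReal.ofReal (s (i - 1) / s i)))
      = ∑ t ∈ (Finset.Icc 1 n \ S).powerset,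
        (∏ i ∈ Finset.Icc 1 n, (if i ∈ S ∪ t then ENNReal.ofReal (w i / s i)
          else ENNReal.ofReal (s (i - 1) / s i))) := by
    apply Finset.sum_nbij' (i := fun C => C \ S) (j := fun t => S ∪ t)
    · intro C hCf
      rw [Finset.mem_filter, Finset.mem_powerset] at hCf
      exact Finset.mem_powerset.2 (Finset.sdiff_subset_sdiff hCf.1 Finset.Subset.rfl)
    · intro t ht
      rw [Finset.mem_powerset] at ht
      rw [Finset.mem_filter, Finset.mem_powerset]
      exact ⟨Finset.union_subset hS (ht.trans (Finset.sdiff_subset)),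
        Finset.subset_union_left⟩
    · intro C hCf
      rw [Finset.mem_filter] at hCf
      exact Finset.union_sdiff_of_subset hCf.2
    · intro t ht
      rw [Finset.mem_powerset] at ht
      have hdisj : Disjoint S t :=
        Finset.disjoint_left.2 fun a haS hat => (Finset.mem_sdiff.1 (ht hat)).2 haS
      exact Finset.union_sdiff_cancel_left hdisj
    · intro C hCf
      rw [Finset.mem_filter] at hCf
      rw [Finset.union_sdiff_of_subset hCf.2]
  rw [hbij]
  have hsplit : ∀ t ∈ (Finset.Icc 1 n \ S).powerset,
      (∏ i ∈ Finset.Icc 1 n, (if i ∈ S ∪ t then ENNReal.ofReal (w i / s i)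
          else ENNReal.ofReal (s (i - 1) / s i)))
      = (∏ i ∈ Finset.Icc 1 n \ S, (if i ∈ t then ENNReal.ofReal (w i / s i)
          else ENNReal.ofReal (s (i - 1) / s i)))
        * (∏ i ∈ S, ENNReal.ofReal (w i / s i)) := by
    intro t ht
    rw [← Finset.prod_sdiff hS]
    congr 1
    · refine Finset.prod_congr rfl fun i hi => ?_
      have hiS := (Finset.mem_sdiff.1 hi).2
      by_cases hit : i ∈ t <;> simp [Finset.mem_union, hiS, hit]
    · refine Finset.prod_congr rfl fun i hi => ?_
      rw [if_pos (Finset.mem_union_left _ hi)]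
  rw [Finset.sum_congr rfl hsplit, ← Finset.sum_mul]
  have hprodadd : ∑ t ∈ (Finset.Icc 1 n \ S).powerset,
      (∏ i ∈ Finset.Icc 1 n \ S, (if i ∈ t then ENNReal.ofReal (w i / s i)
        else ENNReal.ofReal (s (i - 1) / s i)))
      = ∏ i ∈ Finset.Icc 1 n \ S, (ENNReal.ofReal (w i / s i)
          + ENNReal.ofReal (s (i - 1) / s i)) := by
    rw [Finset.prod_add]
    refine Finset.sum_congr rfl fun t ht => ?_
    rw [Finset.mem_powerset] at ht
    rw [← Finset.prod_sdiff ht, mul_comm]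
    congr 1
    · exact Finset.prod_congr rfl fun i hi => if_pos hi
    · exact Finset.prod_congr rfl fun i hi => if_neg (Finset.mem_sdiff.1 hi).2
  have hone : ∀ i ∈ Finset.Icc 1 n \ S, (ENNReal.ofReal (w i / s i)
      + ENNReal.ofReal (s (i - 1) / s i)) = 1 := by
    intro i hi
    have hi1 : 1 ≤ i := (Finset.mem_Icc.1 (Finset.mem_sdiff.1 hi).1).1
    rw [← ENNReal.ofReal_add (div_nonneg (hw i hi1).le (hsnn i))
      (div_nonneg (hsnn (i - 1)) (hsnn i)), ← add_div,
      show w i + s (i - 1) = s i from by rw [add_comm]; exact (s_succ w s hs i hi1).symm,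
      div_self (hspos i hi1).ne', ENNReal.ofReal_one]
  rw [hprodadd, Finset.prod_congr rfl hone, Finset.prod_const_one, one_mul]

end WrrtAux

/-- **Ancestors of a weight-proportional node are independent Bernoullis.**
`par` is the (random) parent map of the `n`-node `w`-WRRT (`par 1 = 1` by convention) and `u`
is a weight-proportional random node; their joint law is the WRRT law times `w j / s n`.
Then the indicators `(1_{ν_i ⪯ u})_{1 ≤ i ≤ n}` are independent Bernoulli random variables
with parameters `w i / s i`. -/
theorem wrrt_ancestors_indep_bernoulli
    {Ω : Type*} [MeasurableSpace Ω] (μ : Measure Ω) [IsProbabilityMeasure μ]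
    (w : ℕ → ℝ) (hw : ∀ i, 1 ≤ i → 0 < w i)
    (s : ℕ → ℝ) (hs : ∀ i, s i = ∑ j ∈ Finset.Icc 1 i, w j)
    (n : ℕ) (hn : 1 ≤ n)
    (par : ℕ → Ω → ℕ) (u : Ω → ℕ)
    (hmeas : ∀ m, Measurable (par m)) (humeas : Measurable u)
    (hpar1 : ∀ ω, par 1 ω = 1)
    (hparlt : ∀ m, 2 ≤ m → m ≤ n → ∀ ω, 1 ≤ par m ω ∧ par m ω < m)
    (hurange : ∀ ω, 1 ≤ u ω ∧ u ω ≤ n)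
    (hlaw : ∀ π : ℕ → ℕ, (∀ m, 2 ≤ m → m ≤ n → 1 ≤ π m ∧ π m < m) →
      ∀ j, 1 ≤ j → j ≤ n →
        μ {ω | (∀ m ∈ Finset.Icc 2 n, par m ω = π m) ∧ u ω = j}
          = (∏ m ∈ Finset.Icc 2 n, ENNReal.ofReal (w (π m) / s (m - 1)))
            * ENNReal.ofReal (w j / s n)) :
    iIndepFun (m := fun _ : Fin n => (inferInstance : MeasurableSpace ℕ))
      (fun i ω => if isAnc (fun m => par m ω) (i.1 + 1) (u ω) then (1 : ℕ) else 0) μ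
    ∧ ∀ i, 1 ≤ i → i ≤ n →
        μ {ω | isAnc (fun m => par m ω) i (u ω)} = ENNReal.ofReal (w i / s i) := by
  constructor
  · have hEmeas : ∀ i : Fin n,
        MeasurableSet {ω | isAnc (fun m => par m ω) (i.1 + 1) (u ω)} := fun i =>
      WrrtAux.measurable_anc par u hmeas humeas (i.1 + 1)
    have hsingle : ∀ i : Fin n, μ {ω | isAnc (fun m => par m ω) (i.1 + 1) (u ω)}
        = ENNReal.ofReal (w (i.1 + 1) / s (i.1 + 1)) := by
      intro i
      have hk := WrrtAux.key μ w hw s hs n hn par u hmeas humeas hpar1 hparlt hurange hlaw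
        {i.1 + 1} (Finset.singleton_subset_iff.2
          (Finset.mem_Icc.2 ⟨by omega, by have := i.2; omega⟩))
      simpa using hk
    have hind : iIndepSet
        (fun i : Fin n => {ω | isAnc (fun m => par m ω) (i.1 + 1) (u ω)}) μ := by
      rw [iIndepSet_iff_meas_biInter hEmeas]
      intro F
      have h1 : (⋂ i ∈ F, {ω | isAnc (fun m => par m ω) (i.1 + 1) (u ω)})
          = {ω | ∀ i' ∈ F.image (fun i : Fin n => i.1 + 1),
              isAnc (fun m => par m ω) i' (u ω)} := by
        ext ω
        simp only [Set.mem_iInter, Set.mem_setOf_eq, Finset.mem_image]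
        constructor
        · rintro h i' ⟨i, hi, rfl⟩
          exact h i hi
        · intro h i hi
          exact h _ ⟨i, hi, rfl⟩
      rw [h1, WrrtAux.key μ w hw s hs n hn par u hmeas humeas hpar1 hparlt hurange hlaw
        (F.image (fun i : Fin n => i.1 + 1)) ?_]
      · rw [Finset.prod_image (fun a _ b _ h => Fin.ext (by omega))]
        exact Finset.prod_congr rfl fun i _ => (hsingle i).symm
      · intro i' hi'
        obtain ⟨i, _, rfl⟩ := Finset.mem_image.1 hi'
        exact Finset.mem_Icc.2 ⟨by omega, by have := i.2; omega⟩
    have hfun : (fun (i : Fin n) (ω : Ω) =>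
        if isAnc (fun m => par m ω) (i.1 + 1) (u ω) then (1:ℕ) else 0)
        = fun i : Fin n =>
            ({ω | isAnc (fun m => par m ω) (i.1 + 1) (u ω)}).indicator fun _ => 1 := by
      funext i ω
      by_cases h : isAnc (fun m => par m ω) (i.1 + 1) (u ω) <;>
        simp [Set.indicator_apply, Set.mem_setOf_eq, h]
    rw [hfun]
    exact hind.iIndepFun_indicator
  · intro i hi1 hin
    have hk := WrrtAux.key μ w hw s hs n hn par u hmeas humeas hpar1 hparlt hurange hlaw
      {i} (Finset.singleton_subset_iff.2 (Finset.mem_Icc.2 ⟨hi1, hin⟩))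
    simpa using hk
end

section
/- Let w = (w_i)_{i≥1} be positive reals with partial sums s_i. For the n-node w-WRRT with weight-proportionally chosen node u_n, the height |u_n| of u_n satisfies: |u_n| + 1 is distributed as a sum of n independent Bernoulli random variables with parameters w_1/s_1, w_2/s_2, …, w_n/s_n. Consequently E[|u_n|] + 1 = Σ_{i=1}^n w_i/s_i and Var(|u_n|) = Σ_{i=1}^n (w_i/s_i)(1 − w_i/s_i). -/
open MeasureTheory ProbabilityTheory Finset
open scoped Classical

lemma wrrt_aux_powerset_sum (p q : ℕ → ℝ) (A B : Finset ℕ) (hBA : B ⊆ A) :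
    ∑ S ∈ A.powerset.filter (fun S => B ⊆ S), (∏ i ∈ S, p i) * ∏ i ∈ A \ S, q i
      = (∏ i ∈ B, p i) * ∏ i ∈ A \ B, (p i + q i) := by
  rw [Finset.prod_add, Finset.mul_sum]
  refine Finset.sum_nbij' (fun S => S \ B) (fun T => T ∪ B) ?_ ?_ ?_ ?_ ?_
  · intro S hS
    simp only [mem_filter, mem_powerset] at hS
    simp only [mem_powerset]
    exact (sdiff_subset_sdiff hS.1 (Finset.Subset.refl _))
  · intro T hT
    simp only [mem_powerset] at hT
    simp only [mem_filter, mem_powerset]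
    exact ⟨Finset.union_subset (hT.trans (sdiff_subset)) hBA, Finset.subset_union_right⟩
  · intro S hS
    simp only [mem_filter, mem_powerset] at hS
    exact Finset.sdiff_union_of_subset hS.2
  · intro T hT
    simp only [mem_powerset] at hT
    have : Disjoint T B := Finset.disjoint_of_subset_left hT Finset.sdiff_disjoint
    show (T ∪ B) \ B = T
    rw [Finset.union_sdiff_cancel_right this]
  · intro S hS
    simp only [mem_filter, mem_powerset] at hS
    have hAB : (A \ B) \ (S \ B) = A \ S := by
      ext i
      simp only [mem_sdiff, not_and, not_not]
      constructor
      · rintro ⟨⟨hiA, hiB⟩, hi⟩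
        exact ⟨hiA, fun hiS => hiB (hi hiS)⟩
      · rintro ⟨hiA, hiS⟩
        exact ⟨⟨hiA, fun hiB => hiS (hS.2 hiB)⟩, fun hiS' => absurd hiS' hiS⟩
    have hprod : (∏ i ∈ S \ B, p i) * ∏ i ∈ B, p i = ∏ i ∈ S, p i :=
      Finset.prod_sdiff hS.2
    show _ = (∏ i ∈ B, p i) * ((∏ i ∈ S \ B, p i) * ∏ i ∈ (A \ B) \ (S \ B), q i)
    rw [hAB, ← hprod]
    ring


noncomputable def wrrtExt (n : ℕ) (f : ∀ m ∈ Finset.Icc 2 n, ℕ) : ℕ → ℕ :=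
  fun m => if h : m ∈ Finset.Icc 2 n then f m h else 1

noncomputable def wrrtAtoms (n : ℕ) (B : ℕ → Finset ℕ) : Finset (ℕ → ℕ) :=
  ((Finset.Icc 2 n).pi (fun m => B m)).image (wrrtExt n)

lemma wrrtExt_injOn (n : ℕ) (B : ℕ → Finset ℕ) : Set.InjOn (wrrtExt n)
    ((Finset.Icc 2 n).pi (fun m => B m)) := by
  intro f hf g hg hfg
  funext m hm
  have := congrFun hfg m
  simp only [wrrtExt] at this
  rwa [dif_pos hm, dif_pos hm] at this

lemma mem_wrrtAtoms (n : ℕ) (B : ℕ → Finset ℕ) (π : ℕ → ℕ) :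
    π ∈ wrrtAtoms n B ↔
      (∀ m ∈ Finset.Icc 2 n, π m ∈ B m) ∧ ∀ m, m ∉ Finset.Icc 2 n → π m = 1 := by
  constructor
  · rintro hπ
    simp only [wrrtAtoms, mem_image] at hπ
    obtain ⟨f, hf, rfl⟩ := hπ
    simp only [Finset.mem_pi] at hf
    constructor
    · intro m hm
      simp only [wrrtExt]
      rw [dif_pos hm]
      exact hf m hm
    · intro m hm
      simp only [wrrtExt]
      rw [dif_neg hm]
  · rintro ⟨h1, h2⟩
    simp only [wrrtAtoms, mem_image]
    refine ⟨fun m _ => π m, ?_, ?_⟩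
    · simp only [Finset.mem_pi]
      exact h1
    · funext m
      by_cases hm : m ∈ Finset.Icc 2 n
      · simp only [wrrtExt]
        rw [dif_pos hm]
      · simp only [wrrtExt]
        rw [dif_neg hm, h2 m hm]

lemma sum_wrrtAtoms {M : Type*} [CommSemiring M] (n : ℕ) (B : ℕ → Finset ℕ)
    (g : ℕ → ℕ → M) :
    ∑ π ∈ wrrtAtoms n B, ∏ m ∈ Finset.Icc 2 n, g m (π m)
      = ∏ m ∈ Finset.Icc 2 n, ∑ v ∈ B m, g m v := by
  rw [wrrtAtoms, Finset.sum_image (fun f hf g hg h => wrrtExt_injOn n B hf hg h)]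
  rw [Finset.prod_sum]
  apply Finset.sum_congr rfl
  intro f hf
  rw [← Finset.prod_attach (Finset.Icc 2 n) (fun m => g m (wrrtExt n f m))]
  apply Finset.prod_congr rfl
  intro x _
  congr 1
  simp only [wrrtExt]
  rw [dif_pos x.2]


section Chain

variable (π : ℕ → ℕ) (n : ℕ)
variable (h1 : π 1 = 1) (hlt : ∀ m, 2 ≤ m → m ≤ n → 1 ≤ π m ∧ π m < m)

include h1 hlt

/-- one parent step stays in range and does not increase -/
lemma wrrt_step : ∀ b, 1 ≤ b → b ≤ n → (1 ≤ π b ∧ π b ≤ n) ∧ π b ≤ b := by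
  intro b hb1 hbn
  rcases eq_or_lt_of_le hb1 with h | h
  · subst h
    rw [h1]
    exact ⟨⟨le_refl _, hbn⟩, le_refl _⟩
  · have h2 : 2 ≤ b := h
    obtain ⟨ha, hb⟩ := hlt b h2 hbn
    exact ⟨⟨ha, le_trans (le_of_lt hb) hbn⟩, le_of_lt hb⟩

lemma wrrt_iter : ∀ k, ∀ b, 1 ≤ b → b ≤ n →
    (1 ≤ π^[k] b ∧ π^[k] b ≤ n) ∧ π^[k] b ≤ b := by
  intro k
  induction k with
  | zero => intro b hb1 hbn; exact ⟨⟨hb1, hbn⟩, le_refl b⟩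
  | succ k ih =>
    intro b hb1 hbn
    have hb := wrrt_step π n h1 hlt b hb1 hbn
    have := ih (π b) hb.1.1 hb.1.2
    rw [Function.iterate_succ_apply]
    exact ⟨this.1, le_trans this.2 hb.2⟩

lemma wrrt_iter_anti : ∀ k l b, 1 ≤ b → b ≤ n → k ≤ l → π^[l] b ≤ π^[k] b := by
  intro k l b hb1 hbn hkl
  have hk := wrrt_iter π n h1 hlt k b hb1 hbn
  have := wrrt_iter π n h1 hlt (l - k) (π^[k] b) hk.1.1 hk.1.2
  calc π^[l] b = π^[l - k] (π^[k] b) := by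
        rw [← Function.iterate_add_apply]
        congr 1
        omega
    _ ≤ π^[k] b := this.2

omit h1 in
lemma wrrt_reach_one : ∀ b, 1 ≤ b → b ≤ n → ∃ k, π^[k] b = 1 := by
  intro b
  induction b using Nat.strong_induction_on with
  | _ b ih =>
    intro hb1 hbn
    rcases eq_or_lt_of_le hb1 with h | h
    · exact ⟨0, h.symm⟩
    · have h2 : 2 ≤ b := h
      obtain ⟨ha, hb⟩ := hlt b h2 hbn
      obtain ⟨k, hk⟩ := ih (π b) hb ha (le_trans (le_of_lt hb) hbn)
      exact ⟨k + 1, by rw [Function.iterate_succ_apply]; exact hk⟩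

end Chain

section Chain2

variable (π : ℕ → ℕ) (n : ℕ)
variable (h1 : π 1 = 1) (hlt : ∀ m, 2 ≤ m → m ≤ n → 1 ≤ π m ∧ π m < m)

include h1 hlt

lemma wrrt_chain_main (S : Finset ℕ) (hS : S ⊆ Finset.Icc 1 n) (h1S : 1 ∈ S)
    (j : ℕ) (hjS : j ∈ S) (hjmax : ∀ b ∈ S, b ≤ j)
    (pred : ℕ → ℕ)
    (hpm : ∀ a ∈ S, 2 ≤ a → pred a ∈ S ∧ pred a < a ∧ ∀ b ∈ S, b < a → b ≤ pred a)
    (j' : ℕ) (hj'1 : 1 ≤ j') (hj'n : j' ≤ n) :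
    (Finset.Icc 1 n).filter (fun i => ∃ k, π^[k] j' = i) = S ↔
      (j' = j ∧ ∀ a ∈ S, 2 ≤ a → π a = pred a) := by
  have hSmem : ∀ b ∈ S, 1 ≤ b ∧ b ≤ n := by
    intro b hb
    simpa [Finset.mem_Icc] using hS hb
  constructor
  · intro hfil
    have hiter_mem : ∀ k, π^[k] j' ∈ S := by
      intro k
      rw [← hfil]
      simp only [Finset.mem_filter, Finset.mem_Icc]
      exact ⟨⟨(wrrt_iter π n h1 hlt k j' hj'1 hj'n).1.1,
        (wrrt_iter π n h1 hlt k j' hj'1 hj'n).1.2⟩, k, rfl⟩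
    have hj'S : j' ∈ S := by simpa using hiter_mem 0
    have hj'max : ∀ b ∈ S, b ≤ j' := by
      intro b hb
      rw [← hfil] at hb
      simp only [Finset.mem_filter] at hb
      obtain ⟨k, hk⟩ := hb.2
      rw [← hk]
      exact (wrrt_iter π n h1 hlt k j' hj'1 hj'n).2
    have hj'j : j' = j := le_antisymm (hjmax j' hj'S) (hj'max j hjS)
    refine ⟨hj'j, ?_⟩
    intro a haS ha2
    have han : a ≤ n := (hSmem a haS).2
    obtain ⟨k, hk⟩ : ∃ k, π^[k] j' = a := by
      have := haS
      rw [← hfil] at this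
      exact (Finset.mem_filter.1 this).2
    have hπa_iter : π^[k+1] j' = π a := by
      rw [Function.iterate_succ_apply', hk]
    have hπaS : π a ∈ S := by rw [← hπa_iter]; exact hiter_mem (k+1)
    have hπa_lt : π a < a := (hlt a ha2 han).2
    obtain ⟨hpS, hplt, hpge⟩ := hpm a haS ha2
    refine le_antisymm (hpge (π a) hπaS hπa_lt) ?_
    -- pred a ≤ π a
    obtain ⟨l, hl⟩ : ∃ l, π^[l] j' = pred a := by
      have := hpS
      rw [← hfil] at this
      exact (Finset.mem_filter.1 this).2
    have hkl : k < l := by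
      by_contra hcon
      push_neg at hcon
      have := wrrt_iter_anti π n h1 hlt l k j' hj'1 hj'n hcon
      rw [hk, hl] at this
      omega
    have := wrrt_iter_anti π n h1 hlt (k+1) l j' hj'1 hj'n hkl
    rw [hl, hπa_iter] at this
    exact this
  · rintro ⟨rfl, hpar⟩
    have hiterS : ∀ k, π^[k] j' ∈ S := by
      intro k
      induction k with
      | zero => simpa using hjS
      | succ k ih =>
        rw [Function.iterate_succ_apply']
        set b := π^[k] j' with hb
        rcases eq_or_lt_of_le (hSmem b ih).1 with hb1 | hb2
        · rw [← hb1, h1]; exact h1S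
        · rw [hpar b ih hb2]
          exact (hpm b ih hb2).1
    have hall : ∀ d, ∀ a ∈ S, j' - a ≤ d → ∃ k, π^[k] j' = a := by
      intro d
      induction d with
      | zero =>
        intro a haS hd
        have : a = j' := le_antisymm (hjmax a haS) (by omega)
        exact ⟨0, this.symm⟩
      | succ d ih =>
        intro a haS hd
        rcases eq_or_lt_of_le (hjmax a haS) with heq | hlt'
        · exact ⟨0, heq.symm⟩
        · have hTne : ((S.filter (fun b => a < b)).Nonempty) :=
            ⟨j', Finset.mem_filter.2 ⟨hjS, hlt'⟩⟩
          set c := (S.filter (fun b => a < b)).min' hTne with hc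
          have hcmem := Finset.min'_mem _ hTne
          rw [← hc] at hcmem
          have hcS : c ∈ S := (Finset.mem_filter.1 hcmem).1
          have hac : a < c := (Finset.mem_filter.1 hcmem).2
          have hc2 : 2 ≤ c := by
            have := (hSmem a haS).1
            omega
          obtain ⟨k, hk⟩ := ih c hcS (by
            have := hjmax c hcS
            omega)
          refine ⟨k + 1, ?_⟩
          rw [Function.iterate_succ_apply', hk, hpar c hcS hc2]
          obtain ⟨hpS, hplt, hpge⟩ := hpm c hcS hc2
          have hap : a ≤ pred c := hpge a haS hac
          rcases eq_or_lt_of_le hap with heq2 | hlt2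
          · exact heq2.symm
          · exfalso
            have : c ≤ pred c := Finset.min'_le _ _ (Finset.mem_filter.2 ⟨hpS, hlt2⟩)
            omega
    apply Finset.Subset.antisymm
    · intro i hi
      simp only [Finset.mem_filter] at hi
      obtain ⟨k, hk⟩ := hi.2
      rw [← hk]
      exact hiterS k
    · intro a haS
      simp only [Finset.mem_filter, Finset.mem_Icc]
      exact ⟨hSmem a haS, hall (j' - a) a haS le_rfl⟩

end Chain2

lemma wrrt_prod_s (s : ℕ → ℝ) : ∀ n, 1 ≤ n →
    (∏ m ∈ Finset.Icc 2 n, s (m-1)) * s n = ∏ i ∈ Finset.Icc 1 n, s i := by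
  intro n
  induction n with
  | zero => omega
  | succ n ih =>
    intro _
    by_cases h : n = 0
    · subst h
      rw [Finset.Icc_eq_empty (by omega), Finset.Icc_self]
      simp
    · have hn1 : 1 ≤ n := by omega
      rw [Finset.prod_Icc_succ_top (by omega : 2 ≤ n + 1),
          Finset.prod_Icc_succ_top (by omega : 1 ≤ n + 1)]
      have h2 : n + 1 - 1 = n := by omega
      rw [h2, ← ih hn1]

lemma wrrt_chain_prod (w : ℕ → ℝ) (hw : ∀ i, 1 ≤ i → 0 < w i)
    (s : ℕ → ℝ) (hspos : ∀ i, 1 ≤ i → 0 < s i)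
    (n : ℕ) (hn : 1 ≤ n)
    (S : Finset ℕ) (hS : S ⊆ Finset.Icc 1 n) (h1S : 1 ∈ S)
    (j : ℕ) (hjS : j ∈ S) (hjmax : ∀ b ∈ S, b ≤ j)
    (pred succ : ℕ → ℕ)
    (hpm : ∀ a ∈ S, 2 ≤ a → pred a ∈ S ∧ pred a < a ∧ ∀ b ∈ S, b < a → b ≤ pred a)
    (hsm : ∀ c ∈ S, c ≠ j → succ c ∈ S ∧ c < succ c ∧ ∀ b ∈ S, c < b → succ c ≤ b) :
    (∏ m ∈ S.erase 1, (w (pred m) / s (m-1))) * (w j / s n)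
      = (∏ i ∈ S, (w i / s i)) * ∏ i ∈ (Finset.Icc 1 n) \ S, (s (i-1) / s i) := by
  have hSmem : ∀ b ∈ S, 1 ≤ b ∧ b ≤ n := by
    intro b hb
    simpa [Finset.mem_Icc] using hS hb
  have hE2 : ∀ m ∈ S.erase 1, 2 ≤ m ∧ m ≤ n := by
    intro m hm
    have h1 := Finset.ne_of_mem_erase hm
    have h2 := hSmem m (Finset.mem_of_mem_erase hm)
    omega
  have hC2 : ∀ m ∈ (Finset.Icc 1 n) \ S, 2 ≤ m ∧ m ≤ n := by
    intro m hm
    rw [Finset.mem_sdiff, Finset.mem_Icc] at hm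
    have : m ≠ 1 := fun h => hm.2 (h ▸ h1S)
    omega
  -- the bijection : prod of w ∘ pred over S.erase 1 = prod of w over S.erase j
  have F1 : ∏ m ∈ S.erase 1, w (pred m) = ∏ i ∈ S.erase j, w i := by
    refine Finset.prod_nbij' pred succ ?_ ?_ ?_ ?_ ?_
    · intro a ha
      have h2 := hE2 a ha
      have haS := Finset.mem_of_mem_erase ha
      obtain ⟨hpS, hplt, _⟩ := hpm a haS h2.1
      refine Finset.mem_erase.2 ⟨?_, hpS⟩
      have := hjmax a haS
      omega
    · intro c hc
      have hcS := Finset.mem_of_mem_erase hc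
      have hcj := Finset.ne_of_mem_erase hc
      obtain ⟨hsS, hslt, _⟩ := hsm c hcS hcj
      refine Finset.mem_erase.2 ⟨?_, hsS⟩
      have := (hSmem c hcS).1
      omega
    · intro a ha
      have h2 := hE2 a ha
      have haS := Finset.mem_of_mem_erase ha
      obtain ⟨hpS, hplt, hpge⟩ := hpm a haS h2.1
      have hpj : pred a ≠ j := by
        have := hjmax a haS
        omega
      obtain ⟨hsS, hslt, hsle⟩ := hsm (pred a) hpS hpj
      have h1 : succ (pred a) ≤ a := hsle a haS hplt
      rcases eq_or_lt_of_le h1 with h | h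
      · exact h
      · exfalso
        have := hpge (succ (pred a)) hsS h
        omega
    · intro c hc
      have hcS := Finset.mem_of_mem_erase hc
      have hcj := Finset.ne_of_mem_erase hc
      obtain ⟨hsS, hslt, hsle⟩ := hsm c hcS hcj
      have hs2 : 2 ≤ succ c := by
        have := (hSmem c hcS).1
        omega
      obtain ⟨hpS, hplt, hpge⟩ := hpm (succ c) hsS hs2
      have h1 : c ≤ pred (succ c) := hpge c hcS hslt
      rcases eq_or_lt_of_le h1 with h | h
      · exact h.symm
      · exfalso
        have := hsle (pred (succ c)) hpS h
        omega
    · intro a _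
      rfl
  -- disjoint union (S.erase 1) ∪ (Icc 1 n \ S) = Icc 2 n
  have hunion : (S.erase 1) ∪ ((Finset.Icc 1 n) \ S) = Finset.Icc 2 n := by
    ext m
    simp only [Finset.mem_union, Finset.mem_erase, Finset.mem_sdiff, Finset.mem_Icc]
    constructor
    · rintro (⟨hm1, hmS⟩ | ⟨hm, hmS⟩)
      · have := hSmem m hmS
        omega
      · have : m ≠ 1 := fun h => hmS (h ▸ h1S)
        omega
    · intro hm
      by_cases hmS : m ∈ S
      · exact Or.inl ⟨by omega, hmS⟩
      · exact Or.inr ⟨⟨by omega, hm.2⟩, hmS⟩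
  have hdisj : Disjoint (S.erase 1) ((Finset.Icc 1 n) \ S) := by
    refine Finset.disjoint_left.2 ?_
    intro m hm hm'
    exact (Finset.mem_sdiff.1 hm').2 (Finset.mem_of_mem_erase hm)
  -- positivity
  have hbpos : 0 < ∏ m ∈ S.erase 1, s (m-1) :=
    Finset.prod_pos (fun m hm => hspos _ (by have := hE2 m hm; omega))
  have hsn : 0 < s n := hspos n hn
  have hSpos : 0 < ∏ i ∈ S, s i :=
    Finset.prod_pos (fun i hi => hspos _ (hSmem i hi).1)
  have hCpos : 0 < ∏ i ∈ (Finset.Icc 1 n) \ S, s i :=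
    Finset.prod_pos (fun i hi => hspos _ (by have := hC2 i hi; omega))
  -- rewrite products of quotients
  rw [Finset.prod_div_distrib, Finset.prod_div_distrib, Finset.prod_div_distrib,
      div_mul_div_comm, div_mul_div_comm, F1]
  rw [div_eq_div_iff (by positivity) (by positivity)]
  have e1 : (∏ i ∈ S.erase j, w i) * w j = ∏ i ∈ S, w i := by
    rw [mul_comm]
    exact Finset.mul_prod_erase S w hjS
  have e2 : (∏ i ∈ (Finset.Icc 1 n) \ S, s i) * ∏ i ∈ S, s i
      = ∏ i ∈ Finset.Icc 1 n, s i := Finset.prod_sdiff hS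
  have e3 : (∏ m ∈ S.erase 1, s (m-1)) * ∏ i ∈ (Finset.Icc 1 n) \ S, s (i-1)
      = ∏ m ∈ Finset.Icc 2 n, s (m-1) := by
    rw [← Finset.prod_union hdisj, hunion]
  calc ((∏ i ∈ S.erase j, w i) * w j) * ((∏ i ∈ S, s i) * ∏ i ∈ (Finset.Icc 1 n) \ S, s i)
      = ((∏ i ∈ S.erase j, w i) * w j) * ((∏ i ∈ (Finset.Icc 1 n) \ S, s i) * ∏ i ∈ S, s i) := by
        ring
    _ = (∏ i ∈ S, w i) * ∏ i ∈ Finset.Icc 1 n, s i := by rw [e1, e2]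
    _ = (∏ i ∈ S, w i) * ((∏ m ∈ Finset.Icc 2 n, s (m-1)) * s n) := by
        rw [wrrt_prod_s s n hn]
    _ = (∏ i ∈ S, w i) * (((∏ m ∈ S.erase 1, s (m-1)) * ∏ i ∈ (Finset.Icc 1 n) \ S, s (i-1)) * s n) := by
        rw [e3]
    _ = ((∏ i ∈ S, w i) * ∏ i ∈ (Finset.Icc 1 n) \ S, s (i-1)) * ((∏ m ∈ S.erase 1, s (m-1)) * s n) := by
        ring

/-- **Height of a weight-proportional node in the WRRT.**
With `par` the parent map of the `n`-node `w`-WRRT and `u` a weight-proportional random node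
(their joint law being the WRRT law times `w j / s n`), the height `|u|` of `u` satisfies:
`|u| + 1` is distributed as a sum of `n` independent Bernoulli random variables with
parameters `w i / s i`, `E[|u|] + 1 = ∑_{i=1}^n w i / s i`, and
`Var(|u|) = ∑_{i=1}^n (w i / s i)(1 - w i / s i)`. -/
theorem wrrt_height_of_weighted_node
    {Ω : Type*} [MeasurableSpace Ω] (μ : Measure Ω) [IsProbabilityMeasure μ]
    {Ω' : Type*} [MeasurableSpace Ω'] (μ' : Measure Ω') [IsProbabilityMeasure μ']
    (w : ℕ → ℝ) (hw : ∀ i, 1 ≤ i → 0 < w i)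
    (s : ℕ → ℝ) (hs : ∀ i, s i = ∑ j ∈ Finset.Icc 1 i, w j)
    (n : ℕ) (hn : 1 ≤ n)
    (par : ℕ → Ω → ℕ) (u : Ω → ℕ)
    (hmeas : ∀ m, Measurable (par m)) (humeas : Measurable u)
    (hpar1 : ∀ ω, par 1 ω = 1)
    (hparlt : ∀ m, 2 ≤ m → m ≤ n → ∀ ω, 1 ≤ par m ω ∧ par m ω < m)
    (hurange : ∀ ω, 1 ≤ u ω ∧ u ω ≤ n)
    (hlaw : ∀ π : ℕ → ℕ, (∀ m, 2 ≤ m → m ≤ n → 1 ≤ π m ∧ π m < m) →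
      ∀ j, 1 ≤ j → j ≤ n →
        μ {ω | (∀ m ∈ Finset.Icc 2 n, par m ω = π m) ∧ u ω = j}
          = (∏ m ∈ Finset.Icc 2 n, ENNReal.ofReal (w (π m) / s (m - 1)))
            * ENNReal.ofReal (w j / s n))
    -- the height of `u`: (number of non-strict ancestors of `u`) minus one
    (H : Ω → ℕ)
    (hH : ∀ ω, H ω =
      ((Finset.Icc 1 n).filter (fun i => isAnc (fun m => par m ω) i (u ω))).card - 1)
    -- an auxiliary family of `n` independent Bernoulli variables with parameters `w i / s i`
    (β : ℕ → Ω' → ℕ)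
    (hβmeas : ∀ i, Measurable (β i))
    (hβindep : iIndepFun β μ')
    (hβval : ∀ i ω', β i ω' ≤ 1)
    (hβlaw : ∀ i, 1 ≤ i → i ≤ n → μ' {ω' | β i ω' = 1} = ENNReal.ofReal (w i / s i)) :
    Measure.map (fun ω => H ω + 1) μ
        = Measure.map (fun ω' => ∑ i ∈ Finset.Icc 1 n, β i ω') μ'
    ∧ (∫ ω, (H ω : ℝ) ∂μ) + 1 = ∑ i ∈ Finset.Icc 1 n, w i / s i
    ∧ ProbabilityTheory.variance (fun ω => (H ω : ℝ)) μ
        = ∑ i ∈ Finset.Icc 1 n, (w i / s i) * (1 - w i / s i) := by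
  classical
  set A := Finset.Icc 1 n with hA
  set p : ℕ → ℝ := fun i => w i / s i with hp
  set q : ℕ → ℝ := fun i => s (i-1) / s i with hq
  -- basic facts on s, p, q
  have hs0 : s 0 = 0 := by rw [hs]; simp
  have hspos : ∀ i, 1 ≤ i → 0 < s i := by
    intro i hi
    rw [hs]
    apply Finset.sum_pos
    · intro j hj
      exact hw j (Finset.mem_Icc.1 hj).1
    · exact ⟨1, Finset.mem_Icc.2 ⟨le_refl 1, hi⟩⟩
  have hsnonneg : ∀ i, 0 ≤ s i := by
    intro i
    rcases Nat.eq_zero_or_pos i with h | h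
    · rw [h, hs0]
    · exact le_of_lt (hspos i h)
  have hsrec : ∀ i, 1 ≤ i → s i = s (i-1) + w i := by
    intro i hi
    obtain ⟨k, rfl⟩ : ∃ k, i = k + 1 := ⟨i - 1, by omega⟩
    rw [hs, hs, Finset.sum_Icc_succ_top (by omega)]
    simp
  have hppos : ∀ i, 1 ≤ i → 0 < p i := fun i hi => div_pos (hw i hi) (hspos i hi)
  have hqnonneg : ∀ i, 1 ≤ i → 0 ≤ q i := fun i hi =>
    div_nonneg (hsnonneg (i-1)) (le_of_lt (hspos i hi))
  have hpq : ∀ i, 1 ≤ i → p i + q i = 1 := by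
    intro i hi
    have h1 := hspos i hi
    have h2 := hsrec i hi
    rw [hp, hq]
    field_simp
    linarith
  have hq1 : q 1 = 0 := by
    rw [hq]
    simp [hs0]
  have hcardA : A.card = n := by rw [hA, Nat.card_Icc]; omega
  -- the ancestor set
  set D : Ω → Finset ℕ := fun ω => A.filter (fun i => isAnc (fun m => par m ω) i (u ω))
    with hD
  have hchainhyp : ∀ ω : Ω, ∀ m, 2 ≤ m → m ≤ n → 1 ≤ par m ω ∧ par m ω < m :=
    fun ω m h2 hn' => hparlt m h2 hn' ω
  have huA : ∀ ω, u ω ∈ A := fun ω => Finset.mem_Icc.2 ⟨(hurange ω).1, (hurange ω).2⟩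
  have huD : ∀ ω, u ω ∈ D ω := fun ω => Finset.mem_filter.2 ⟨huA ω, ⟨0, rfl⟩⟩
  have h1D : ∀ ω, 1 ∈ D ω := by
    intro ω
    refine Finset.mem_filter.2 ⟨Finset.mem_Icc.2 ⟨le_refl 1, hn⟩, ?_⟩
    exact wrrt_reach_one (fun m => par m ω) n (hchainhyp ω) (u ω) (hurange ω).1 (hurange ω).2
  have hDsub : ∀ ω, D ω ⊆ A := fun ω => Finset.filter_subset _ _
  have hcard1 : ∀ ω, 1 ≤ (D ω).card := fun ω => Finset.card_pos.2 ⟨u ω, huD ω⟩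
  have hcardn : ∀ ω, (D ω).card ≤ n := fun ω =>
    le_trans (Finset.card_le_card (hDsub ω)) (le_of_eq hcardA)
  have hHeq : ∀ ω, H ω = (D ω).card - 1 := hH
  -- MEASURABILITY
  obtain ⟨g, hg0, hgs, hgmeas⟩ : ∃ g : ℕ → Ω → ℕ, (∀ ω, g 0 ω = u ω) ∧
      (∀ k ω, g (k+1) ω = par (g k ω) ω) ∧ (∀ k, Measurable (g k)) := by
    refine ⟨fun k => Nat.rec (motive := fun _ => Ω → ℕ) u (fun _ gk ω => par (gk ω) ω) k,
      fun _ => rfl, fun _ _ => rfl, ?_⟩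
    intro k
    induction k with
    | zero => exact humeas
    | succ k ih =>
      apply measurable_to_countable'
      intro v
      have hset : (fun ω => par
          ((Nat.rec (motive := fun _ => Ω → ℕ) u (fun _ gk ω => par (gk ω) ω) k) ω) ω) ⁻¹' {v}
          = ⋃ m : ℕ, ((Nat.rec (motive := fun _ => Ω → ℕ) u
              (fun _ gk ω => par (gk ω) ω) k) ⁻¹' {m} ∩ par m ⁻¹' {v}) := by
        ext ω
        simp only [Set.mem_preimage, Set.mem_singleton_iff, Set.mem_iUnion, Set.mem_inter_iff]
        constructor
        · intro h
          exact ⟨_, rfl, h⟩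
        · rintro ⟨m, h1, h2⟩
          rw [h1]
          exact h2
      exact hset ▸ MeasurableSet.iUnion (fun m =>
        (ih (measurableSet_singleton m)).inter ((hmeas m) (measurableSet_singleton v)))
  have hgiter : ∀ (k : ℕ) (ω : Ω), (fun m => par m ω)^[k] (u ω) = g k ω := by
    intro k
    induction k with
    | zero =>
      intro ω
      rw [Function.iterate_zero_apply, hg0]
    | succ k ih =>
      intro ω
      rw [Function.iterate_succ_apply', ih ω, hgs]
  have hMi : ∀ i, MeasurableSet {ω | i ∈ D ω} := by
    intro i
    by_cases hi : i ∈ A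
    · have hset : {ω | i ∈ D ω} = ⋃ k : ℕ, g k ⁻¹' {i} := by
        ext ω
        simp only [hD, Finset.mem_filter, Set.mem_setOf_eq, Set.mem_iUnion, Set.mem_preimage,
          Set.mem_singleton_iff, isAnc]
        constructor
        · intro hmem
          obtain ⟨k, hk⟩ := (Finset.mem_filter.1 hmem).2
          exact ⟨k, by rw [← hgiter k ω]; exact hk⟩
        · rintro ⟨k, hk⟩
          exact Finset.mem_filter.2 ⟨hi, k, by rw [hgiter k ω]; exact hk⟩
      rw [hset]
      exact MeasurableSet.iUnion (fun k => (hgmeas k) (measurableSet_singleton i))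
    · have hset : {ω | i ∈ D ω} = ∅ := by
        ext ω
        simp [hD, Finset.mem_filter, hi]
      rw [hset]
      exact MeasurableSet.empty
  have hDS : ∀ S : Finset ℕ, S ⊆ A → MeasurableSet {ω | D ω = S} := by
    intro S hSA
    have hset : {ω | D ω = S} = ⋂ i ∈ A, (if i ∈ S then {ω | i ∈ D ω} else {ω | i ∈ D ω}ᶜ) := by
      ext ω
      simp only [Set.mem_setOf_eq, Set.mem_iInter]
      constructor
      · rintro rfl i hi
        split_ifs with h
        · exact h
        · exact h
      · intro hI
        apply Finset.ext
        intro i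
        constructor
        · intro hiD
          have hiA : i ∈ A := hDsub ω hiD
          have := hI i hiA
          split_ifs at this with h
          · exact h
          · exact absurd hiD this
        · intro hiS
          have hiA : i ∈ A := hSA hiS
          have := hI i hiA
          rw [if_pos hiS] at this
          exact this
    rw [hset]
    exact MeasurableSet.biInter (Set.to_countable _)
      (fun i _ => by split_ifs; exacts [hMi i, (hMi i).compl])
  have hcard_meas : Measurable (fun ω => (D ω).card) := by
    have hfun : (fun ω => (D ω).card) = fun ω => ∑ i ∈ A, if i ∈ D ω then 1 else 0 := by
      funext ω
      rw [hD]
      simp only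
      rw [Finset.card_filter]
      apply Finset.sum_congr rfl
      intro i hi
      congr 1
      · simp [Finset.mem_filter, hi]
    rw [hfun]
    exact Finset.measurable_sum _ (fun i _ =>
      Measurable.ite (hMi i) measurable_const measurable_const)
  have hHmeas : Measurable H := by
    have : H = fun ω => (D ω).card - 1 := funext hHeq
    rw [this]
    exact hcard_meas.sub measurable_const
  -- PMF on the μ side
  have hpmfμ : ∀ S : Finset ℕ, S ⊆ A →
      μ {ω | D ω = S} = ENNReal.ofReal ((∏ i ∈ S, p i) * ∏ i ∈ A \ S, q i) := by
    intro S hSA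
    by_cases h1S : 1 ∈ S
    case neg =>
      -- the event is empty and the right side vanishes
      have hev : {ω | D ω = S} = ∅ := by
        ext ω
        simp only [Set.mem_setOf_eq, Set.mem_empty_iff_false, iff_false]
        intro hDS'
        exact h1S (hDS' ▸ h1D ω)
      have h1C : 1 ∈ A \ S := Finset.mem_sdiff.2 ⟨Finset.mem_Icc.2 ⟨le_refl 1, hn⟩, h1S⟩
      rw [hev, measure_empty, Finset.prod_eq_zero h1C hq1, mul_zero, ENNReal.ofReal_zero]
    case pos =>
    have hSne : S.Nonempty := ⟨1, h1S⟩
    set j := S.max' hSne with hj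
    have hjS : j ∈ S := S.max'_mem hSne
    have hjmax : ∀ b ∈ S, b ≤ j := fun b hb => S.le_max' b hb
    have hSmem : ∀ b ∈ S, 1 ≤ b ∧ b ≤ n := fun b hb => Finset.mem_Icc.1 (hSA hb)
    have hjn : 1 ≤ j ∧ j ≤ n := hSmem j hjS
    set pred : ℕ → ℕ := fun a => WithBot.unbotD 0 ((S.filter (fun x => x < a)).max) with hpred
    have hpm : ∀ a ∈ S, 2 ≤ a → pred a ∈ S ∧ pred a < a ∧ ∀ b ∈ S, b < a → b ≤ pred a := by
      intro a haS ha2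
      have h1T : (1:ℕ) ∈ S.filter (fun x => x < a) := Finset.mem_filter.2 ⟨h1S, by omega⟩
      obtain ⟨c, hc⟩ := Finset.max_of_nonempty (⟨1, h1T⟩ : (S.filter (fun x => x < a)).Nonempty)
      have hpc : pred a = c := by rw [hpred]; simp only; rw [hc]; rfl
      have hcT := Finset.mem_of_max hc
      rw [Finset.mem_filter] at hcT
      refine ⟨hpc ▸ hcT.1, hpc ▸ hcT.2, ?_⟩
      intro b hbS hba
      have hbT : b ∈ S.filter (fun x => x < a) := Finset.mem_filter.2 ⟨hbS, hba⟩
      have hle : b ≤ c := Finset.le_max_of_eq hbT hc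
      rw [hpc]
      exact hle
    set sucS : ℕ → ℕ := fun c => WithTop.untopD 0 ((S.filter (fun x => c < x)).min) with hsuc
    have hsm : ∀ c ∈ S, c ≠ j → sucS c ∈ S ∧ c < sucS c ∧ ∀ b ∈ S, c < b → sucS c ≤ b := by
      intro c hcS hcj
      have hcltj : c < j := lt_of_le_of_ne (hjmax c hcS) hcj
      have hjT : j ∈ S.filter (fun x => c < x) := Finset.mem_filter.2 ⟨hjS, hcltj⟩
      obtain ⟨d, hd⟩ := Finset.min_of_nonempty (⟨j, hjT⟩ : (S.filter (fun x => c < x)).Nonempty)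
      have hsc : sucS c = d := by rw [hsuc]; simp only; rw [hd]; rfl
      have hdT := Finset.mem_of_min hd
      rw [Finset.mem_filter] at hdT
      refine ⟨hsc ▸ hdT.1, hsc ▸ hdT.2, ?_⟩
      intro b hbS hcb
      have hbT : b ∈ S.filter (fun x => c < x) := Finset.mem_filter.2 ⟨hbS, hcb⟩
      have hle : d ≤ b := Finset.min_le_of_eq hbT hd
      rw [hsc]
      exact hle
    -- event as a chain condition
    have hev : {ω | D ω = S} = {ω | u ω = j ∧ ∀ a ∈ S, 2 ≤ a → par a ω = pred a} := by
      ext ω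
      simp only [Set.mem_setOf_eq]
      exact wrrt_chain_main (fun m => par m ω) n (hpar1 ω) (hchainhyp ω) S hSA h1S j hjS
        hjmax pred hpm (u ω) (hurange ω).1 (hurange ω).2
    set B : ℕ → Finset ℕ := fun m => if m ∈ S then {pred m} else Finset.Icc 1 (m-1) with hB
    have hatoms_range : ∀ π ∈ wrrtAtoms n B, ∀ m, 2 ≤ m → m ≤ n → 1 ≤ π m ∧ π m < m := by
      intro π hπ m h2 hmn
      have hm : m ∈ Finset.Icc 2 n := Finset.mem_Icc.2 ⟨h2, hmn⟩
      have hmem := ((mem_wrrtAtoms n B π).1 hπ).1 m hm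
      simp only [hB] at hmem
      by_cases hmS : m ∈ S
      · rw [if_pos hmS] at hmem
        rw [Finset.mem_singleton] at hmem
        obtain ⟨hpS, hplt, -⟩ := hpm m hmS h2
        have := (hSmem _ hpS).1
        omega
      · rw [if_neg hmS, Finset.mem_Icc] at hmem
        omega
    have hev2 : {ω | u ω = j ∧ ∀ a ∈ S, 2 ≤ a → par a ω = pred a}
        = ⋃ π ∈ wrrtAtoms n B, {ω | (∀ m ∈ Finset.Icc 2 n, par m ω = π m) ∧ u ω = j} := by
      ext ω
      simp only [Set.mem_setOf_eq, Set.mem_iUnion]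
      constructor
      · rintro ⟨hu, hpar'⟩
        refine ⟨fun m => if m ∈ Finset.Icc 2 n then par m ω else 1, ?_, ?_, hu⟩
        · rw [mem_wrrtAtoms]
          constructor
          · intro m hm
            show (if m ∈ Finset.Icc 2 n then par m ω else 1) ∈ B m
            rw [if_pos hm]
            simp only [hB]
            obtain ⟨h2, hmn⟩ := Finset.mem_Icc.1 hm
            by_cases hmS : m ∈ S
            · simp only [if_pos hmS, Finset.mem_singleton]
              exact hpar' m hmS h2
            · simp only [if_neg hmS, Finset.mem_Icc]
              have := hparlt m h2 hmn ω
              omega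
          · intro m hm
            show (if m ∈ Finset.Icc 2 n then par m ω else 1) = 1
            rw [if_neg hm]
        · intro m hm
          show par m ω = if m ∈ Finset.Icc 2 n then par m ω else 1
          rw [if_pos hm]
      · rintro ⟨π, hπ, hagree, hu⟩
        refine ⟨hu, ?_⟩
        intro a haS h2
        have han : a ≤ n := (hSmem a haS).2
        have hmem2 : a ∈ Finset.Icc 2 n := Finset.mem_Icc.2 ⟨h2, han⟩
        have hmem := ((mem_wrrtAtoms n B π).1 hπ).1 a hmem2
        simp only [hB] at hmem
        rw [if_pos haS, Finset.mem_singleton] at hmem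
        rw [hagree a hmem2, hmem]
    have hatom_meas : ∀ π : ℕ → ℕ,
        MeasurableSet {ω | (∀ m ∈ Finset.Icc 2 n, par m ω = π m) ∧ u ω = j} := by
      intro π
      have hset : {ω | (∀ m ∈ Finset.Icc 2 n, par m ω = π m) ∧ u ω = j}
          = (⋂ m ∈ Finset.Icc 2 n, {ω | par m ω = π m}) ∩ {ω | u ω = j} := by
        ext ω
        simp only [Set.mem_setOf_eq, Set.mem_inter_iff, Set.mem_iInter]
      rw [hset]
      refine MeasurableSet.inter ?_ (humeas (measurableSet_singleton j))
      exact MeasurableSet.biInter (Set.to_countable _)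
        (fun m _ => (hmeas m) (measurableSet_singleton (π m)))
    have hdisjat : (↑(wrrtAtoms n B) : Set (ℕ → ℕ)).PairwiseDisjoint
        (fun π => {ω | (∀ m ∈ Finset.Icc 2 n, par m ω = π m) ∧ u ω = j}) := by
      intro π1 h1' π2 h2' hne
      apply Set.disjoint_left.2
      intro ω hω1 hω2
      apply hne
      funext m
      by_cases hm : m ∈ Finset.Icc 2 n
      · rw [← hω1.1 m hm, ← hω2.1 m hm]
      · rw [((mem_wrrtAtoms n B π1).1 (Finset.mem_coe.1 h1')).2 m hm,
            ((mem_wrrtAtoms n B π2).1 (Finset.mem_coe.1 h2')).2 m hm]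
    rw [hev, hev2, MeasureTheory.measure_biUnion_finset hdisjat (fun π _ => hatom_meas π)]
    have hsum1 : ∑ π ∈ wrrtAtoms n B, μ {ω | (∀ m ∈ Finset.Icc 2 n, par m ω = π m) ∧ u ω = j}
        = ∑ π ∈ wrrtAtoms n B,
            (∏ m ∈ Finset.Icc 2 n, ENNReal.ofReal (w (π m) / s (m - 1)))
              * ENNReal.ofReal (w j / s n) :=
      Finset.sum_congr rfl (fun π hπ => hlaw π (hatoms_range π hπ) j hjn.1 hjn.2)
    rw [hsum1, ← Finset.sum_mul, sum_wrrtAtoms n B (fun m v => ENNReal.ofReal (w v / s (m - 1)))]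
    -- evaluate each factor
    have hfac : ∀ m ∈ Finset.Icc 2 n,
        (∑ v ∈ B m, ENNReal.ofReal (w v / s (m - 1)))
          = if m ∈ S then ENNReal.ofReal (w (pred m) / s (m-1)) else 1 := by
      intro m hm
      obtain ⟨h2, hmn⟩ := Finset.mem_Icc.1 hm
      simp only [hB]
      by_cases hmS : m ∈ S
      · rw [if_pos hmS, if_pos hmS, Finset.sum_singleton]
      · rw [if_neg hmS, if_neg hmS]
        have hsm1 : 0 < s (m-1) := hspos (m-1) (by omega)
        rw [← ENNReal.ofReal_sum_of_nonneg (fun v hv =>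
          div_nonneg (le_of_lt (hw v (Finset.mem_Icc.1 hv).1)) (le_of_lt hsm1))]
        rw [← Finset.sum_div, ← hs (m-1), div_self (ne_of_gt hsm1), ENNReal.ofReal_one]
    rw [Finset.prod_congr rfl hfac]
    have hprodite : (∏ m ∈ Finset.Icc 2 n,
        if m ∈ S then ENNReal.ofReal (w (pred m) / s (m-1)) else 1)
        = ∏ m ∈ S.erase 1, ENNReal.ofReal (w (pred m) / s (m-1)) := by
      rw [← Finset.prod_filter]
      congr 1
      ext m
      simp only [Finset.mem_filter, Finset.mem_Icc, Finset.mem_erase]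
      constructor
      · rintro ⟨⟨h2, hmn⟩, hmS⟩
        exact ⟨by omega, hmS⟩
      · rintro ⟨hm1, hmS⟩
        have h := hSmem m hmS
        exact ⟨⟨by omega, h.2⟩, hmS⟩
    rw [hprodite]
    have hnneg : ∀ m ∈ S.erase 1, 0 ≤ w (pred m) / s (m-1) := by
      intro m hm
      have hmS := Finset.mem_of_mem_erase hm
      have hm1 := Finset.ne_of_mem_erase hm
      have h2 : 2 ≤ m := by
        have := (hSmem m hmS).1
        omega
      obtain ⟨hpS, -, -⟩ := hpm m hmS h2
      exact div_nonneg (le_of_lt (hw _ (hSmem _ hpS).1)) (le_of_lt (hspos (m-1) (by omega)))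
    rw [← ENNReal.ofReal_prod_of_nonneg hnneg,
      ← ENNReal.ofReal_mul (Finset.prod_nonneg hnneg)]
    congr 1
    exact wrrt_chain_prod w hw s hspos n hn S hSA h1S j hjS hjmax pred sucS hpm hsm
  -- the β-side ancestor set
  set D' : Ω' → Finset ℕ := fun ω' => A.filter (fun i => β i ω' = 1) with hD'
  have hD'sub : ∀ ω', D' ω' ⊆ A := fun ω' => Finset.filter_subset _ _
  have hM'i : ∀ i, MeasurableSet {ω' | i ∈ D' ω'} := by
    intro i
    by_cases hi : i ∈ A
    · have : {ω' | i ∈ D' ω'} = β i ⁻¹' {1} := by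
        ext ω'
        simp [hD', Finset.mem_filter, hi]
      rw [this]
      exact (hβmeas i) (measurableSet_singleton 1)
    · have : {ω' | i ∈ D' ω'} = ∅ := by
        ext ω'
        simp [hD', Finset.mem_filter, hi]
      rw [this]
      exact MeasurableSet.empty
  have hD'S : ∀ S : Finset ℕ, S ⊆ A → MeasurableSet {ω' | D' ω' = S} := by
    intro S hSA
    have hset : {ω' | D' ω' = S}
        = ⋂ i ∈ A, (if i ∈ S then {ω' | i ∈ D' ω'} else {ω' | i ∈ D' ω'}ᶜ) := by
      ext ω'
      simp only [Set.mem_setOf_eq, Set.mem_iInter]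
      constructor
      · rintro rfl i hi
        split_ifs with h
        · exact h
        · exact h
      · intro hI
        apply Finset.ext
        intro i
        constructor
        · intro hiD
          have hiA : i ∈ A := hD'sub ω' hiD
          have := hI i hiA
          split_ifs at this with h
          · exact h
          · exact absurd hiD this
        · intro hiS
          have hiA : i ∈ A := hSA hiS
          have := hI i hiA
          rw [if_pos hiS] at this
          exact this
    rw [hset]
    exact MeasurableSet.biInter (Set.to_countable _)
      (fun i _ => by split_ifs; exacts [hM'i i, (hM'i i).compl])
  -- PMF on the β side
  have hpmfμ' : ∀ S : Finset ℕ, S ⊆ A →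
      μ' {ω' | D' ω' = S} = ENNReal.ofReal ((∏ i ∈ S, p i) * ∏ i ∈ A \ S, q i) := by
    intro S hSA
    have hev : {ω' | D' ω' = S}
        = ⋂ i ∈ A, (if i ∈ S then β i ⁻¹' {1} else (β i ⁻¹' {1})ᶜ) := by
      ext ω'
      simp only [Set.mem_setOf_eq, Set.mem_iInter]
      constructor
      · rintro rfl i hi
        split_ifs with h
        · show β i ω' ∈ ({1} : Set ℕ)
          rw [Set.mem_singleton_iff]
          exact (Finset.mem_filter.1 h).2
        · show β i ω' ∉ ({1} : Set ℕ)
          rw [Set.mem_singleton_iff]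
          intro hb
          exact h (Finset.mem_filter.2 ⟨hi, hb⟩)
      · intro hI
        apply Finset.ext
        intro i
        rw [hD']
        simp only [Finset.mem_filter]
        constructor
        · rintro ⟨hiA, hib⟩
          have := hI i hiA
          split_ifs at this with h
          · exact h
          · exact absurd hib this
        · intro hiS
          refine ⟨hSA hiS, ?_⟩
          have := hI i (hSA hiS)
          rw [if_pos hiS] at this
          exact this
    rw [hev]
    rw [hβindep.meas_biInter (fun i _ => ?_)]
    swap
    · by_cases h : i ∈ S
      · rw [if_pos h]
        exact ⟨{1}, measurableSet_singleton 1, rfl⟩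
      · rw [if_neg h]
        exact ⟨({1} : Set ℕ)ᶜ, (measurableSet_singleton 1).compl, rfl⟩
    have hfac : ∀ i ∈ A, μ' (if i ∈ S then β i ⁻¹' {1} else (β i ⁻¹' {1})ᶜ)
        = if i ∈ S then ENNReal.ofReal (p i) else ENNReal.ofReal (q i) := by
      intro i hiA
      obtain ⟨hi1, hin⟩ := Finset.mem_Icc.1 hiA
      have hβ1 : μ' (β i ⁻¹' {1}) = ENNReal.ofReal (p i) := by
        have hseteq : β i ⁻¹' ({1} : Set ℕ) = {ω' | β i ω' = 1} := rfl
        rw [hseteq, hβlaw i hi1 hin]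
      by_cases h : i ∈ S
      · rw [if_pos h, if_pos h, hβ1]
      · rw [if_neg h, if_neg h]
        rw [measure_compl ((hβmeas i) (measurableSet_singleton 1)) (measure_ne_top μ' _), hβ1]
        rw [measure_univ]
        have hqi : q i = 1 - p i := by
          have h1 := hspos i hi1
          have h2 := hsrec i hi1
          rw [hp, hq]
          field_simp
          linarith
        rw [hqi, ENNReal.ofReal_sub 1 (le_of_lt (hppos i hi1)), ENNReal.ofReal_one]
    rw [Finset.prod_congr rfl hfac]
    have hsplit : (∏ i ∈ A, if i ∈ S then ENNReal.ofReal (p i) else ENNReal.ofReal (q i))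
        = (∏ i ∈ S, ENNReal.ofReal (p i)) * ∏ i ∈ A \ S, ENNReal.ofReal (q i) := by
      rw [← Finset.prod_sdiff hSA]
      rw [mul_comm]
      congr 1
      · exact Finset.prod_congr rfl (fun i hi => by rw [if_pos hi])
      · exact Finset.prod_congr rfl (fun i hi => by rw [if_neg (Finset.mem_sdiff.1 hi).2])
    rw [hsplit,
      ← ENNReal.ofReal_prod_of_nonneg (fun i hi => le_of_lt (hppos i (Finset.mem_Icc.1 (hSA hi)).1)),
      ← ENNReal.ofReal_prod_of_nonneg (fun i hi =>
        hqnonneg i (Finset.mem_Icc.1 (Finset.mem_sdiff.1 hi).1).1),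
      ← ENNReal.ofReal_mul (Finset.prod_nonneg (fun i hi =>
        le_of_lt (hppos i (Finset.mem_Icc.1 (hSA hi)).1)))]
  -- sum of Bernoullis equals card of D'
  have hsumcard : ∀ ω', ∑ i ∈ A, β i ω' = (D' ω').card := by
    intro ω'
    rw [hD']
    simp only
    rw [Finset.card_filter]
    apply Finset.sum_congr rfl
    intro i _
    by_cases h : β i ω' = 1
    · simp [h]
    · have := hβval i ω'
      have h0 : β i ω' = 0 := by omega
      simp [h, h0]
  -- distribution equality
  have hβsum_meas : Measurable (fun ω' => ∑ i ∈ A, β i ω') :=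
    Finset.measurable_sum _ (fun i _ => hβmeas i)
  have hH1meas : Measurable (fun ω => H ω + 1) := hHmeas.add measurable_const
  have hmapeq : Measure.map (fun ω => H ω + 1) μ
      = Measure.map (fun ω' => ∑ i ∈ A, β i ω') μ' := by
    rw [MeasureTheory.Measure.ext_iff_singleton]
    intro k
    rw [Measure.map_apply hH1meas (measurableSet_singleton k),
      Measure.map_apply hβsum_meas (measurableSet_singleton k)]
    have hpre1 : (fun ω => H ω + 1) ⁻¹' {k} = {ω | (D ω).card = k} := by
      ext ω
      simp only [Set.mem_preimage, Set.mem_singleton_iff, Set.mem_setOf_eq]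
      rw [hHeq ω]
      have := hcard1 ω
      omega
    have hpre2 : (fun ω' => ∑ i ∈ A, β i ω') ⁻¹' {k} = {ω' | (D' ω').card = k} := by
      ext ω'
      simp only [Set.mem_preimage, Set.mem_singleton_iff, Set.mem_setOf_eq]
      rw [hsumcard ω']
    rw [hpre1, hpre2]
    have hdec1 : {ω | (D ω).card = k} = ⋃ S ∈ Finset.powersetCard k A, {ω | D ω = S} := by
      ext ω
      simp only [Set.mem_setOf_eq, Set.mem_iUnion]
      constructor
      · intro h
        exact ⟨D ω, Finset.mem_powersetCard.2 ⟨hDsub ω, h⟩, rfl⟩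
      · rintro ⟨S, hSmem', hEq⟩
        rw [hEq]
        exact (Finset.mem_powersetCard.1 hSmem').2
    have hdec2 : {ω' | (D' ω').card = k} = ⋃ S ∈ Finset.powersetCard k A, {ω' | D' ω' = S} := by
      ext ω'
      simp only [Set.mem_setOf_eq, Set.mem_iUnion]
      constructor
      · intro h
        exact ⟨D' ω', Finset.mem_powersetCard.2 ⟨hD'sub ω', h⟩, rfl⟩
      · rintro ⟨S, hSmem', hEq⟩
        rw [hEq]
        exact (Finset.mem_powersetCard.1 hSmem').2
    rw [hdec1, hdec2]
    rw [MeasureTheory.measure_biUnion_finset ?_ ?_, MeasureTheory.measure_biUnion_finset ?_ ?_]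
    · apply Finset.sum_congr rfl
      intro S hSk
      have hSA := (Finset.mem_powersetCard.1 hSk).1
      rw [hpmfμ S hSA, hpmfμ' S hSA]
    · intro S hS T hT hne
      apply Set.disjoint_left.2
      intro ω' h1' h2'
      exact hne (h1'.symm.trans h2')
    · intro S hS
      exact hD'S S (Finset.mem_powersetCard.1 hS).1
    · intro S hS T hT hne
      apply Set.disjoint_left.2
      intro ω h1' h2'
      exact hne (h1'.symm.trans h2')
    · intro S hS
      exact hDS S (Finset.mem_powersetCard.1 hS).1
  -- marginal probabilities
  have hmarg : ∀ B : Finset ℕ, B ⊆ A →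
      μ {ω | B ⊆ D ω} = ENNReal.ofReal (∏ i ∈ B, p i) := by
    intro B hBA
    have hdec : {ω | B ⊆ D ω} = ⋃ S ∈ A.powerset.filter (fun S => B ⊆ S), {ω | D ω = S} := by
      ext ω
      simp only [Set.mem_setOf_eq, Set.mem_iUnion]
      constructor
      · intro h
        exact ⟨D ω, Finset.mem_filter.2 ⟨Finset.mem_powerset.2 (hDsub ω), h⟩, rfl⟩
      · rintro ⟨S, hSmem', hEq⟩
        rw [hEq]
        exact (Finset.mem_filter.1 hSmem').2
    have hnneg : ∀ S ∈ A.powerset.filter (fun S => B ⊆ S),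
        0 ≤ (∏ i ∈ S, p i) * ∏ i ∈ A \ S, q i := by
      intro S hSf
      have hSA := Finset.mem_powerset.1 (Finset.mem_filter.1 hSf).1
      refine mul_nonneg (Finset.prod_nonneg (fun i hi =>
        le_of_lt (hppos i (Finset.mem_Icc.1 (hSA hi)).1))) (Finset.prod_nonneg (fun i hi =>
        hqnonneg i (Finset.mem_Icc.1 (Finset.mem_sdiff.1 hi).1).1))
    rw [hdec, MeasureTheory.measure_biUnion_finset ?_ ?_]
    · rw [Finset.sum_congr rfl (fun S hSf =>
        hpmfμ S (Finset.mem_powerset.1 (Finset.mem_filter.1 hSf).1))]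
      rw [← ENNReal.ofReal_sum_of_nonneg hnneg]
      rw [wrrt_aux_powerset_sum p q A B hBA]
      rw [Finset.prod_eq_one (fun i hi =>
        hpq i (Finset.mem_Icc.1 (Finset.mem_sdiff.1 hi).1).1), mul_one]
    · intro S hS T hT hne
      apply Set.disjoint_left.2
      intro ω h1' h2'
      exact hne (h1'.symm.trans h2')
    · intro S hSf
      exact hDS S (Finset.mem_powerset.1 (Finset.mem_filter.1 hSf).1)
  -- moments
  have hcardsum : ∀ ω, ((D ω).card : ℝ) = ∑ i ∈ A, (if i ∈ D ω then (1:ℝ) else 0) := by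
    intro ω
    have h1 : (D ω).card = ∑ i ∈ A, (if i ∈ D ω then 1 else 0) := by
      conv_lhs => rw [hD]
      simp only
      rw [Finset.card_filter]
      apply Finset.sum_congr rfl
      intro i hi
      congr 1
      · simp [hD, Finset.mem_filter, hi]
    rw [h1, Nat.cast_sum]
    apply Finset.sum_congr rfl
    intro i _
    split_ifs <;> simp
  have hindfun : ∀ i : ℕ, (fun ω => if i ∈ D ω then (1:ℝ) else 0)
      = Set.indicator {ω | i ∈ D ω} (fun _ => (1:ℝ)) := by
    intro i
    funext ω
    rw [Set.indicator_apply]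
    rfl
  have hint : ∀ i : ℕ, Integrable (fun ω => if i ∈ D ω then (1:ℝ) else 0) μ := by
    intro i
    rw [hindfun i]
    exact (integrable_const (1:ℝ)).indicator (hMi i)
  have hIival : ∀ i ∈ A, (∫ ω, (if i ∈ D ω then (1:ℝ) else 0) ∂μ) = p i := by
    intro i hiA
    have : (∫ ω, (if i ∈ D ω then (1:ℝ) else 0) ∂μ)
        = (μ {ω | i ∈ D ω}).toReal • (1:ℝ) := by
      rw [← measureReal_def, ← MeasureTheory.integral_indicator_const (1:ℝ) (hMi i)]
      congr 1
      funext x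
      rw [congrFun (hindfun i) x]
    rw [this]
    have hset : {ω | i ∈ D ω} = {ω | ({i} : Finset ℕ) ⊆ D ω} := by
      ext ω
      simp [Finset.singleton_subset_iff]
    rw [hset, hmarg {i} (Finset.singleton_subset_iff.2 hiA), Finset.prod_singleton,
      ENNReal.toReal_ofReal (le_of_lt (hppos i (Finset.mem_Icc.1 hiA).1)), smul_eq_mul, mul_one]
  have hP : (∫ ω, ((D ω).card : ℝ) ∂μ) = ∑ i ∈ A, p i := by
    have hfn : (fun ω => ((D ω).card : ℝ)) = fun ω => ∑ i ∈ A, (if i ∈ D ω then (1:ℝ) else 0) :=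
      funext hcardsum
    rw [hfn, MeasureTheory.integral_finset_sum A (fun i _ => hint i)]
    exact Finset.sum_congr rfl hIival
  have hpairfun : ∀ i j' : ℕ, (fun ω => if i ∈ D ω ∧ j' ∈ D ω then (1:ℝ) else 0)
      = Set.indicator ({ω | i ∈ D ω} ∩ {ω | j' ∈ D ω}) (fun _ => (1:ℝ)) := by
    intro i j'
    funext ω
    rw [Set.indicator_apply]
    rfl
  have hint2 : ∀ i j' : ℕ, Integrable (fun ω => if i ∈ D ω ∧ j' ∈ D ω then (1:ℝ) else 0) μ := by
    intro i j'
    rw [hpairfun i j']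
    exact (integrable_const (1:ℝ)).indicator ((hMi i).inter (hMi j'))
  have hIpair : ∀ i ∈ A, ∀ j' ∈ A, (∫ ω, (if i ∈ D ω ∧ j' ∈ D ω then (1:ℝ) else 0) ∂μ)
      = if i = j' then p i else p i * p j' := by
    intro i hi j' hj'
    have hstep : (∫ ω, (if i ∈ D ω ∧ j' ∈ D ω then (1:ℝ) else 0) ∂μ)
        = (μ ({ω | i ∈ D ω} ∩ {ω | j' ∈ D ω})).toReal • (1:ℝ) := by
      rw [← measureReal_def, ← MeasureTheory.integral_indicator_const (1:ℝ) ((hMi i).inter (hMi j'))]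
      congr 1
      funext x
      rw [congrFun (hpairfun i j') x]
    rw [hstep]
    have hsub : ({i, j'} : Finset ℕ) ⊆ A := by
      intro x hx
      rcases Finset.mem_insert.1 hx with rfl | hx
      · exact hi
      · rw [Finset.mem_singleton.1 hx]
        exact hj'
    have hset : {ω | i ∈ D ω} ∩ {ω | j' ∈ D ω} = {ω | ({i, j'} : Finset ℕ) ⊆ D ω} := by
      ext ω
      simp [Finset.insert_subset_iff, Finset.singleton_subset_iff]
    rw [hset, hmarg {i, j'} hsub]
    by_cases h : i = j'
    · subst h
      rw [if_pos rfl]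
      rw [show ({i, i} : Finset ℕ) = {i} by simp, Finset.prod_singleton,
        ENNReal.toReal_ofReal (le_of_lt (hppos i (Finset.mem_Icc.1 hi).1)), smul_eq_mul, mul_one]
    · rw [if_neg h, Finset.prod_pair h,
        ENNReal.toReal_ofReal (mul_nonneg (le_of_lt (hppos i (Finset.mem_Icc.1 hi).1))
          (le_of_lt (hppos j' (Finset.mem_Icc.1 hj').1))), smul_eq_mul, mul_one]
  have hcast2 : ∀ ω, (((D ω).card : ℝ))^2
      = ∑ i ∈ A, ∑ j' ∈ A, (if i ∈ D ω ∧ j' ∈ D ω then (1:ℝ) else 0) := by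
    intro ω
    rw [sq, hcardsum ω, Finset.sum_mul_sum]
    apply Finset.sum_congr rfl
    intro i _
    apply Finset.sum_congr rfl
    intro j' _
    by_cases h1 : i ∈ D ω <;> by_cases h2 : j' ∈ D ω <;> simp [h1, h2]
  have hQ : (∫ ω, (((D ω).card : ℝ))^2 ∂μ)
      = ∑ i ∈ A, ∑ j ∈ A, (if i = j then p i else p i * p j) := by
    have hfn : (fun ω => (((D ω).card : ℝ))^2)
        = fun ω => ∑ i ∈ A, ∑ j' ∈ A, (if i ∈ D ω ∧ j' ∈ D ω then (1:ℝ) else 0) :=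
      funext hcast2
    rw [hfn, MeasureTheory.integral_finset_sum A (fun i _ =>
      MeasureTheory.integrable_finset_sum A (fun j' _ => hint2 i j'))]
    apply Finset.sum_congr rfl
    intro i hi
    rw [MeasureTheory.integral_finset_sum A (fun j' _ => hint2 i j')]
    exact Finset.sum_congr rfl (fun j' hj' => hIpair i hi j' hj')
  -- final assembly
  have hIc : Integrable (fun ω => ((D ω).card : ℝ)) μ := by
    have hfn : (fun ω => ((D ω).card : ℝ)) = fun ω => ∑ i ∈ A, (if i ∈ D ω then (1:ℝ) else 0) :=
      funext hcardsum
    rw [hfn]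
    exact MeasureTheory.integrable_finset_sum A (fun i _ => hint i)
  have hIc2 : Integrable (fun ω => (((D ω).card : ℝ))^2) μ := by
    have hfn : (fun ω => (((D ω).card : ℝ))^2)
        = fun ω => ∑ i ∈ A, ∑ j' ∈ A, (if i ∈ D ω ∧ j' ∈ D ω then (1:ℝ) else 0) :=
      funext hcast2
    rw [hfn]
    exact MeasureTheory.integrable_finset_sum A (fun i _ =>
      MeasureTheory.integrable_finset_sum A (fun j' _ => hint2 i j'))
  have hXcast : ∀ ω, (H ω : ℝ) = ((D ω).card : ℝ) - 1 := by
    intro ω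
    rw [hHeq ω, Nat.cast_sub (hcard1 ω), Nat.cast_one]
  have hEX : (∫ ω, (H ω : ℝ) ∂μ) = (∑ i ∈ A, p i) - 1 := by
    have hfn : (fun ω => (H ω : ℝ)) = fun ω => ((D ω).card : ℝ) - 1 := funext hXcast
    rw [hfn, MeasureTheory.integral_sub hIc (integrable_const 1), hP,
      MeasureTheory.integral_const]
    simp
  refine ⟨hmapeq, by rw [hEX]; ring, ?_⟩
  -- variance
  have hXmeas : Measurable (fun ω => (H ω : ℝ)) := measurable_from_nat.comp hHmeas
  have hXmem : MemLp (fun ω => (H ω : ℝ)) 2 μ := by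
    refine MemLp.of_bound hXmeas.aestronglyMeasurable (n : ℝ) ?_
    apply Filter.Eventually.of_forall
    intro ω
    rw [Real.norm_eq_abs, hXcast ω, abs_le]
    have h1 : (1:ℝ) ≤ ((D ω).card : ℝ) := by exact_mod_cast hcard1 ω
    have h2 : ((D ω).card : ℝ) ≤ (n:ℝ) := by exact_mod_cast hcardn ω
    have h3 : (1:ℝ) ≤ (n:ℝ) := by exact_mod_cast hn
    constructor <;> linarith
  rw [variance_eq_sub hXmem]
  have hXsq : ((fun ω => (H ω : ℝ)) ^ 2)
      = fun ω => (((D ω).card : ℝ))^2 - (2 * ((D ω).card : ℝ) - 1) := by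
    funext ω
    rw [Pi.pow_apply, hXcast ω]
    ring
  have e3 : (∫ ω, (2 * ((D ω).card : ℝ) - 1) ∂μ) = 2 * (∑ i ∈ A, p i) - 1 := by
    rw [MeasureTheory.integral_sub (hIc.const_mul 2) (integrable_const 1),
      MeasureTheory.integral_const_mul, hP, MeasureTheory.integral_const]
    simp
  have hEX2 : (∫ ω, ((fun ω => (H ω : ℝ)) ^ 2) ω ∂μ)
      = (∑ i ∈ A, ∑ j ∈ A, (if i = j then p i else p i * p j))
        - (2 * (∑ i ∈ A, p i) - 1) := by
    have e1 : (∫ ω, ((fun ω => (H ω : ℝ)) ^ 2) ω ∂μ)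
        = ∫ ω, ((((D ω).card : ℝ))^2 - (2 * ((D ω).card : ℝ) - 1)) ∂μ := by
      apply MeasureTheory.integral_congr_ae
      apply Filter.Eventually.of_forall
      intro ω
      rw [congrFun hXsq ω]
    have e2 : (∫ ω, ((((D ω).card : ℝ))^2 - (2 * ((D ω).card : ℝ) - 1)) ∂μ)
        = (∫ ω, (((D ω).card : ℝ))^2 ∂μ) - ∫ ω, (2 * ((D ω).card : ℝ) - 1) ∂μ :=
      MeasureTheory.integral_sub hIc2 ((hIc.const_mul 2).sub (integrable_const 1))
    rw [e1, e2, hQ, e3]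
  rw [hEX2, hEX]
  have hQid : (∑ i ∈ A, ∑ j ∈ A, (if i = j then p i else p i * p j))
      = (∑ i ∈ A, ∑ j ∈ A, p i * p j) + ∑ i ∈ A, (p i - p i * p i) := by
    rw [← Finset.sum_add_distrib]
    apply Finset.sum_congr rfl
    intro i hi
    have hterm : ∀ j ∈ A, (if i = j then p i else p i * p j)
        = p i * p j + (if j = i then p i - p i * p i else 0) := by
      intro j _
      by_cases h : i = j
      · subst h
        rw [if_pos rfl, if_pos rfl]
        ring
      · rw [if_neg h, if_neg (fun e => h e.symm), add_zero]
    rw [Finset.sum_congr rfl hterm, Finset.sum_add_distrib,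
      Finset.sum_ite_eq' A i (fun _ => p i - p i * p i), if_pos hi]
  have hPsq : ((∑ i ∈ A, p i))^2 = ∑ i ∈ A, ∑ j ∈ A, p i * p j := by
    rw [sq, Finset.sum_mul_sum]
  have hfinal : (∑ i ∈ A, ∑ j ∈ A, (if i = j then p i else p i * p j))
      - (2 * (∑ i ∈ A, p i) - 1) - ((∑ i ∈ A, p i) - 1)^2
      = ∑ i ∈ A, (p i - p i * p i) := by
    rw [hQid]
    nlinarith [hPsq]
  rw [hfinal]
  apply Finset.sum_congr rfl
  intro i _
  rw [hp]
  ring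
end

section
/- Let w = (w_i)_{i≥1} be positive reals with partial sums s_i. Construct (T̃_n, ũ_n, ṽ_n) using independent Bernoulli variables B_n, B'_n of parameter w_n/s_n and independent indices U_n with P(U_n = i) = w_i/s_n, via the four-case rule: if (B_n,B'_n)=(0,0) attach ν_n to ν_{U_{n-1}} and keep ũ_n=ũ_{n-1}, ṽ_n=ṽ_{n-1}; if (1,0) attach ν_n to ũ_{n-1}, set ũ_n=ν_n, ṽ_n=ṽ_{n-1}; if (0,1) attach ν_n to ṽ_{n-1}, set ũ_n=ũ_{n-1}, ṽ_n=ν_n; if (1,1) attach ν_n to ũ_{n-1} and set ũ_n=ṽ_n=ν_n. Then for every increasing tree t on n nodes and all j,k ≤ n, P(T̃_n = t, ũ_n = ν_j, ṽ_n = ν_k) = (∏_{i=2}^n w_{π_t(i)}/s_{i-1}) · (w_j/s_n) · (w_k/s_n); i.e. T̃_n is a w-WRRT and, given T̃_n, ũ_n and ṽ_n are two independent weight-proportional random nodes. -/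
open MeasureTheory ProbabilityTheory Finset

set_option maxHeartbeats 2000000 in
/-- **Coupled construction of the WRRT with two weight-proportional nodes.**
Using independent Bernoulli variables `B m, B' m` (parameter `w m / s m`) and independent
indices `U m` (`P(U m = i) = w i / s m`), nodes attach according to the four-case rule, and
for every increasing tree `t` on `n` vertices with parent map `π` and all `1 ≤ j, k ≤ n`,
`P(T̃_n = t, ũ_n = ν_j, ṽ_n = ν_k) = (∏_{m=2}^n w (π m)/s (m-1)) (w j / s n) (w k / s n)`. -/
theorem wrrt_two_node_coupling
    {Ω : Type*} [MeasurableSpace Ω] (μ : Measure Ω) [IsProbabilityMeasure μ]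
    (w : ℕ → ℝ) (hw : ∀ i, 1 ≤ i → 0 < w i)
    (s : ℕ → ℝ) (hs : ∀ i, s i = ∑ j ∈ Finset.Icc 1 i, w j)
    (B B' : ℕ → Ω → Bool) (U : ℕ → Ω → ℕ)
    (f : ℕ ⊕ ℕ ⊕ ℕ → Ω → ℕ)
    (hfB : ∀ i, f (Sum.inl i) = fun ω => if B i ω then 1 else 0)
    (hfB' : ∀ i, f (Sum.inr (Sum.inl i)) = fun ω => if B' i ω then 1 else 0)
    (hfU : ∀ i, f (Sum.inr (Sum.inr i)) = U i)
    (hmeas : ∀ j, Measurable (f j))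
    (hindep : iIndepFun f μ)
    (hBlaw : ∀ i, 1 ≤ i → μ {ω | B i ω = true} = ENNReal.ofReal (w i / s i))
    (hB'law : ∀ i, 1 ≤ i → μ {ω | B' i ω = true} = ENNReal.ofReal (w i / s i))
    (hUlaw : ∀ m, 1 ≤ m → ∀ i, 1 ≤ i → i ≤ m →
      μ {ω | U m ω = i} = ENNReal.ofReal (w i / s m))
    (hUrange : ∀ m, 1 ≤ m → ∀ ω, 1 ≤ U m ω ∧ U m ω ≤ m)
    (par u v : ℕ → Ω → ℕ)
    (hu1 : ∀ ω, u 1 ω = 1) (hv1 : ∀ ω, v 1 ω = 1)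
    (hrec : ∀ ω, ∀ m, 2 ≤ m →
      (B m ω = false → B' m ω = false →
        par m ω = U (m - 1) ω ∧ u m ω = u (m - 1) ω ∧ v m ω = v (m - 1) ω) ∧
      (B m ω = true → B' m ω = false →
        par m ω = u (m - 1) ω ∧ u m ω = m ∧ v m ω = v (m - 1) ω) ∧
      (B m ω = false → B' m ω = true →
        par m ω = v (m - 1) ω ∧ u m ω = u (m - 1) ω ∧ v m ω = m) ∧
      (B m ω = true → B' m ω = true →
        par m ω = u (m - 1) ω ∧ u m ω = m ∧ v m ω = m))
    (n j k : ℕ) (hn : 1 ≤ n) (hj : 1 ≤ j) (hjn : j ≤ n) (hk : 1 ≤ k) (hkn : k ≤ n)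
    (π : ℕ → ℕ) (hπ : ∀ m, 2 ≤ m → m ≤ n → 1 ≤ π m ∧ π m < m) :
    μ {ω | (∀ m ∈ Finset.Icc 2 n, par m ω = π m) ∧ u n ω = j ∧ v n ω = k}
      = (∏ m ∈ Finset.Icc 2 n, ENNReal.ofReal (w (π m) / s (m - 1)))
        * ENNReal.ofReal (w j / s n) * ENNReal.ofReal (w k / s n) := by
  classical
  -- the σ-algebra generated by the coordinates in `S`
  set G : Set (ℕ ⊕ ℕ ⊕ ℕ) → MeasurableSpace Ω :=
    fun S => ⨆ i ∈ S, MeasurableSpace.comap (f i) inferInstance with hG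
  have hGle : ∀ S, G S ≤ ‹MeasurableSpace Ω› := fun S =>
    iSup₂_le fun i _ => (hmeas i).comap_le
  have hGmono : ∀ {S T : Set (ℕ ⊕ ℕ ⊕ ℕ)}, S ⊆ T → G S ≤ G T := fun h =>
    biSup_mono h
  have hsplit : ∀ (S T : Set (ℕ ⊕ ℕ ⊕ ℕ)), Disjoint S T → ∀ E F : Set Ω,
      MeasurableSet[G S] E → MeasurableSet[G T] F → μ (E ∩ F) = μ E * μ F := by
    intro S T hST E F hE hF
    exact (Indep_iff _ _ _).1
      (indep_iSup_of_disjoint (fun i => (hmeas i).comap_le) hindep hST) E F hE hF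
  have hcoord : ∀ (i : ℕ ⊕ ℕ ⊕ ℕ) (S : Set (ℕ ⊕ ℕ ⊕ ℕ)), i ∈ S →
      Measurable[G S] (f i) := by
    intro i S hi
    have h1 : Measurable[MeasurableSpace.comap (f i) inferInstance] (f i) :=
      fun t ht => ⟨t, ht, rfl⟩
    exact h1.mono (le_biSup (fun i => MeasurableSpace.comap (f i) inferInstance) hi) le_rfl
  have hBeq : ∀ m, B m = fun ω => decide (f (Sum.inl m) ω = 1) := by
    intro m; funext ω; rw [hfB]; cases h : B m ω <;> simp [h]
  have hB'eq : ∀ m, B' m = fun ω => decide (f (Sum.inr (Sum.inl m)) ω = 1) := by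
    intro m; funext ω; rw [hfB']; cases h : B' m ω <;> simp [h]
  have hMB : ∀ (m : ℕ) (S : Set (ℕ ⊕ ℕ ⊕ ℕ)), Sum.inl m ∈ S →
      Measurable[G S] (B m) := by
    intro m S hi
    rw [hBeq]
    exact Measurable.comp (measurable_of_countable (fun x : ℕ => decide (x = 1)))
      (hcoord _ _ hi)
  have hMB' : ∀ (m : ℕ) (S : Set (ℕ ⊕ ℕ ⊕ ℕ)), Sum.inr (Sum.inl m) ∈ S →
      Measurable[G S] (B' m) := by
    intro m S hi
    rw [hB'eq]
    exact Measurable.comp (measurable_of_countable (fun x : ℕ => decide (x = 1)))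
      (hcoord _ _ hi)
  have hMU : ∀ (m : ℕ) (S : Set (ℕ ⊕ ℕ ⊕ ℕ)), Sum.inr (Sum.inr m) ∈ S →
      Measurable[G S] (U m) := by
    intro m S hi
    rw [← hfU]
    exact hcoord _ _ hi
  -- the index set of all randomness used up to time `N`
  set Sn : ℕ → Set (ℕ ⊕ ℕ ⊕ ℕ) := fun N =>
    {x | (∃ m, 2 ≤ m ∧ m ≤ N ∧ x = Sum.inl m) ∨
         (∃ m, 2 ≤ m ∧ m ≤ N ∧ x = Sum.inr (Sum.inl m)) ∨
         (∃ m, 1 ≤ m ∧ m + 1 ≤ N ∧ x = Sum.inr (Sum.inr m))} with hSn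
  have hmemB : ∀ N m, 2 ≤ m → m ≤ N → Sum.inl m ∈ Sn N :=
    fun N m h1 h2 => Or.inl ⟨m, h1, h2, rfl⟩
  have hmemB' : ∀ N m, 2 ≤ m → m ≤ N → Sum.inr (Sum.inl m) ∈ Sn N :=
    fun N m h1 h2 => Or.inr (Or.inl ⟨m, h1, h2, rfl⟩)
  have hmemU : ∀ N m, 1 ≤ m → m + 1 ≤ N → Sum.inr (Sum.inr m) ∈ Sn N :=
    fun N m h1 h2 => Or.inr (Or.inr ⟨m, h1, h2, rfl⟩)
  have hSnsub : ∀ N, Sn N ⊆ Sn (N + 1) := by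
    intro N x hx
    simp only [hSn, Set.mem_setOf_eq] at hx ⊢
    rcases hx with ⟨m, h1, h2, h3⟩ | ⟨m, h1, h2, h3⟩ | ⟨m, h1, h2, h3⟩
    · exact Or.inl ⟨m, h1, by omega, h3⟩
    · exact Or.inr (Or.inl ⟨m, h1, by omega, h3⟩)
    · exact Or.inr (Or.inr ⟨m, h1, by omega, h3⟩)
  -- pointwise recursion
  have hstep : ∀ m, 2 ≤ m → ∀ ω,
      u m ω = (if B m ω = true then m else u (m-1) ω) ∧
      v m ω = (if B' m ω = true then m else v (m-1) ω) ∧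
      par m ω = (if B m ω = true then u (m-1) ω
                 else if B' m ω = true then v (m-1) ω else U (m-1) ω) := by
    intro m hm ω
    obtain ⟨h00, h10, h01, h11⟩ := hrec ω m hm
    cases hb : B m ω <;> cases hb' : B' m ω
    · obtain ⟨e1, e2, e3⟩ := h00 hb hb'
      simp [hb, hb', e1, e2, e3]
    · obtain ⟨e1, e2, e3⟩ := h01 hb hb'
      simp [hb, hb', e1, e2, e3]
    · obtain ⟨e1, e2, e3⟩ := h10 hb hb'
      simp [hb, hb', e1, e2, e3]
    · obtain ⟨e1, e2, e3⟩ := h11 hb hb'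
      simp [hb, hb', e1, e2, e3]
  -- range of u and v
  have hur : ∀ N, 1 ≤ N → ∀ ω, (1 ≤ u N ω ∧ u N ω ≤ N) ∧ (1 ≤ v N ω ∧ v N ω ≤ N) := by
    intro N hN
    induction N, hN using Nat.le_induction with
    | base => intro ω; simp [hu1, hv1]
    | succ n hn IH =>
      intro ω
      obtain ⟨hu', hv', -⟩ := hstep (n+1) (by omega) ω
      simp only [Nat.add_sub_cancel] at hu' hv'
      obtain ⟨⟨h1, h2⟩, ⟨h3, h4⟩⟩ := IH ω
      constructor
      · rw [hu']; split <;> omega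
      · rw [hv']; split <;> omega
  -- measurability of u, v, par with respect to G (Sn N)
  have hMuvp : ∀ N, 1 ≤ N → Measurable[G (Sn N)] (u N) ∧ Measurable[G (Sn N)] (v N) ∧
      ∀ m, 2 ≤ m → m ≤ N → Measurable[G (Sn N)] (par m) := by
    intro N hN
    induction N, hN using Nat.le_induction with
    | base =>
      refine ⟨?_, ?_, fun m h1 h2 => absurd (h1.trans h2) (by omega)⟩
      · have h : u 1 = fun _ => 1 := funext hu1
        rw [h]; exact measurable_const
      · have h : v 1 = fun _ => 1 := funext hv1
        rw [h]; exact measurable_const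
    | succ n hn IH =>
      obtain ⟨IHu, IHv, IHp⟩ := IH
      have hsub := hGmono (hSnsub n)
      have hBm : Measurable[G (Sn (n+1))] (B (n+1)) :=
        hMB (n+1) _ (hmemB (n+1) (n+1) (by omega) le_rfl)
      have hB'm : Measurable[G (Sn (n+1))] (B' (n+1)) :=
        hMB' (n+1) _ (hmemB' (n+1) (n+1) (by omega) le_rfl)
      have hUm : Measurable[G (Sn (n+1))] (U n) :=
        hMU n _ (hmemU (n+1) n hn le_rfl)
      have hum : Measurable[G (Sn (n+1))] (u n) := IHu.mono hsub le_rfl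
      have hvm : Measurable[G (Sn (n+1))] (v n) := IHv.mono hsub le_rfl
      have hBset : MeasurableSet[G (Sn (n+1))] {ω | B (n+1) ω = true} :=
        hBm (measurableSet_singleton true)
      have hB'set : MeasurableSet[G (Sn (n+1))] {ω | B' (n+1) ω = true} :=
        hB'm (measurableSet_singleton true)
      have hueq : u (n+1) = fun ω => if B (n+1) ω = true then (n+1 : ℕ) else u n ω := by
        funext ω
        have h := (hstep (n+1) (by omega) ω).1
        simpa using h
      have hveq : v (n+1) = fun ω => if B' (n+1) ω = true then (n+1 : ℕ) else v n ω := by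
        funext ω
        have h := (hstep (n+1) (by omega) ω).2.1
        simpa using h
      refine ⟨?_, ?_, ?_⟩
      · rw [hueq]; exact Measurable.ite hBset measurable_const hum
      · rw [hveq]; exact Measurable.ite hB'set measurable_const hvm
      · intro m h1 h2
        rcases Nat.lt_or_ge m (n+1) with h | h
        · exact (IHp m h1 (by omega)).mono hsub le_rfl
        · have hm : m = n + 1 := by omega
          subst hm
          have hpeq : par (n+1) = fun ω => if B (n+1) ω = true then u n ω
              else if B' (n+1) ω = true then v n ω else U n ω := by
            funext ω
            have h := (hstep (n+1) (by omega) ω).2.2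
            simpa using h
          rw [hpeq]
          exact Measurable.ite hBset hum (Measurable.ite hB'set hvm hUm)
  -- measurability of the basic events
  have hPmeas : ∀ N, 1 ≤ N → ∀ (p : ℕ → ℕ),
      MeasurableSet[G (Sn N)] {ω | ∀ m ∈ Finset.Icc 2 N, par m ω = p m} := by
    intro N hN p
    have h : {ω | ∀ m ∈ Finset.Icc 2 N, par m ω = p m}
        = ⋂ m ∈ Finset.Icc 2 N, (par m) ⁻¹' {p m} := by
      ext ω; simp
    rw [h]
    refine Finset.measurableSet_biInter _ fun m hm => ?_
    rw [Finset.mem_Icc] at hm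
    exact (hMuvp N hN).2.2 m hm.1 hm.2 (measurableSet_singleton (p m))
  have hE0meas : ∀ N, 1 ≤ N → ∀ (p : ℕ → ℕ) (j' k' : ℕ),
      MeasurableSet[G (Sn N)]
        {ω | (∀ m ∈ Finset.Icc 2 N, par m ω = p m) ∧ u N ω = j' ∧ v N ω = k'} := by
    intro N hN p j' k'
    have h1 := hPmeas N hN p
    have h2 : MeasurableSet[G (Sn N)] {ω | u N ω = j'} :=
      (hMuvp N hN).1 (measurableSet_singleton j')
    have h3 : MeasurableSet[G (Sn N)] {ω | v N ω = k'} :=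
      (hMuvp N hN).2.1 (measurableSet_singleton k')
    have h : {ω | (∀ m ∈ Finset.Icc 2 N, par m ω = p m) ∧ u N ω = j' ∧ v N ω = k'}
        = {ω | ∀ m ∈ Finset.Icc 2 N, par m ω = p m} ∩ ({ω | u N ω = j'} ∩ {ω | v N ω = k'}) := by
      ext ω; simp [Set.mem_inter_iff, and_assoc]
    rw [h]
    exact h1.inter (h2.inter h3)
  have hE1meas : ∀ N, 1 ≤ N → ∀ (p : ℕ → ℕ) (j' : ℕ),
      MeasurableSet[G (Sn N)]
        {ω | (∀ m ∈ Finset.Icc 2 N, par m ω = p m) ∧ u N ω = j'} := by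
    intro N hN p j'
    have h1 := hPmeas N hN p
    have h2 : MeasurableSet[G (Sn N)] {ω | u N ω = j'} :=
      (hMuvp N hN).1 (measurableSet_singleton j')
    have h : {ω | (∀ m ∈ Finset.Icc 2 N, par m ω = p m) ∧ u N ω = j'}
        = {ω | ∀ m ∈ Finset.Icc 2 N, par m ω = p m} ∩ {ω | u N ω = j'} := by
      ext ω; simp [Set.mem_inter_iff]
    rw [h]
    exact h1.inter h2
  -- positivity and recursion of s
  have hs_pos : ∀ N, 1 ≤ N → 0 < s N := by
    intro N hN
    rw [hs]
    exact Finset.sum_pos (fun i hi => hw i (Finset.mem_Icc.1 hi).1)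
      ⟨1, Finset.mem_Icc.2 ⟨le_rfl, hN⟩⟩
  have hs_succ : ∀ N, s (N + 1) = s N + w (N + 1) := by
    intro N
    rw [hs, hs, Finset.sum_Icc_succ_top (by omega)]
  have hw_nonneg : ∀ m, 1 ≤ m → ∀ N, 1 ≤ N → (0:ℝ) ≤ w m / s N :=
    fun m hm N hN => div_nonneg (hw m hm).le (hs_pos N hN).le
  have hsum_one : ∀ N, 1 ≤ N → w (N+1) / s (N+1) + s N / s (N+1) = 1 := by
    intro N hN
    rw [← add_div, add_comm, ← hs_succ N, div_self (ne_of_gt (hs_pos (N+1) (by omega)))]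
  -- laws of the atomic events
  have hBmeasSet : ∀ m, MeasurableSet {ω | B m ω = true} := by
    intro m
    exact ((hMB m {Sum.inl m} rfl).mono (hGle _) le_rfl) (measurableSet_singleton true)
  have hB'measSet : ∀ m, MeasurableSet {ω | B' m ω = true} := by
    intro m
    exact ((hMB' m {Sum.inr (Sum.inl m)} rfl).mono (hGle _) le_rfl)
      (measurableSet_singleton true)
  have hBfalse : ∀ N, 1 ≤ N →
      μ {ω | B (N+1) ω = false} = ENNReal.ofReal (s N / s (N+1)) := by
    intro N hN
    have hc : {ω | B (N+1) ω = false} = {ω | B (N+1) ω = true}ᶜ := by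
      ext ω; simp
    rw [hc, measure_compl (hBmeasSet (N+1)) (measure_ne_top μ _), measure_univ, hBlaw (N+1) (by omega)]
    have h0 : (0:ℝ) ≤ s N / s (N+1) :=
      div_nonneg (hs_pos N hN).le (hs_pos (N+1) (by omega)).le
    have h0' : (0:ℝ) ≤ w (N+1) / s (N+1) := hw_nonneg (N+1) (by omega) (N+1) (by omega)
    rw [← ENNReal.ofReal_one, ← hsum_one N hN, ENNReal.ofReal_add h0' h0,
      ENNReal.add_sub_cancel_left ENNReal.ofReal_ne_top]
  have hB'false : ∀ N, 1 ≤ N →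
      μ {ω | B' (N+1) ω = false} = ENNReal.ofReal (s N / s (N+1)) := by
    intro N hN
    have hc : {ω | B' (N+1) ω = false} = {ω | B' (N+1) ω = true}ᶜ := by
      ext ω; simp
    rw [hc, measure_compl (hB'measSet (N+1)) (measure_ne_top μ _), measure_univ, hB'law (N+1) (by omega)]
    have h0 : (0:ℝ) ≤ s N / s (N+1) :=
      div_nonneg (hs_pos N hN).le (hs_pos (N+1) (by omega)).le
    have h0' : (0:ℝ) ≤ w (N+1) / s (N+1) := hw_nonneg (N+1) (by omega) (N+1) (by omega)
    rw [← ENNReal.ofReal_one, ← hsum_one N hN, ENNReal.ofReal_add h0' h0,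
      ENNReal.add_sub_cancel_left ENNReal.ofReal_ne_top]
  -- the cancellation identity
  have hmul : ∀ a : ℝ, 0 ≤ a → ∀ N, 1 ≤ N →
      ENNReal.ofReal (a / s N) * ENNReal.ofReal (s N / s (N+1))
        = ENNReal.ofReal (a / s (N+1)) := by
    intro a ha N hN
    have h1 : s N ≠ 0 := ne_of_gt (hs_pos N hN)
    rw [← ENNReal.ofReal_mul (div_nonneg ha (hs_pos N hN).le)]
    congr 1
    rw [div_mul_div_comm, mul_comm a (s N), mul_div_mul_left _ _ h1]
    -- the splitting lemma for one step
  have split3 : ∀ N, 1 ≤ N → ∀ (E A1 A2 A3 : Set Ω), MeasurableSet[G (Sn N)] E →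
      MeasurableSet[G {Sum.inr (Sum.inr N)}] A1 →
      MeasurableSet[G {Sum.inl (N+1)}] A2 →
      MeasurableSet[G {Sum.inr (Sum.inl (N+1))}] A3 →
      μ (E ∩ A1 ∩ A2 ∩ A3) = μ E * μ A1 * μ A2 * μ A3 := by
    intro N hN E A1 A2 A3 hE hA1 hA2 hA3
    have hnm1 : Sum.inr (Sum.inr N) ∉ Sn N := by
      intro h
      simp only [hSn, Set.mem_setOf_eq] at h
      rcases h with ⟨m, h1, h2, h3⟩ | ⟨m, h1, h2, h3⟩ | ⟨m, h1, h2, h3⟩ <;>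
        simp at h3 <;> omega
    have hnm2 : Sum.inl (N+1) ∉ Sn N ∪ {Sum.inr (Sum.inr N)} := by
      intro h
      rcases h with h | h
      · simp only [hSn, Set.mem_setOf_eq] at h
        rcases h with ⟨m, h1, h2, h3⟩ | ⟨m, h1, h2, h3⟩ | ⟨m, h1, h2, h3⟩ <;>
          simp at h3 <;> omega
      · simp at h
    have hnm3 : Sum.inr (Sum.inl (N+1)) ∉ (Sn N ∪ {Sum.inr (Sum.inr N)}) ∪ {Sum.inl (N+1)} := by
      intro h
      rcases h with (h | h) | h
      · simp only [hSn, Set.mem_setOf_eq] at h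
        rcases h with ⟨m, h1, h2, h3⟩ | ⟨m, h1, h2, h3⟩ | ⟨m, h1, h2, h3⟩ <;>
          simp at h3 <;> omega
      · simp at h
      · simp at h
    have d1 : Disjoint (Sn N) {Sum.inr (Sum.inr N)} := Set.disjoint_singleton_right.2 hnm1
    have d2 : Disjoint (Sn N ∪ {Sum.inr (Sum.inr N)}) {Sum.inl (N+1)} :=
      Set.disjoint_singleton_right.2 hnm2
    have d3 : Disjoint ((Sn N ∪ {Sum.inr (Sum.inr N)}) ∪ {Sum.inl (N+1)})
        {Sum.inr (Sum.inl (N+1))} := Set.disjoint_singleton_right.2 hnm3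
    have hEu : MeasurableSet[G (Sn N ∪ {Sum.inr (Sum.inr N)})] E :=
      hGmono Set.subset_union_left _ hE
    have hA1u : MeasurableSet[G (Sn N ∪ {Sum.inr (Sum.inr N)})] A1 :=
      hGmono Set.subset_union_right _ hA1
    have hEA1 : MeasurableSet[G (Sn N ∪ {Sum.inr (Sum.inr N)})] (E ∩ A1) := hEu.inter hA1u
    have hEA1u : MeasurableSet[G ((Sn N ∪ {Sum.inr (Sum.inr N)}) ∪ {Sum.inl (N+1)})] (E ∩ A1) :=
      hGmono Set.subset_union_left _ hEA1
    have hA2u : MeasurableSet[G ((Sn N ∪ {Sum.inr (Sum.inr N)}) ∪ {Sum.inl (N+1)})] A2 :=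
      hGmono Set.subset_union_right _ hA2
    rw [hsplit _ _ d3 _ _ (hEA1u.inter hA2u) hA3, hsplit _ _ d2 _ _ hEA1 hA2,
      hsplit _ _ d1 _ _ hE hA1]
  -- the main induction
  have key : ∀ N, 1 ≤ N → ∀ (p : ℕ → ℕ) (j k : ℕ), 1 ≤ j → j ≤ N → 1 ≤ k → k ≤ N →
      (∀ m, 2 ≤ m → m ≤ N → 1 ≤ p m ∧ p m < m) →
      μ {ω | (∀ m ∈ Finset.Icc 2 N, par m ω = p m) ∧ u N ω = j ∧ v N ω = k}
        = (∏ m ∈ Finset.Icc 2 N, ENNReal.ofReal (w (p m) / s (m-1)))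
          * ENNReal.ofReal (w j / s N) * ENNReal.ofReal (w k / s N) := by
    intro N hN
    induction N, hN using Nat.le_induction with
    | base =>
      intro p j k hj hjN hk hkN hp
      have hj1 : j = 1 := by omega
      have hk1 : k = 1 := by omega
      subst hj1; subst hk1
      have hempty : Finset.Icc 2 1 = (∅ : Finset ℕ) := by decide
      have hev : {ω | (∀ m ∈ Finset.Icc 2 1, par m ω = p m) ∧ u 1 ω = 1 ∧ v 1 ω = 1}
          = Set.univ := by
        ext ω; simp [hempty, hu1, hv1]
      have hs1 : s 1 = w 1 := by rw [hs]; simp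
      rw [hev, measure_univ, hempty]
      simp [hs1, div_self (ne_of_gt (hw 1 le_rfl))]
    | succ n hn IH =>
      intro p j k hj hjN hk hkN hp
      obtain ⟨hp1, hp2'⟩ := hp (n+1) (by omega) le_rfl
      have hp2 : p (n+1) ≤ n := by omega
      have hIcc : Finset.Icc 2 (n+1) = insert (n+1) (Finset.Icc 2 n) := by
        ext x; simp only [Finset.mem_Icc, Finset.mem_insert]; omega
      have hnotmem : (n+1) ∉ Finset.Icc 2 n := by
        intro h; rw [Finset.mem_Icc] at h; omega
      have hprod : (∏ m ∈ Finset.Icc 2 (n+1), ENNReal.ofReal (w (p m) / s (m-1)))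
          = ENNReal.ofReal (w (p (n+1)) / s n)
            * ∏ m ∈ Finset.Icc 2 n, ENNReal.ofReal (w (p m) / s (m-1)) := by
        rw [hIcc, Finset.prod_insert hnotmem]
        norm_num
      have hstep' : ∀ ω,
          u (n+1) ω = (if B (n+1) ω = true then (n+1:ℕ) else u n ω) ∧
          v (n+1) ω = (if B' (n+1) ω = true then (n+1:ℕ) else v n ω) ∧
          par (n+1) ω = (if B (n+1) ω = true then u n ω
              else if B' (n+1) ω = true then v n ω else U n ω) := by
        intro ω
        have h := hstep (n+1) (by omega) ω
        simpa using h
      have hforall : ∀ ω, (∀ m ∈ Finset.Icc 2 (n+1), par m ω = p m) ↔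
          (par (n+1) ω = p (n+1) ∧ ∀ m ∈ Finset.Icc 2 n, par m ω = p m) := by
        intro ω; rw [hIcc, Finset.forall_mem_insert]
      have hIH : ∀ j' k', 1 ≤ j' → j' ≤ n → 1 ≤ k' → k' ≤ n →
          μ {ω | (∀ m ∈ Finset.Icc 2 n, par m ω = p m) ∧ u n ω = j' ∧ v n ω = k'}
            = (∏ m ∈ Finset.Icc 2 n, ENNReal.ofReal (w (p m) / s (m-1)))
              * ENNReal.ofReal (w j' / s n) * ENNReal.ofReal (w k' / s n) :=
        fun j' k' hj' hj'n hk' hk'n =>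
          IH p j' k' hj' hj'n hk' hk'n (fun m h1 h2 => hp m h1 (by omega))
      have hAU : MeasurableSet[G {Sum.inr (Sum.inr n)}] {ω | U n ω = p (n+1)} :=
        hMU n {Sum.inr (Sum.inr n)} rfl (measurableSet_singleton (p (n+1)))
      have hABt : MeasurableSet[G {Sum.inl (n+1)}] {ω | B (n+1) ω = true} :=
        hMB (n+1) {Sum.inl (n+1)} rfl (measurableSet_singleton true)
      have hABf : MeasurableSet[G {Sum.inl (n+1)}] {ω | B (n+1) ω = false} :=
        hMB (n+1) {Sum.inl (n+1)} rfl (measurableSet_singleton false)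
      have hAB't : MeasurableSet[G {Sum.inr (Sum.inl (n+1))}] {ω | B' (n+1) ω = true} :=
        hMB' (n+1) {Sum.inr (Sum.inl (n+1))} rfl (measurableSet_singleton true)
      have hAB'f : MeasurableSet[G {Sum.inr (Sum.inl (n+1))}] {ω | B' (n+1) ω = false} :=
        hMB' (n+1) {Sum.inr (Sum.inl (n+1))} rfl (measurableSet_singleton false)
      have hunivU : MeasurableSet[G {Sum.inr (Sum.inr n)}] (Set.univ : Set Ω) :=
        MeasurableSet.univ
      rcases Nat.lt_or_ge j (n+1) with hj' | hj' <;> rcases Nat.lt_or_ge k (n+1) with hk' | hk'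
      · -- Case A : j ≤ n, k ≤ n
        have hjn' : j ≤ n := by omega
        have hkn' : k ≤ n := by omega
        have hset : {ω | (∀ m ∈ Finset.Icc 2 (n+1), par m ω = p m)
              ∧ u (n+1) ω = j ∧ v (n+1) ω = k}
            = {ω | (∀ m ∈ Finset.Icc 2 n, par m ω = p m) ∧ u n ω = j ∧ v n ω = k}
              ∩ {ω | U n ω = p (n+1)} ∩ {ω | B (n+1) ω = false}
              ∩ {ω | B' (n+1) ω = false} := by
          ext ω
          obtain ⟨hu', hv', hq'⟩ := hstep' ω
          simp only [Set.mem_setOf_eq, Set.mem_inter_iff, hforall ω]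
          constructor
          · rintro ⟨⟨hpn, hpar⟩, huj, hvk⟩
            have hbf : B (n+1) ω = false := by
              cases hb : B (n+1) ω
              · rfl
              · rw [hb] at hu'; simp at hu'; omega
            have hb'f : B' (n+1) ω = false := by
              cases hb : B' (n+1) ω
              · rfl
              · rw [hb] at hv'; simp at hv'; omega
            rw [hbf] at hu' hq'
            rw [hb'f] at hv' hq'
            simp at hu' hv' hq'
            exact ⟨⟨⟨⟨hpar, by omega, by omega⟩, by omega⟩, hbf⟩, hb'f⟩
          · rintro ⟨⟨⟨⟨hpar, huj, hvk⟩, hUn⟩, hbf⟩, hb'f⟩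
            rw [hbf] at hu' hq'
            rw [hb'f] at hv' hq'
            simp at hu' hv' hq'
            exact ⟨⟨by omega, hpar⟩, by omega, by omega⟩
        rw [hset, split3 n hn _ _ _ _ (hE0meas n hn p j k) hAU hABf hAB'f,
          hIH j k hj hjn' hk hkn', hUlaw n hn (p (n+1)) hp1 hp2, hBfalse n hn,
          hB'false n hn, hprod]
        have e1 := hmul (w j) (hw j hj).le n hn
        have e2 := hmul (w k) (hw k hk).le n hn
        calc (∏ m ∈ Finset.Icc 2 n, ENNReal.ofReal (w (p m) / s (m-1)))
              * ENNReal.ofReal (w j / s n) * ENNReal.ofReal (w k / s n)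
              * ENNReal.ofReal (w (p (n+1)) / s n) * ENNReal.ofReal (s n / s (n+1))
              * ENNReal.ofReal (s n / s (n+1))
            = ENNReal.ofReal (w (p (n+1)) / s n)
                * (∏ m ∈ Finset.Icc 2 n, ENNReal.ofReal (w (p m) / s (m-1)))
                * (ENNReal.ofReal (w j / s n) * ENNReal.ofReal (s n / s (n+1)))
                * (ENNReal.ofReal (w k / s n) * ENNReal.ofReal (s n / s (n+1))) := by
              ring
          _ = ENNReal.ofReal (w (p (n+1)) / s n)
                * (∏ m ∈ Finset.Icc 2 n, ENNReal.ofReal (w (p m) / s (m-1)))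
                * ENNReal.ofReal (w j / s (n+1)) * ENNReal.ofReal (w k / s (n+1)) := by
              simp only [e1, e2]
      · -- Case C : j ≤ n, k = n+1
        have hjn' : j ≤ n := by omega
        have hk1 : k = n + 1 := by omega
        subst hk1
        have hset : {ω | (∀ m ∈ Finset.Icc 2 (n+1), par m ω = p m)
              ∧ u (n+1) ω = j ∧ v (n+1) ω = n+1}
            = {ω | (∀ m ∈ Finset.Icc 2 n, par m ω = p m) ∧ u n ω = j ∧ v n ω = p (n+1)}
              ∩ Set.univ ∩ {ω | B (n+1) ω = false} ∩ {ω | B' (n+1) ω = true} := by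
          ext ω
          obtain ⟨hu', hv', hq'⟩ := hstep' ω
          obtain ⟨⟨hu1', hu2'⟩, hv1', hv2'⟩ := hur n hn ω
          simp only [Set.mem_setOf_eq, Set.mem_inter_iff, Set.mem_univ, and_true,
            hforall ω]
          constructor
          · rintro ⟨⟨hpn, hpar⟩, huj, hvk⟩
            have hbf : B (n+1) ω = false := by
              cases hb : B (n+1) ω
              · rfl
              · rw [hb] at hu'; simp at hu'; omega
            have hb't : B' (n+1) ω = true := by
              cases hb : B' (n+1) ω
              · rw [hb] at hv'; simp at hv'; omega
              · rfl
            rw [hbf] at hu' hq'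
            rw [hb't] at hv' hq'
            simp at hu' hq'
            exact ⟨⟨⟨hpar, by omega, by omega⟩, hbf⟩, hb't⟩
          · rintro ⟨⟨⟨hpar, huj, hvk⟩, hbf⟩, hb't⟩
            rw [hbf] at hu' hq'
            rw [hb't] at hv' hq'
            simp at hu' hv' hq'
            exact ⟨⟨by omega, hpar⟩, by omega, hv'⟩
        rw [hset, split3 n hn _ _ _ _ (hE0meas n hn p j (p (n+1))) hunivU hABf hAB't,
          hIH j (p (n+1)) hj hjn' hp1 hp2, measure_univ, hBfalse n hn,
          hB'law (n+1) (by omega), hprod]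
        have e1 := hmul (w j) (hw j hj).le n hn
        calc (∏ m ∈ Finset.Icc 2 n, ENNReal.ofReal (w (p m) / s (m-1)))
              * ENNReal.ofReal (w j / s n) * ENNReal.ofReal (w (p (n+1)) / s n)
              * 1 * ENNReal.ofReal (s n / s (n+1))
              * ENNReal.ofReal (w (n+1) / s (n+1))
            = ENNReal.ofReal (w (p (n+1)) / s n)
                * (∏ m ∈ Finset.Icc 2 n, ENNReal.ofReal (w (p m) / s (m-1)))
                * (ENNReal.ofReal (w j / s n) * ENNReal.ofReal (s n / s (n+1)))
                * ENNReal.ofReal (w (n+1) / s (n+1)) := by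
              ring
          _ = ENNReal.ofReal (w (p (n+1)) / s n)
                * (∏ m ∈ Finset.Icc 2 n, ENNReal.ofReal (w (p m) / s (m-1)))
                * ENNReal.ofReal (w j / s (n+1)) * ENNReal.ofReal (w (n+1) / s (n+1)) := by
              simp only [e1]
      · -- Case B : j = n+1, k ≤ n
        have hkn' : k ≤ n := by omega
        have hj1 : j = n + 1 := by omega
        subst hj1
        have hset : {ω | (∀ m ∈ Finset.Icc 2 (n+1), par m ω = p m)
              ∧ u (n+1) ω = n+1 ∧ v (n+1) ω = k}
            = {ω | (∀ m ∈ Finset.Icc 2 n, par m ω = p m) ∧ u n ω = p (n+1) ∧ v n ω = k}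
              ∩ Set.univ ∩ {ω | B (n+1) ω = true} ∩ {ω | B' (n+1) ω = false} := by
          ext ω
          obtain ⟨hu', hv', hq'⟩ := hstep' ω
          obtain ⟨⟨hu1', hu2'⟩, hv1', hv2'⟩ := hur n hn ω
          simp only [Set.mem_setOf_eq, Set.mem_inter_iff, Set.mem_univ, and_true,
            hforall ω]
          constructor
          · rintro ⟨⟨hpn, hpar⟩, huj, hvk⟩
            have hbt : B (n+1) ω = true := by
              cases hb : B (n+1) ω
              · rw [hb] at hu'; simp at hu'; omega
              · rfl
            have hb'f : B' (n+1) ω = false := by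
              cases hb : B' (n+1) ω
              · rfl
              · rw [hb] at hv'; simp at hv'; omega
            rw [hbt] at hu' hq'
            rw [hb'f] at hv' hq'
            simp at hv' hq'
            exact ⟨⟨⟨hpar, by omega, by omega⟩, hbt⟩, hb'f⟩
          · rintro ⟨⟨⟨hpar, huj, hvk⟩, hbt⟩, hb'f⟩
            rw [hbt] at hu' hq'
            rw [hb'f] at hv' hq'
            simp at hu' hv' hq'
            exact ⟨⟨by omega, hpar⟩, hu', by omega⟩
        rw [hset, split3 n hn _ _ _ _ (hE0meas n hn p (p (n+1)) k) hunivU hABt hAB'f,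
          hIH (p (n+1)) k hp1 hp2 hk hkn', measure_univ, hBlaw (n+1) (by omega),
          hB'false n hn, hprod]
        have e2 := hmul (w k) (hw k hk).le n hn
        calc (∏ m ∈ Finset.Icc 2 n, ENNReal.ofReal (w (p m) / s (m-1)))
              * ENNReal.ofReal (w (p (n+1)) / s n) * ENNReal.ofReal (w k / s n)
              * 1 * ENNReal.ofReal (w (n+1) / s (n+1))
              * ENNReal.ofReal (s n / s (n+1))
            = ENNReal.ofReal (w (p (n+1)) / s n)
                * (∏ m ∈ Finset.Icc 2 n, ENNReal.ofReal (w (p m) / s (m-1)))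
                * ENNReal.ofReal (w (n+1) / s (n+1))
                * (ENNReal.ofReal (w k / s n) * ENNReal.ofReal (s n / s (n+1))) := by
              ring
          _ = ENNReal.ofReal (w (p (n+1)) / s n)
                * (∏ m ∈ Finset.Icc 2 n, ENNReal.ofReal (w (p m) / s (m-1)))
                * ENNReal.ofReal (w (n+1) / s (n+1)) * ENNReal.ofReal (w k / s (n+1)) := by
              simp only [e2]
      · -- Case D : j = k = n+1
        have hj1 : j = n + 1 := by omega
        have hk1 : k = n + 1 := by omega
        subst hj1; subst hk1
        have hset : {ω | (∀ m ∈ Finset.Icc 2 (n+1), par m ω = p m)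
              ∧ u (n+1) ω = n+1 ∧ v (n+1) ω = n+1}
            = {ω | (∀ m ∈ Finset.Icc 2 n, par m ω = p m) ∧ u n ω = p (n+1)}
              ∩ Set.univ ∩ {ω | B (n+1) ω = true} ∩ {ω | B' (n+1) ω = true} := by
          ext ω
          obtain ⟨hu', hv', hq'⟩ := hstep' ω
          obtain ⟨⟨hu1', hu2'⟩, hv1', hv2'⟩ := hur n hn ω
          simp only [Set.mem_setOf_eq, Set.mem_inter_iff, Set.mem_univ, and_true,
            hforall ω]
          constructor
          · rintro ⟨⟨hpn, hpar⟩, huj, hvk⟩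
            have hbt : B (n+1) ω = true := by
              cases hb : B (n+1) ω
              · rw [hb] at hu'; simp at hu'; omega
              · rfl
            have hb't : B' (n+1) ω = true := by
              cases hb : B' (n+1) ω
              · rw [hb] at hv'; simp at hv'; omega
              · rfl
            rw [hbt] at hu' hq'
            simp at hq'
            exact ⟨⟨⟨hpar, by omega⟩, hbt⟩, hb't⟩
          · rintro ⟨⟨⟨hpar, huj⟩, hbt⟩, hb't⟩
            rw [hbt] at hu' hq'
            rw [hb't] at hv'
            simp at hu' hv' hq'
            exact ⟨⟨by omega, hpar⟩, hu', hv'⟩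
        have hUnion : {ω | (∀ m ∈ Finset.Icc 2 n, par m ω = p m) ∧ u n ω = p (n+1)}
            = ⋃ k' ∈ Finset.Icc 1 n,
              {ω | (∀ m ∈ Finset.Icc 2 n, par m ω = p m) ∧ u n ω = p (n+1) ∧ v n ω = k'} := by
          ext ω
          simp only [Set.mem_setOf_eq, Set.mem_iUnion, Finset.mem_Icc]
          constructor
          · rintro ⟨h1, h2⟩
            obtain ⟨-, hv1', hv2'⟩ := hur n hn ω
            exact ⟨v n ω, ⟨hv1', hv2'⟩, h1, h2, rfl⟩
          · rintro ⟨k', -, h1, h2, -⟩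
            exact ⟨h1, h2⟩
        have hmE : μ {ω | (∀ m ∈ Finset.Icc 2 n, par m ω = p m) ∧ u n ω = p (n+1)}
            = (∏ m ∈ Finset.Icc 2 n, ENNReal.ofReal (w (p m) / s (m-1)))
              * ENNReal.ofReal (w (p (n+1)) / s n) := by
          rw [hUnion, measure_biUnion_finset ?_ ?_]
          · have hsum1 : ∑ k' ∈ Finset.Icc 1 n, ENNReal.ofReal (w k' / s n) = 1 := by
              rw [← ENNReal.ofReal_sum_of_nonneg
                (fun i hi => hw_nonneg i (Finset.mem_Icc.1 hi).1 n hn),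
                ← Finset.sum_div, ← hs n, div_self (ne_of_gt (hs_pos n hn)),
                ENNReal.ofReal_one]
            calc ∑ k' ∈ Finset.Icc 1 n,
                  μ {ω | (∀ m ∈ Finset.Icc 2 n, par m ω = p m)
                    ∧ u n ω = p (n+1) ∧ v n ω = k'}
                = ∑ k' ∈ Finset.Icc 1 n,
                    (∏ m ∈ Finset.Icc 2 n, ENNReal.ofReal (w (p m) / s (m-1)))
                      * ENNReal.ofReal (w (p (n+1)) / s n) * ENNReal.ofReal (w k' / s n) := by
                  refine Finset.sum_congr rfl fun k' hk'' => ?_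
                  rw [Finset.mem_Icc] at hk''
                  exact hIH (p (n+1)) k' hp1 hp2 hk''.1 hk''.2
              _ = (∏ m ∈ Finset.Icc 2 n, ENNReal.ofReal (w (p m) / s (m-1)))
                    * ENNReal.ofReal (w (p (n+1)) / s n)
                    * ∑ k' ∈ Finset.Icc 1 n, ENNReal.ofReal (w k' / s n) := by
                  rw [← Finset.mul_sum]
              _ = (∏ m ∈ Finset.Icc 2 n, ENNReal.ofReal (w (p m) / s (m-1)))
                    * ENNReal.ofReal (w (p (n+1)) / s n) := by
                  rw [hsum1, mul_one]
          · intro a ha b hb hab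
            refine Set.disjoint_left.2 fun ω hωa hωb => hab ?_
            have h1 : v n ω = a := hωa.2.2
            have h2 : v n ω = b := hωb.2.2
            omega
          · intro b hb
            exact (hGle (Sn n)) _ (hE0meas n hn p (p (n+1)) b)
        rw [hset, split3 n hn _ _ _ _ (hE1meas n hn p (p (n+1))) hunivU hABt hAB't,
          hmE, measure_univ, hBlaw (n+1) (by omega), hB'law (n+1) (by omega), hprod]
        ring
  exact key n hn π j k hj hjn hk hkn hπ
end

section
/- Let (L_i)_{i≥1} be i.i.d. positive random variables with E[L^{2a}] < ∞ for some a > 0, and T_i = L_1 + ⋯ + L_i. Then for any real b and any ℓ > 1, the series Σ_{i=1}^∞ L_{i+1}^a (log T_i)^b / T_i^ℓ converges almost surely. -/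
open MeasureTheory ProbabilityTheory Finset Filter
open scoped Topology

/-- **Lemma 5.2, convergent case.**  For i.i.d. positive `(L_i)` with `E[L^{2a}] < ∞`,
for any real `b` and any `ℓ > 1`, the series
`∑_i L_{i+1}^a (log T_i)^b / T_i^ℓ` (restricted to indices with `T_i > 1`)
converges almost surely. -/
theorem sum_renewal_summable
    {Ω : Type*} [MeasurableSpace Ω] (μ : Measure Ω) [IsProbabilityMeasure μ]
    (L : ℕ → Ω → ℝ)
    (hmeas : ∀ i, Measurable (L i))
    (hindep : iIndepFun L μ)
    (hident : ∀ i, IdentDistrib (L i) (L 1) μ μ)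
    (hpos : ∀ i ω, 0 < L i ω)
    (a : ℝ) (ha : 0 < a)
    (hmom : Integrable (fun ω => L 1 ω ^ (2 * a)) μ)
    (hint : Integrable (L 1) μ)
    (b ℓ : ℝ) (hℓ : 1 < ℓ) :
    ∀ᵐ ω ∂μ, Summable (fun i : ℕ =>
      if 1 < ∑ j ∈ Finset.Icc 1 i, L j ω then
        L (i + 1) ω ^ a * Real.log (∑ j ∈ Finset.Icc 1 i, L j ω) ^ b
          / (∑ j ∈ Finset.Icc 1 i, L j ω) ^ ℓ
      else 0) := by
  have h2a : (0:ℝ) < 2 * a := by linarith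
  set m := ∫ ω, L 1 ω ∂μ with hm_def
  have hm : 0 < m := by
    rw [hm_def, integral_pos_iff_support_of_nonneg (fun ω => (hpos 1 ω).le) hint]
    have hsupp : Function.support (L 1) = Set.univ :=
      Set.eq_univ_of_forall fun ω => (hpos 1 ω).ne'
    rw [hsupp]
    simp
  set ℓ' := (1 + ℓ) / 2 with hℓ'def
  have hℓ'1 : 1 < ℓ' := by rw [hℓ'def]; linarith
  have hℓ'ℓ : ℓ' < ℓ := by rw [hℓ'def]; linarith
  have hℓ'0 : (0:ℝ) < ℓ' := by linarith
  -- Strong law of large numbers for the shifted sequence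
  have hslln : ∀ᵐ ω ∂μ,
      Tendsto (fun n : ℕ => (∑ i ∈ range n, L (1 + i) ω) / n) atTop (𝓝 m) := by
    have := strong_law_ae_real (μ := μ) (fun i => L (1 + i)) hint
      (fun i j hij => hindep.indepFun (by omega : (1 + i) ≠ (1 + j)))
      (fun i => (hident (1 + i)).trans (hident 1).symm)
    simpa using this
  -- A.s. summability of ∑ L_{i+1}^{2a} i^{-ℓ'}
  have hB : ∀ᵐ ω ∂μ,
      Summable (fun i : ℕ => L (i + 1) ω ^ (2 * a) * (i : ℝ) ^ (-ℓ')) := by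
    set g : ℕ → Ω → ENNReal :=
      fun i ω => ENNReal.ofReal (L (i + 1) ω ^ (2 * a) * (i : ℝ) ^ (-ℓ')) with hg_def
    have hmeas2a : ∀ i : ℕ, Measurable (fun ω => L i ω ^ (2 * a)) :=
      fun i => (Real.continuous_rpow_const h2a.le).measurable.comp (hmeas i)
    have hgmeas : ∀ i, Measurable (g i) :=
      fun i => ENNReal.measurable_ofReal.comp ((hmeas2a (i + 1)).mul_const _)
    have hc : ∫⁻ ω, ENNReal.ofReal (L 1 ω ^ (2 * a)) ∂μ < ⊤ := by
      have := hmom.hasFiniteIntegral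
      rwa [hasFiniteIntegral_iff_ofReal
        (Eventually.of_forall fun ω => Real.rpow_nonneg (hpos 1 ω).le _)] at this
    have heq : ∀ i : ℕ, ∫⁻ ω, g i ω ∂μ =
        ENNReal.ofReal ((i : ℝ) ^ (-ℓ')) * ∫⁻ ω, ENNReal.ofReal (L 1 ω ^ (2 * a)) ∂μ := by
      intro i
      have h1 : ∀ ω, g i ω =
          ENNReal.ofReal ((i : ℝ) ^ (-ℓ')) * ENNReal.ofReal (L (i + 1) ω ^ (2 * a)) := by
        intro ω
        show ENNReal.ofReal (L (i + 1) ω ^ (2 * a) * (i : ℝ) ^ (-ℓ')) = _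
        rw [mul_comm (L (i + 1) ω ^ (2 * a)),
          ENNReal.ofReal_mul (Real.rpow_nonneg (Nat.cast_nonneg i) _)]
      simp only [h1]
      rw [lintegral_const_mul _ ((hmeas2a (i + 1)).ennreal_ofReal)]
      congr 1
      have hid : IdentDistrib (fun ω => ENNReal.ofReal (L (i + 1) ω ^ (2 * a)))
          (fun ω => ENNReal.ofReal (L 1 ω ^ (2 * a))) μ μ :=
        (hident (i + 1)).comp
          (ENNReal.measurable_ofReal.comp (Real.continuous_rpow_const h2a.le).measurable)
      exact hid.lintegral_eq
    have hsumreal : Summable (fun i : ℕ => (i : ℝ) ^ (-ℓ')) :=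
      Real.summable_nat_rpow.2 (by linarith)
    have key : ∫⁻ ω, ∑' i, g i ω ∂μ < ⊤ := by
      rw [lintegral_tsum (fun i => (hgmeas i).aemeasurable)]
      simp only [heq]
      rw [ENNReal.tsum_mul_right]
      apply ENNReal.mul_lt_top
      · rw [← ENNReal.ofReal_tsum_of_nonneg
          (fun i => Real.rpow_nonneg (Nat.cast_nonneg i) _) hsumreal]
        exact ENNReal.ofReal_lt_top
      · exact hc
    filter_upwards [ae_lt_top (Measurable.ennreal_tsum hgmeas) key.ne] with ω hω
    have hsum := ENNReal.summable_toReal hω.ne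
    have hnn : ∀ i : ℕ, 0 ≤ L (i + 1) ω ^ (2 * a) * (i : ℝ) ^ (-ℓ') :=
      fun i => mul_nonneg (Real.rpow_nonneg (hpos (i+1) ω).le _)
        (Real.rpow_nonneg (Nat.cast_nonneg i) _)
    have : ∀ i : ℕ, (g i ω).toReal = L (i + 1) ω ^ (2 * a) * (i : ℝ) ^ (-ℓ') := by
      intro i
      rw [hg_def, ENNReal.toReal_ofReal (hnn i)]
    simpa only [this] using hsum
  -- combine
  filter_upwards [hslln, hB] with ω hA hBω
  set T : ℕ → ℝ := fun i => ∑ j ∈ Finset.Icc 1 i, L j ω with hT_def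
  have hT_eq : ∀ i : ℕ, (∑ j ∈ Finset.Icc 1 i, L j ω) = T i := fun i => rfl
  simp only [hT_eq]
  have hTsum : ∀ i : ℕ, T i = ∑ j ∈ range i, L (1 + j) ω := by
    intro i
    show (∑ j ∈ Finset.Icc 1 i, L j ω) = _
    rw [← Finset.Ico_add_one_right_eq_Icc, Finset.sum_Ico_eq_sum_range]
    simp
  have hA' : Tendsto (fun n : ℕ => T n / n) atTop (𝓝 m) := by
    simp only [hTsum]; exact hA
  have hM0 : (0:ℝ) < m / 2 := by linarith
  have hTi : ∀ᶠ i : ℕ in atTop, m / 2 * (i : ℝ) ≤ T i := by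
    have h1 : ∀ᶠ i : ℕ in atTop, m / 2 < T i / i :=
      hA'.eventually (eventually_gt_nhds (by linarith))
    filter_upwards [h1, eventually_ge_atTop 1] with i hi hi1
    have hi0 : (0:ℝ) < (i : ℝ) := by exact_mod_cast hi1
    calc m / 2 * (i : ℝ) ≤ T i / i * i := by
          exact mul_le_mul_of_nonneg_right hi.le hi0.le
      _ = T i := div_mul_cancel₀ _ hi0.ne'
  have hTbig : ∀ᶠ i : ℕ in atTop, Real.exp 1 ≤ T i := by
    have hlin : Tendsto (fun i : ℕ => m / 2 * (i : ℝ)) atTop atTop :=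
      (tendsto_natCast_atTop_atTop (R := ℝ)).const_mul_atTop hM0
    filter_upwards [hTi, hlin.eventually_ge_atTop (Real.exp 1)] with i h1 h2
    linarith
  have hexp1 : (1:ℝ) < Real.exp 1 := by
    have := Real.add_one_le_exp (1:ℝ); linarith
  -- logarithm bound
  obtain ⟨C, hC0, hClog⟩ : ∃ C > (0:ℝ), ∀ i : ℕ, Real.exp 1 ≤ T i →
      Real.log (T i) ^ b ≤ C * T i ^ (ℓ - ℓ') := by
    have hε0 : (0:ℝ) < ℓ - ℓ' := by linarith
    rcases le_or_gt b 0 with hb | hb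
    · refine ⟨1, one_pos, fun i hi => ?_⟩
      have hT1 : (1:ℝ) ≤ T i := le_trans hexp1.le hi
      have hlog1 : (1:ℝ) ≤ Real.log (T i) := by
        calc (1:ℝ) = Real.log (Real.exp 1) := (Real.log_exp 1).symm
          _ ≤ Real.log (T i) := Real.log_le_log (Real.exp_pos 1) hi
      have h2 : Real.log (T i) ^ b ≤ 1 :=
        Real.rpow_le_one_of_one_le_of_nonpos hlog1 hb
      have h3 : (1:ℝ) ≤ T i ^ (ℓ - ℓ') := by
        calc (1:ℝ) = (1:ℝ) ^ (ℓ - ℓ') := (Real.one_rpow _).symm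
          _ ≤ T i ^ (ℓ - ℓ') := Real.rpow_le_rpow zero_le_one hT1 hε0.le
      linarith
    · set δ := (ℓ - ℓ') / b with hδdef
      have hδ0 : 0 < δ := div_pos hε0 hb
      refine ⟨(1 / δ) ^ b, Real.rpow_pos_of_pos (by positivity) b, fun i hi => ?_⟩
      have hT0 : (0:ℝ) < T i := lt_of_lt_of_le (Real.exp_pos 1) hi
      have hlognn : 0 ≤ Real.log (T i) :=
        Real.log_nonneg (le_trans hexp1.le hi)
      have hlog : Real.log (T i) ≤ T i ^ δ / δ := Real.log_le_rpow_div hT0.le hδ0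
      calc Real.log (T i) ^ b ≤ (T i ^ δ / δ) ^ b :=
            Real.rpow_le_rpow hlognn hlog hb.le
        _ = (T i ^ δ) ^ b / δ ^ b :=
            Real.div_rpow (Real.rpow_nonneg hT0.le _) hδ0.le b
        _ = T i ^ (δ * b) / δ ^ b := by rw [← Real.rpow_mul hT0.le]
        _ = T i ^ (ℓ - ℓ') / δ ^ b := by rw [hδdef, div_mul_cancel₀ _ hb.ne']
        _ = (1 / δ) ^ b * T i ^ (ℓ - ℓ') := by
            rw [Real.div_rpow zero_le_one hδ0.le, Real.one_rpow]
            ring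
  set D := C * (m / 2) ^ (-ℓ') with hD_def
  have hD0 : 0 < D := by
    rw [hD_def]; exact mul_pos hC0 (Real.rpow_pos_of_pos hM0 _)
  -- eventual bound
  have hbound : ∀ᶠ i : ℕ in atTop,
      (if 1 < T i then L (i + 1) ω ^ a * Real.log (T i) ^ b / T i ^ ℓ else 0)
        ≤ D * (i : ℝ) ^ (-ℓ') + D * (L (i + 1) ω ^ (2 * a) * (i : ℝ) ^ (-ℓ')) := by
    filter_upwards [hTi, hTbig, eventually_ge_atTop 1] with i h1 h2 h3
    have hT1 : (1:ℝ) < T i := lt_of_lt_of_le hexp1 h2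
    rw [if_pos hT1]
    have hT0 : (0:ℝ) < T i := by linarith
    have hi0 : (0:ℝ) < (i : ℝ) := by exact_mod_cast h3
    have hL := hpos (i + 1) ω
    have hLa : L (i + 1) ω ^ a ≤ 1 + L (i + 1) ω ^ (2 * a) := by
      rcases le_or_gt (L (i + 1) ω) 1 with hL1 | hL1
      · have : L (i + 1) ω ^ a ≤ 1 := Real.rpow_le_one hL.le hL1 ha.le
        have hnn : 0 ≤ L (i + 1) ω ^ (2 * a) := Real.rpow_nonneg hL.le _
        linarith
      · have : L (i + 1) ω ^ a ≤ L (i + 1) ω ^ (2 * a) :=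
          Real.rpow_le_rpow_of_exponent_le hL1.le (by linarith)
        linarith
    have e1 : Real.log (T i) ^ b / T i ^ ℓ ≤ C * T i ^ (-ℓ') := by
      have step := (div_le_div_iff_of_pos_right (Real.rpow_pos_of_pos hT0 ℓ)).2 (hClog i h2)
      calc Real.log (T i) ^ b / T i ^ ℓ ≤ C * T i ^ (ℓ - ℓ') / T i ^ ℓ := step
        _ = C * (T i ^ (ℓ - ℓ') / T i ^ ℓ) := mul_div_assoc _ _ _
        _ = C * T i ^ (-ℓ') := by
            rw [← Real.rpow_sub hT0]
            congr 2
            ring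
    have e2 : T i ^ (-ℓ') ≤ (m / 2) ^ (-ℓ') * (i : ℝ) ^ (-ℓ') := by
      rw [← Real.mul_rpow hM0.le hi0.le]
      exact Real.rpow_le_rpow_of_nonpos (by positivity) h1 (by linarith)
    have hlogb0 : 0 ≤ Real.log (T i) ^ b / T i ^ ℓ :=
      div_nonneg (Real.rpow_nonneg (Real.log_nonneg hT1.le) _)
        (Real.rpow_nonneg hT0.le _)
    have e3 : C * T i ^ (-ℓ') ≤ C * ((m / 2) ^ (-ℓ') * (i : ℝ) ^ (-ℓ')) :=
      mul_le_mul_of_nonneg_left e2 hC0.le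
    calc L (i + 1) ω ^ a * Real.log (T i) ^ b / T i ^ ℓ
        = L (i + 1) ω ^ a * (Real.log (T i) ^ b / T i ^ ℓ) := mul_div_assoc _ _ _
      _ ≤ (1 + L (i + 1) ω ^ (2 * a)) * (C * ((m / 2) ^ (-ℓ') * (i : ℝ) ^ (-ℓ'))) := by
          apply mul_le_mul hLa (e1.trans e3) hlogb0
          have hnn : 0 ≤ L (i + 1) ω ^ (2 * a) := Real.rpow_nonneg hL.le _
          linarith
      _ = D * (i : ℝ) ^ (-ℓ') + D * (L (i + 1) ω ^ (2 * a) * (i : ℝ) ^ (-ℓ')) := by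
          rw [hD_def]; ring
  have hgsum : Summable (fun i : ℕ =>
      D * (i : ℝ) ^ (-ℓ') + D * (L (i + 1) ω ^ (2 * a) * (i : ℝ) ^ (-ℓ'))) :=
    ((Real.summable_nat_rpow.2 (by linarith)).mul_left D).add (hBω.mul_left D)
  obtain ⟨N, hN⟩ := eventually_atTop.1 hbound
  rw [← summable_nat_add_iff N]
  refine Summable.of_nonneg_of_le (fun n => ?_) (fun n => hN (n + N) (by omega))
    ((summable_nat_add_iff N).2 hgsum)
  split_ifs with h
  · apply div_nonneg _ (Real.rpow_nonneg (by linarith) _)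
    exact mul_nonneg (Real.rpow_nonneg (hpos _ ω).le _)
      (Real.rpow_nonneg (Real.log_nonneg h.le) _)
  · exact le_rfl
end

section
/- Let μ(x) = (α/x)(log x)^{α−1} e^{β (log x)^α} for x > 1, with α > 0 and β ≥ 0. For T > e, L > 0 with L/T ≤ 1 and L (log T)^{max(α,1)−1}/T ≤ 1, and integer ℓ ≥ 2, the quantity R^{(ℓ)} = ∫_0^L u^{ℓ−1} (μ(T+u)/μ(T)) du satisfies |R^{(ℓ)} − L^ℓ/ℓ| ≤ c · L^{ℓ+1} (log T)^{max(α,1)−1}/T, where c > 0 depends only on α and β. -/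
open MeasureTheory Real

/-- The memory kernel `μ₁(x) = (α/x)(log x)^{α-1} e^{β (log x)^α}`. -/
noncomputable def mu1 (α β x : ℝ) : ℝ :=
  (α / x) * Real.log x ^ (α - 1) * Real.exp (β * Real.log x ^ α)

/-- The kernel-weighted moment `R^{(ℓ)} = ∫_0^L u^{ℓ-1} μ₁(T+u)/μ₁(T) du`. -/
noncomputable def Rmom1 (α β T L : ℝ) (ℓ : ℕ) : ℝ :=
  ∫ u in (0 : ℝ)..L, u ^ ((ℓ : ℝ) - 1) * (mu1 α β (T + u) / mu1 α β T)

lemma abs_exp_sub_one_le'' (t : ℝ) : |Real.exp t - 1| ≤ |t| * Real.exp |t| := by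
  rcases le_or_gt 0 t with ht | ht
  · rw [abs_of_nonneg ht, abs_of_nonneg (by linarith [Real.one_le_exp ht] : (0:ℝ) ≤ Real.exp t - 1)]
    have h1 : (1 - t) * Real.exp t ≤ Real.exp (-t) * Real.exp t :=
      mul_le_mul_of_nonneg_right (Real.add_one_le_exp (-t) |>.trans_eq' (by ring)) (Real.exp_pos t).le
    rw [← Real.exp_add, neg_add_cancel, Real.exp_zero] at h1
    nlinarith
  · rw [abs_of_neg ht, abs_of_nonpos (by linarith [Real.exp_lt_one_iff.mpr ht] : Real.exp t - 1 ≤ 0)]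
    have h1 := Real.add_one_le_exp t
    have h2 := Real.one_le_exp (le_of_lt (neg_pos.mpr ht))
    nlinarith

lemma mu1_eq_exp' (α β x : ℝ) (hα : 0 < α) (hx : 1 < x) :
    mu1 α β x = Real.exp (Real.log α - Real.log x + (α - 1) * Real.log (Real.log x)
      + β * Real.log x ^ α) := by
  have hx0 : 0 < x := by linarith
  have hlog : 0 < Real.log x := Real.log_pos hx
  have e1 : Real.log x ^ (α - 1) = Real.exp ((α - 1) * Real.log (Real.log x)) := by
    rw [Real.rpow_def_of_pos hlog, mul_comm]
  rw [mu1, e1, Real.exp_add, Real.exp_add, Real.exp_sub, Real.exp_log hα, Real.exp_log hx0]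

set_option maxHeartbeats 1000000 in
/-- **Lemma 5.1, case `μ = μ₁` (deterministic core).**
For `T > e`, `0 < L`, `L/T ≤ 1` and `L (log T)^{max(α,1)-1}/T ≤ 1`, and any integer `ℓ ≥ 2`,
`|R^{(ℓ)} - L^ℓ/ℓ| ≤ c L^{ℓ+1} (log T)^{max(α,1)-1}/T` for a constant `c > 0` depending only
on `α` and `β`. -/
theorem moment_estimate_mu1 (α β : ℝ) (hα : 0 < α) (hβ : 0 ≤ β) :
    ∃ c : ℝ, 0 < c ∧ ∀ (T L : ℝ) (ℓ : ℕ), Real.exp 1 < T → 0 < L → L / T ≤ 1 →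
      L * Real.log T ^ (max α 1 - 1) / T ≤ 1 → 2 ≤ ℓ →
      |Rmom1 α β T L ℓ - L ^ (ℓ : ℝ) / ℓ|
        ≤ c * L ^ ((ℓ : ℝ) + 1) * Real.log T ^ (max α 1 - 1) / T := by
  set m : ℝ := max α 1 - 1 with hm
  have hm0 : 0 ≤ m := by
    have := le_max_right α 1
    simp only [hm]; linarith
  set K0 : ℝ := 1 + |α - 1| + β * α * (2:ℝ) ^ α with hK0def
  have h2α : (0:ℝ) < (2:ℝ) ^ α := Real.rpow_pos_of_pos (by norm_num) α
  have hK0 : 0 < K0 := by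
    have := abs_nonneg (α - 1)
    have : 0 ≤ β * α * (2:ℝ) ^ α := by positivity
    simp only [hK0def]; positivity
  refine ⟨K0 * Real.exp K0, by positivity, ?_⟩
  intro T L ℓ hT hL hLT hLm hℓ
  have hT0 : 0 < T := lt_trans (Real.exp_pos 1) hT
  have hT1 : 1 < T := by
    have := Real.add_one_le_exp 1
    linarith
  have hlogT : 1 < Real.log T := by
    have := Real.log_lt_log (Real.exp_pos 1) hT
    rwa [Real.log_exp] at this
  have hlogT0 : 0 < Real.log T := by linarith
  have hLle : L ≤ T := (div_le_one hT0).mp hLT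
  have hlogTm1 : 1 ≤ Real.log T ^ m := Real.one_le_rpow hlogT.le hm0
  set p : ℝ := (ℓ : ℝ) - 1 with hp
  have hℓ2 : (2:ℝ) ≤ (ℓ:ℝ) := by exact_mod_cast hℓ
  have hp1 : 1 ≤ p := by simp only [hp]; linarith
  -- the logarithm of mu1 and its derivative
  set s : Set ℝ := Set.Icc T (T + L) with hs
  set h : ℝ → ℝ := fun x => Real.log α - Real.log x + (α - 1) * Real.log (Real.log x)
      + β * Real.log x ^ α with hh
  set h' : ℝ → ℝ := fun x => -x⁻¹ + (α - 1) * ((Real.log x)⁻¹ * x⁻¹)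
      + β * (α * Real.log x ^ (α - 1) * x⁻¹) with hh'
  have hxfacts : ∀ x ∈ s, 1 < x ∧ 1 < Real.log x ∧ Real.log x ≤ 2 * Real.log T := by
    intro x hx
    obtain ⟨hx1, hx2⟩ := hx
    have hx1' : 1 < x := lt_of_lt_of_le hT1 hx1
    have hlx : 1 < Real.log x := by
      have := Real.log_le_log hT0 hx1
      linarith
    refine ⟨hx1', hlx, ?_⟩
    have h2T : x ≤ 2 * T := by linarith
    have := Real.log_le_log (by linarith : (0:ℝ) < x) h2T
    have hl2 : Real.log (2 * T) = Real.log 2 + Real.log T :=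
      Real.log_mul (by norm_num) (ne_of_gt hT0)
    have hl2' : Real.log 2 ≤ 1 := by
      have := Real.log_two_lt_d9
      linarith
    linarith
  have hderiv : ∀ x ∈ s, HasDerivWithinAt h (h' x) s x := by
    intro x hx
    obtain ⟨hx1, hlx, _⟩ := hxfacts x hx
    have hx0 : x ≠ 0 := by linarith
    have hlx0 : Real.log x ≠ 0 := by linarith
    have dlog := Real.hasDerivAt_log hx0
    have d2 : HasDerivAt (fun x => Real.log (Real.log x)) ((Real.log x)⁻¹ * x⁻¹) x :=
      (Real.hasDerivAt_log hlx0).comp x dlog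
    have d3 : HasDerivAt (fun x => Real.log x ^ α) (x⁻¹ * α * Real.log x ^ (α - 1)) x :=
      dlog.rpow_const (Or.inl hlx0)
    have dall := (((hasDerivAt_const x (Real.log α)).sub dlog).add
      (HasDerivAt.const_mul (α - 1) d2)).add (HasDerivAt.const_mul β d3)
    have : HasDerivAt h (h' x) x := by
      refine dall.congr_deriv ?_
      simp only [hh']
      ring
    exact this.hasDerivWithinAt
  -- bound on the derivative
  have hbound : ∀ x ∈ s, ‖h' x‖ ≤ K0 * (Real.log T ^ m / T) := by
    intro x hx
    obtain ⟨hx1, hlx, hlx2⟩ := hxfacts x hx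
    have hx0 : 0 < x := by linarith
    have hxT : T ≤ x := hx.1
    have e1 : x⁻¹ ≤ T⁻¹ := by
      apply inv_anti₀ hT0 hxT
    have e1' : (0:ℝ) < x⁻¹ := by positivity
    have e4 : (Real.log x)⁻¹ ≤ 1 := by
      apply inv_le_one_of_one_le₀ hlx.le
    have e4' : (0:ℝ) < (Real.log x)⁻¹ := by
      have : (0:ℝ) < Real.log x := by linarith
      positivity
    have e3 : Real.log x ^ (α - 1) ≤ 2 ^ α * Real.log T ^ m := by
      rcases le_total α 1 with h1 | h1
      · have hmm : m = 0 := by rw [hm, max_eq_right h1]; ring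
        have b1 : Real.log x ^ (α - 1) ≤ 1 :=
          Real.rpow_le_one_of_one_le_of_nonpos hlx.le (by linarith)
        have b2 : (1:ℝ) ≤ 2 ^ α := Real.one_le_rpow one_le_two hα.le
        rw [hmm, Real.rpow_zero, mul_one]
        linarith
      · have hmm : m = α - 1 := by rw [hm, max_eq_left h1]
        have hlxnn : (0:ℝ) ≤ Real.log x := by linarith
        calc Real.log x ^ (α - 1) ≤ (2 * Real.log T) ^ (α - 1) :=
              Real.rpow_le_rpow hlxnn hlx2 (by linarith)
          _ = 2 ^ (α - 1) * Real.log T ^ (α - 1) := Real.mul_rpow (by norm_num) hlogT0.le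
          _ ≤ 2 ^ α * Real.log T ^ m := by
              rw [hmm]
              have : (2:ℝ) ^ (α - 1) ≤ 2 ^ α :=
                Real.rpow_le_rpow_of_exponent_le one_le_two (by linarith)
              have hTp : (0:ℝ) ≤ Real.log T ^ (α - 1) := Real.rpow_nonneg hlogT0.le _
              nlinarith
    have e3' : (0:ℝ) ≤ Real.log x ^ (α - 1) := Real.rpow_nonneg (by linarith) _
    have hTinv : T⁻¹ ≤ Real.log T ^ m / T := by
      rw [div_eq_mul_inv]
      nlinarith [inv_pos.mpr hT0]
    have hTinv0 : (0:ℝ) < T⁻¹ := by positivity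
    rw [Real.norm_eq_abs]
    have tri : |h' x| ≤ |(-x⁻¹)| + |(α - 1) * ((Real.log x)⁻¹ * x⁻¹)|
        + |β * (α * Real.log x ^ (α - 1) * x⁻¹)| := by
      simp only [hh']
      exact (abs_add_le _ _).trans (by gcongr; exact abs_add_le _ _)
    have t1 : |(-x⁻¹)| ≤ Real.log T ^ m / T := by
      rw [abs_neg, abs_of_pos e1']
      linarith
    have t2 : |(α - 1) * ((Real.log x)⁻¹ * x⁻¹)| ≤ |α - 1| * (Real.log T ^ m / T) := by
      rw [abs_mul]
      have : |(Real.log x)⁻¹ * x⁻¹| ≤ Real.log T ^ m / T := by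
        rw [abs_of_pos (mul_pos e4' e1')]
        calc (Real.log x)⁻¹ * x⁻¹ ≤ 1 * x⁻¹ := mul_le_mul_of_nonneg_right e4 e1'.le
          _ = x⁻¹ := one_mul _
          _ ≤ T⁻¹ := e1
          _ ≤ _ := hTinv
      exact mul_le_mul_of_nonneg_left this (abs_nonneg _)
    have t3 : |β * (α * Real.log x ^ (α - 1) * x⁻¹)|
        ≤ β * α * 2 ^ α * (Real.log T ^ m / T) := by
      rw [abs_of_nonneg (by positivity)]
      calc β * (α * Real.log x ^ (α - 1) * x⁻¹)
          ≤ β * (α * (2 ^ α * Real.log T ^ m) * T⁻¹) := by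
            apply mul_le_mul_of_nonneg_left _ hβ
            apply mul_le_mul (mul_le_mul_of_nonneg_left e3 hα.le) e1 e1'.le (by positivity)
        _ = β * α * 2 ^ α * (Real.log T ^ m * T⁻¹) := by ring
        _ = β * α * 2 ^ α * (Real.log T ^ m / T) := by rw [div_eq_mul_inv]
    calc |h' x| ≤ _ := tri
      _ ≤ Real.log T ^ m / T + |α - 1| * (Real.log T ^ m / T)
          + β * α * 2 ^ α * (Real.log T ^ m / T) := by linarith
      _ = K0 * (Real.log T ^ m / T) := by rw [hK0def]; ring
  -- mean value estimate
  set C : ℝ := K0 * (Real.log T ^ m / T) with hC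
  have hC0 : 0 ≤ C := by positivity
  have mvt : ∀ u ∈ Set.Icc (0:ℝ) L, |h (T + u) - h T| ≤ C * u := by
    intro u hu
    have hTs : T ∈ s := ⟨le_refl T, by linarith⟩
    have hTus : T + u ∈ s := ⟨by linarith [hu.1], by linarith [hu.2]⟩
    have := Convex.norm_image_sub_le_of_norm_hasDerivWithin_le hderiv hbound
      (convex_Icc _ _) hTs hTus
    rw [Real.norm_eq_abs, Real.norm_eq_abs] at this
    simpa [abs_of_nonneg hu.1] using this
  -- ratio estimate
  have key : ∀ u ∈ Set.Icc (0:ℝ) L,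
      |mu1 α β (T + u) / mu1 α β T - 1| ≤ K0 * Real.exp K0 * (L * Real.log T ^ m / T) := by
    intro u hu
    have hTu1 : 1 < T + u := by linarith [hu.1]
    have hrat : mu1 α β (T + u) / mu1 α β T = Real.exp (h (T + u) - h T) := by
      rw [mu1_eq_exp' α β (T + u) hα hTu1, mu1_eq_exp' α β T hα hT1, ← Real.exp_sub, hh]
    rw [hrat]
    have hΔK : |h (T + u) - h T| ≤ K0 * (L * Real.log T ^ m / T) := by
      calc |h (T + u) - h T| ≤ C * u := mvt u hu
        _ ≤ C * L := mul_le_mul_of_nonneg_left hu.2 hC0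
        _ = K0 * (L * Real.log T ^ m / T) := by rw [hC]; ring
    have hΔK' : |h (T + u) - h T| ≤ K0 := by
      refine hΔK.trans ?_
      calc K0 * (L * Real.log T ^ m / T) ≤ K0 * 1 := mul_le_mul_of_nonneg_left hLm hK0.le
        _ = K0 := mul_one _
    calc |Real.exp (h (T + u) - h T) - 1|
        ≤ |h (T + u) - h T| * Real.exp |h (T + u) - h T| := abs_exp_sub_one_le'' _
      _ ≤ (K0 * (L * Real.log T ^ m / T)) * Real.exp K0 :=
          mul_le_mul hΔK (Real.exp_le_exp.mpr hΔK') (Real.exp_pos _).le (by positivity)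
      _ = K0 * Real.exp K0 * (L * Real.log T ^ m / T) := by ring
  -- continuity and integrability
  have hlogc : ContinuousOn (fun u : ℝ => Real.log (T + u)) (Set.Icc 0 L) :=
    ContinuousOn.log (continuous_const.add continuous_id).continuousOn
      (fun u hu => by have := hu.1; intro hc; nlinarith)
  have hlogne : ∀ u ∈ Set.Icc (0:ℝ) L, Real.log (T + u) ≠ 0 := by
    intro u hu
    have : 1 < T + u := by linarith [hu.1]
    exact ne_of_gt (Real.log_pos this)
  have hcont2 : ContinuousOn (fun u : ℝ => mu1 α β (T + u) / mu1 α β T) (Set.Icc 0 L) := by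
    have hmuTne : mu1 α β T ≠ 0 := by
      rw [mu1_eq_exp' α β T hα hT1]; exact (Real.exp_pos _).ne'
    apply ContinuousOn.div_const
    have c1 : ContinuousOn (fun u : ℝ => α / (T + u)) (Set.Icc 0 L) :=
      continuousOn_const.div (continuous_const.add continuous_id).continuousOn
        (fun u hu => by have := hu.1; intro hc; nlinarith)
    have c2 : ContinuousOn (fun u : ℝ => Real.log (T + u) ^ (α - 1)) (Set.Icc 0 L) :=
      hlogc.rpow_const (fun u hu => Or.inl (hlogne u hu))
    have c3 : ContinuousOn (fun u : ℝ => Real.exp (β * Real.log (T + u) ^ α)) (Set.Icc 0 L) :=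
      Real.continuous_exp.comp_continuousOn
        (continuousOn_const.mul (hlogc.rpow_const (fun u hu => Or.inl (hlogne u hu))))
    exact (c1.mul c2).mul c3
  have pcont : ContinuousOn (fun u : ℝ => u ^ p) (Set.Icc 0 L) :=
    continuousOn_id.rpow_const (fun x _ => Or.inr (by linarith))
  have hintp : IntervalIntegrable (fun u : ℝ => u ^ p) volume 0 L := by
    apply ContinuousOn.intervalIntegrable
    rw [Set.uIcc_of_le hL.le]
    exact pcont
  have hint1 : IntervalIntegrable
      (fun u : ℝ => u ^ p * (mu1 α β (T + u) / mu1 α β T)) volume 0 L := by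
    apply ContinuousOn.intervalIntegrable
    rw [Set.uIcc_of_le hL.le]
    exact pcont.mul hcont2
  -- the polynomial integral
  have hℓne : ((ℓ:ℝ)) ≠ 0 := by linarith
  have hpoly : ∫ u in (0:ℝ)..L, u ^ p = L ^ (ℓ:ℝ) / ℓ := by
    rw [integral_rpow (Or.inl (by linarith : (-1:ℝ) < p))]
    have hpe : p + 1 = (ℓ:ℝ) := by rw [hp]; ring
    rw [hpe, Real.zero_rpow hℓne, sub_zero]
  have hdiff : Rmom1 α β T L ℓ - L ^ (ℓ:ℝ) / ℓ
      = ∫ u in (0:ℝ)..L, u ^ p * (mu1 α β (T + u) / mu1 α β T - 1) := by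
    rw [← hpoly]
    rw [show Rmom1 α β T L ℓ
        = ∫ u in (0:ℝ)..L, u ^ p * (mu1 α β (T + u) / mu1 α β T) from rfl]
    rw [← intervalIntegral.integral_sub hint1 hintp]
    congr 1
    funext u
    ring
  rw [hdiff]
  have hbd : ∀ u ∈ Set.uIoc (0:ℝ) L, ‖u ^ p * (mu1 α β (T + u) / mu1 α β T - 1)‖
      ≤ L ^ p * (K0 * Real.exp K0 * (L * Real.log T ^ m / T)) := by
    intro u hu
    rw [Set.uIoc_of_le hL.le] at hu
    rw [Real.norm_eq_abs, abs_mul, abs_of_nonneg (Real.rpow_nonneg hu.1.le p)]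
    exact mul_le_mul (Real.rpow_le_rpow hu.1.le hu.2 (by linarith))
      (key u ⟨hu.1.le, hu.2⟩) (abs_nonneg _) (Real.rpow_nonneg hL.le _)
  have hfin := intervalIntegral.norm_integral_le_of_norm_le_const hbd
  rw [Real.norm_eq_abs] at hfin
  refine hfin.trans (le_of_eq ?_)
  rw [sub_zero, abs_of_pos hL]
  have e1 : L ^ ((ℓ:ℝ) + 1) = L ^ (ℓ:ℝ) * L := Real.rpow_add_one hL.ne' _
  have e2 : L ^ ((ℓ:ℝ)) = L ^ p * L := by
    rw [show ((ℓ:ℝ)) = p + 1 by rw [hp]; ring, Real.rpow_add_one hL.ne']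
  rw [e1, e2]
  ring
end
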